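/- arXiv:0706.0111 — 11 statements merged into one kernel-verified Lean document; each statement's English description precedes it below -/
import Mathlib

section
/- Let R be a ring and let M be a left R-module that is both P-flat and a content module. Then M is singly projective. -/
universe u v

/-- For a subset `A` of `R` and a left `R`-module `M`, the additive subgroup `A·M` of `M`
generated by the products `a • m` with `a ∈ A`, `m ∈ M`. -/
def Set.smulAddSubgroup {R : Type u} [Ring R] (A : Set R) (M : Type v) [AddCommGroup M]
    [Module R M] : AddSubgroup M :=
  AddSubgroup.closure {y : M | ∃ a ∈ A, ∃ m : M, y = a • m}

/-- A left `R`-module `M` is P-flat if whenever `s • x = 0` one has `x ∈ r(s)·M`,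
where `r(s)` is the right annihilator of `s` in `R`. -/
def IsPFlat (R : Type u) [Ring R] (M : Type v) [AddCommGroup M] [Module R M] : Prop :=
  ∀ (s : R) (x : M), s • x = 0 → x ∈ Set.smulAddSubgroup {t : R | s * t = 0} M

/-- The content ideal `c(x)` of `x ∈ M`: the intersection of all right ideals `A` of `R`
(submodules of `R` as a right module over itself) such that `x ∈ A·M`. -/
def contentSet (R : Type u) [Ring R] {M : Type v} [AddCommGroup M] [Module R M] (x : M) :
    Set R :=
  ⋂ A ∈ {A : Submodule Rᵐᵒᵖ R | x ∈ Set.smulAddSubgroup (A : Set R) M}, (A : Set R)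

/-- `M` is a content module if `x ∈ c(x)·M` for every `x ∈ M`. -/
def IsContentModule (R : Type u) [Ring R] (M : Type v) [AddCommGroup M] [Module R M] : Prop :=
  ∀ x : M, x ∈ Set.smulAddSubgroup (contentSet R x) M

/-- `M` is singly projective if for every cyclic submodule `N` of `M` the inclusion
`N → M` factors through a free module. -/
def SinglyProjective (R : Type u) [Ring R] (M : Type v) [AddCommGroup M] [Module R M] : Prop :=
  ∀ x : M, ∃ (ι : Type v) (φ : (Submodule.span R ({x} : Set M)) →ₗ[R] (ι →₀ R))
    (π : (ι →₀ R) →ₗ[R] M), ∀ n : (Submodule.span R ({x} : Set M)), π (φ n) = (n : M)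

/-- Negating a sum of smul-products. -/
lemma neg_sum_map_smul {R : Type u} [Ring R] {M : Type v} [AddCommGroup M] [Module R M]
    (l : List (R × M)) :
    -((l.map fun p => p.1 • p.2).sum) =
      (((l.map fun p => (p.1, -p.2)).map fun p => p.1 • p.2)).sum := by
  induction l with
  | nil => simp
  | cons q t ih =>
    simp only [List.map_cons, List.sum_cons, neg_add_rev, smul_neg, ih]
    exact add_comm _ _

/-- Elements of `A·M` are finite sums `∑ aᵢ • mᵢ` with `aᵢ ∈ A`. -/
lemma exists_list_of_mem_smulAddSubgroup {R : Type u} [Ring R] {A : Set R} {M : Type v}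
    [AddCommGroup M] [Module R M] {x : M} (hx : x ∈ Set.smulAddSubgroup A M) :
    ∃ l : List (R × M), (∀ p ∈ l, p.1 ∈ A) ∧ x = (l.map fun p => p.1 • p.2).sum := by
  refine AddSubgroup.closure_induction ?_ ?_ ?_ ?_ hx
  · rintro y ⟨a, ha, m, rfl⟩
    exact ⟨[(a, m)], by simpa using ha, by simp⟩
  · exact ⟨[], by simp, by simp⟩
  · rintro y z _ _ ⟨l₁, h₁, rfl⟩ ⟨l₂, h₂, rfl⟩
    refine ⟨l₁ ++ l₂, ?_, by simp⟩
    intro p hp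
    rcases List.mem_append.1 hp with h | h
    · exact h₁ p h
    · exact h₂ p h
  · rintro y _ ⟨l, hl, rfl⟩
    refine ⟨l.map fun p => (p.1, -p.2), ?_, neg_sum_map_smul l⟩
    intro p hp
    obtain ⟨q, hq, rfl⟩ := List.mem_map.1 hp
    exact hl q hq

/-- The right annihilator of `s` as a right submodule of `R`. -/
def rightAnn {R : Type u} [Ring R] (s : R) : Submodule Rᵐᵒᵖ R where
  carrier := {t : R | s * t = 0}
  add_mem' := by
    intro a b (ha : s * a = 0) (hb : s * b = 0)
    show s * (a + b) = 0
    rw [mul_add, ha, hb, add_zero]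
  zero_mem' := by simp
  smul_mem' := by
    intro c t (ht : s * t = 0)
    show s * (t * c.unop) = 0
    rw [← mul_assoc, ht, zero_mul]

/-- every P-flat content left module is singly projective. -/
theorem pFlat_content_singlyProjective (R : Type u) [Ring R] (M : Type v) [AddCommGroup M]
    [Module R M] (h1 : IsPFlat R M) (h2 : IsContentModule R M) : SinglyProjective R M := by
  intro x
  obtain ⟨l, hl, hx⟩ := exists_list_of_mem_smulAddSubgroup (h2 x)
  set n := l.length with hn
  set a : Fin n → R := fun i => (l.get i).1 with ha
  set m : Fin n → M := fun i => (l.get i).2 with hm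
  have hx' : x = ∑ i : Fin n, a i • m i := by
    rw [hx, ← List.ofFn_get l, List.map_ofFn, List.sum_ofFn]
    rfl
  -- key: if s • x = 0 then s * a i = 0
  have key : ∀ s : R, s • x = 0 → ∀ i, s * a i = 0 := by
    intro s hs i
    have hmem : x ∈ Set.smulAddSubgroup ((rightAnn s : Submodule Rᵐᵒᵖ R) : Set R) M := h1 s x hs
    have hsub : contentSet R x ⊆ (rightAnn s : Submodule Rᵐᵒᵖ R) := by
      intro t ht
      exact Set.mem_iInter₂.1 ht (rightAnn s) hmem
    exact hsub (hl _ (l.get_mem i))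
  -- maps
  let ψ : R →ₗ[R] M := LinearMap.toSpanSingleton R M x
  let f : R →ₗ[R] (Fin n →₀ R) :=
    ∑ i : Fin n, (Finsupp.lsingle i).comp (LinearMap.toSpanSingleton R R (a i))
  have hf : ∀ s : R, f s = ∑ i : Fin n, Finsupp.single i (s * a i) := by
    intro s
    simp [f, LinearMap.sum_apply, LinearMap.toSpanSingleton_apply, smul_eq_mul]
  have hker : LinearMap.ker ψ ≤ LinearMap.ker f := by
    intro s hs
    have hs' : s • x = 0 := hs
    rw [LinearMap.mem_ker, hf]
    refine Finset.sum_eq_zero fun i _ => ?_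
    rw [key s hs' i, Finsupp.single_zero]
  let π : (Fin n →₀ R) →ₗ[R] M := Finsupp.linearCombination R m
  have hπf : ∀ s : R, π (f s) = s • x := by
    intro s
    rw [hf, map_sum]
    simp only [π, Finsupp.linearCombination_single]
    rw [hx', Finset.smul_sum]
    exact Finset.sum_congr rfl fun i _ => by rw [mul_smul]
  -- build φ on span {x}
  let e1 : (Submodule.span R ({x} : Set M)) ≃ₗ[R] LinearMap.range ψ :=
    LinearEquiv.ofEq _ _ (LinearMap.span_singleton_eq_range R M x)
  let e2 : LinearMap.range ψ ≃ₗ[R] (R ⧸ LinearMap.ker ψ) := ψ.quotKerEquivRange.symm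
  let g : (R ⧸ LinearMap.ker ψ) →ₗ[R] (Fin n →₀ R) := Submodule.liftQ _ f hker
  let φ : (Submodule.span R ({x} : Set M)) →ₗ[R] (Fin n →₀ R) :=
    g ∘ₗ (e2 : LinearMap.range ψ →ₗ[R] _) ∘ₗ (e1 : _ →ₗ[R] LinearMap.range ψ)
  -- need ι : Type v
  let eq : (Fin n →₀ R) ≃ₗ[R] (ULift.{v} (Fin n) →₀ R) :=
    Finsupp.domLCongr (Equiv.ulift.symm)
  refine ⟨ULift.{v} (Fin n), (eq : _ →ₗ[R] _) ∘ₗ φ, π ∘ₗ (eq.symm : _ →ₗ[R] _), ?_⟩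
  intro p
  have hp : (p : M) ∈ LinearMap.range ψ := by
    rw [← LinearMap.span_singleton_eq_range]; exact p.2
  obtain ⟨s, hs⟩ := id hp
  have he1 : e1 p = ⟨(p : M), hp⟩ := rfl
  have he2 : e2 ⟨(p : M), hp⟩ = Submodule.Quotient.mk s := by
    rw [LinearEquiv.symm_apply_eq]
    ext
    simp [hs]
  simp only [LinearMap.comp_apply, LinearEquiv.coe_coe, LinearEquiv.symm_apply_apply]
  show π (φ p) = (p : M)
  have : φ p = f s := by
    simp only [φ, LinearMap.comp_apply, LinearEquiv.coe_coe, he1, he2]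
    exact Submodule.liftQ_apply _ f s
  rw [this, hπf, ← hs]
  rfl
end

section
/- Let R be a ring that is injective as a left module over itself. Then every singly projective left R-module is both finitely injective and locally projective. -/
universe u v w

/-- `M` is locally projective if for every finitely generated submodule `N` of `M` there are a
free module `F` and homomorphisms `φ : M → F`, `π : F → M` with `π (φ x) = x` for all `x ∈ N`. -/
def LocallyProjective (R : Type u) [Ring R] (M : Type v) [AddCommGroup M] [Module R M] : Prop :=
  ∀ N : Submodule R M, N.FG → ∃ (ι : Type v) (φ : M →ₗ[R] (ι →₀ R))
    (π : (ι →₀ R) →ₗ[R] M), ∀ x ∈ N, π (φ x) = x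

/-- `M` is finitely injective if for every finitely generated submodule `A` of an arbitrary
module `B`, every homomorphism `A → M` extends to `B`. -/
def FinitelyInjective (R : Type u) [Ring R] (M : Type v) [AddCommGroup M] [Module R M] : Prop :=
  ∀ (B : Type w) [AddCommGroup B] [Module R B] (A : Submodule R B), A.FG →
    ∀ f : A →ₗ[R] M, ∃ g : B →ₗ[R] M, ∀ a : A, g (a : B) = f a

section Aux

variable {R : Type u} [Ring R] {M : Type v} [AddCommGroup M] [Module R M]

/-- Key lemma: if `R` is Baer (self-injective) and `M` is singly projective, then for any
module `B`, any `b : B` and `x : M` whose annihilator contains that of `b`, there is a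
factorization `B → (ι →₀ R) → M` sending `b` to `x`. -/
lemma key_aux (hB : Module.Baer R R) (hM : SinglyProjective R M)
    {B : Type w} [AddCommGroup B] [Module R B] (b : B) (x : M)
    (hbx : ∀ r : R, r • b = 0 → r • x = 0) :
    ∃ (ι : Type v) (θ : B →ₗ[R] (ι →₀ R)) (π : (ι →₀ R) →ₗ[R] M), π (θ b) = x := by
  obtain ⟨ι, φ, π, hπφ⟩ := hM x
  set xs : Submodule.span R ({x} : Set M) := ⟨x, Submodule.mem_span_singleton_self x⟩ with hxs
  set c : ι →₀ R := φ xs with hc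
  set τ : R →ₗ[R] B := LinearMap.toSpanSingleton R B b with hτ
  set I : Submodule R R := LinearMap.ker τ with hI
  set emb : (R ⧸ I) →ₗ[R] B := Submodule.liftQ I τ le_rfl with hembdef
  have hemb : Function.Injective emb := by
    rw [← LinearMap.ker_eq_bot]
    exact Submodule.ker_liftQ_eq_bot I τ le_rfl le_rfl
  -- the map r ↦ r • xs into the span, then to the free module
  have hmem : ∀ r : R, r • x ∈ Submodule.span R ({x} : Set M) := fun r =>
    Submodule.smul_mem _ r (Submodule.mem_span_singleton_self x)
  set σ : R →ₗ[R] (Submodule.span R ({x} : Set M)) :=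
    LinearMap.codRestrict _ (LinearMap.toSpanSingleton R M x) hmem with hσ
  have hσr : ∀ r : R, σ r = r • xs := by
    intro r; apply Subtype.ext; rfl
  set μ : R →ₗ[R] (ι →₀ R) := φ.comp σ with hμ
  have hμr : ∀ r : R, μ r = r • c := by
    intro r; simp [hμ, hσr, hc]
  have hIμ : I ≤ LinearMap.ker μ := by
    intro r hr
    have hrb : r • b = 0 := hr
    have hrx : r • x = 0 := hbx r hrb
    have : σ r = 0 := Subtype.ext hrx
    simp [hμ, this]
  set μq : (R ⧸ I) →ₗ[R] (ι →₀ R) := Submodule.liftQ I μ hIμ with hμq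
  choose β hβ using fun i : ι =>
    hB.extension_property emb hemb ((Finsupp.lapply i : (ι →₀ R) →ₗ[R] R).comp μq)
  set G : B →ₗ[R] (ι →₀ R) :=
    ∑ i ∈ c.support, (Finsupp.lsingle i).comp (β i) with hG
  refine ⟨ι, G, π, ?_⟩
  have hb1 : emb (Submodule.Quotient.mk (1 : R)) = b := by
    simp [hembdef, hτ]
  have hβb : ∀ i : ι, β i b = c i := by
    intro i
    have := LinearMap.congr_fun (hβ i) (Submodule.Quotient.mk (1 : R))
    simp only [LinearMap.coe_comp, Function.comp_apply] at this
    rw [hb1] at this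
    have hμ1 : μq (Submodule.Quotient.mk (1 : R)) = c := by
      simp [hμq, Submodule.liftQ_apply, hμr]
    rw [hμ1] at this
    simpa using this
  have hGb : G b = c := by
    rw [hG]
    simp only [LinearMap.coe_sum, Finset.sum_apply, LinearMap.coe_comp, Function.comp_apply,
      Finsupp.lsingle_apply]
    calc (∑ i ∈ c.support, Finsupp.single i (β i b))
        = ∑ i ∈ c.support, Finsupp.single i (c i) := by
          exact Finset.sum_congr rfl fun i _ => by rw [hβb i]
      _ = c := Finsupp.sum_single c
  rw [hGb, hc, hπφ xs]

lemma finInj_aux (hB : Module.Baer R R) (hM : SinglyProjective R M) :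
    ∀ (n : ℕ) (B : Type w) [AddCommGroup B] [Module R B] (s : Finset B),
      s.card = n → ∀ f : (Submodule.span R (s : Set B)) →ₗ[R] M,
      ∃ g : B →ₗ[R] M, ∀ (z : B) (hz : z ∈ Submodule.span R (s : Set B)), g z = f ⟨z, hz⟩ := by
  intro n
  induction n with
  | zero =>
    intro B _ _ s hs f
    have hse : s = ∅ := Finset.card_eq_zero.mp hs
    subst hse
    refine ⟨0, ?_⟩
    intro z hz
    simp only [Finset.coe_empty, Submodule.span_empty, Submodule.mem_bot] at hz
    subst hz
    have : (⟨(0 : B), by simp⟩ : Submodule.span R ((∅ : Finset B) : Set B)) = 0 := rfl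
    rw [this, map_zero]
    simp
  | succ n ih =>
    intro B _ _ s hs
    classical
    obtain ⟨b, t, hbt, hins, htc⟩ := Finset.card_eq_succ.mp hs
    subst hins
    have hcoe : ((insert b t : Finset B) : Set B) = insert b (t : Set B) := by
      simp
    set A : Submodule R B := Submodule.span R ((insert b t : Finset B) : Set B) with hA
    set A' : Submodule R B := Submodule.span R (t : Set B) with hA'
    intro f
    have hA'A : A' ≤ A := Submodule.span_mono (by simp)
    have hbA : b ∈ A := Submodule.subset_span (by simp)
    obtain ⟨g, hg⟩ := ih B t htc (f.comp (Submodule.inclusion hA'A))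
    have hg' : ∀ (z : B) (hz : z ∈ A'), g z = f ⟨z, hA'A hz⟩ := by
      intro z hz
      rw [hg z hz]; rfl
    set h : A →ₗ[R] M := f - g.comp A.subtype with hh
    have hhA' : ∀ (a : A), (a : B) ∈ A' → h a = 0 := by
      intro a ha
      have : g (a : B) = f ⟨(a : B), hA'A ha⟩ := hg' _ ha
      have ha' : (⟨(a : B), hA'A ha⟩ : A) = a := Subtype.ext rfl
      rw [ha'] at this
      simp [hh, this]
    set x₀ : M := h ⟨b, hbA⟩ with hx₀
    have hcond : ∀ r : R, r • (A'.mkQ b) = 0 → r • x₀ = 0 := by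
      intro r hr
      have hrb : r • b ∈ A' := by
        rwa [← map_smul, Submodule.mkQ_apply, Submodule.Quotient.mk_eq_zero] at hr
      have : r • x₀ = h (r • ⟨b, hbA⟩) := by rw [map_smul]
      rw [this]
      exact hhA' _ hrb
    obtain ⟨ι, θ, π, hπθ⟩ := key_aux hB hM (A'.mkQ b) x₀ hcond
    set k : (B ⧸ A') →ₗ[R] M := π.comp θ with hk
    have hkb : k (A'.mkQ b) = x₀ := hπθ
    set g' : B →ₗ[R] M := g + k.comp A'.mkQ with hg'def
    set d : A →ₗ[R] M := f - g'.comp A.subtype with hd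
    have hdA' : ∀ (a : A), (a : B) ∈ A' → a ∈ LinearMap.ker d := by
      intro a ha
      have h1 : h a = 0 := hhA' a ha
      have h2 : A'.mkQ (a : B) = 0 := by
        rwa [Submodule.mkQ_apply, Submodule.Quotient.mk_eq_zero]
      have : d a = h a - k (A'.mkQ (a : B)) := by
        simp [hd, hh, hg'def]; abel
      rw [LinearMap.mem_ker, this, h1, h2, map_zero, sub_zero]
    have hdb : (⟨b, hbA⟩ : A) ∈ LinearMap.ker d := by
      have : d ⟨b, hbA⟩ = h ⟨b, hbA⟩ - k (A'.mkQ b) := by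
        simp [hd, hh, hg'def]; abel
      rw [LinearMap.mem_ker, this, hkb, hx₀, sub_self]
    have hKtop : LinearMap.ker d = ⊤ := by
      have hsup : Submodule.comap A.subtype A' ⊔ Submodule.span R {(⟨b, hbA⟩ : A)} = ⊤ := by
        apply Submodule.map_injective_of_injective (Submodule.injective_subtype A)
        rw [Submodule.map_sup, Submodule.map_comap_subtype, Submodule.map_span,
          Submodule.map_top, Submodule.range_subtype]
        have himg : (A.subtype '' {(⟨b, hbA⟩ : A)}) = {b} := by
          simp
        rw [himg]
        rw [inf_of_le_right hA'A, hA, hcoe, Submodule.span_insert]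
        rw [sup_comm]
      refine top_unique ?_
      rw [← hsup]
      refine sup_le ?_ ?_
      · intro a ha; exact hdA' a ha
      · rw [Submodule.span_le, Set.singleton_subset_iff]
        exact hdb
    refine ⟨g', ?_⟩
    intro z hz
    have : (⟨z, hz⟩ : A) ∈ LinearMap.ker d := hKtop ▸ Submodule.mem_top
    rw [LinearMap.mem_ker, hd] at this
    have := sub_eq_zero.mp this
    simp only [LinearMap.coe_comp, Function.comp_apply, Submodule.coe_subtype] at this
    exact this.symm

lemma locProj_aux (hB : Module.Baer R R) (hM : SinglyProjective R M) :
    ∀ (n : ℕ) (s : Finset M), s.card = n →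
    ∃ (ι : Type v) (φ : M →ₗ[R] (ι →₀ R)) (π : (ι →₀ R) →ₗ[R] M),
      ∀ x ∈ Submodule.span R (s : Set M), π (φ x) = x := by
  intro n
  induction n with
  | zero =>
    intro s hs
    have hse : s = ∅ := Finset.card_eq_zero.mp hs
    subst hse
    refine ⟨PEmpty.{v+1}, 0, 0, ?_⟩
    intro x hx
    simp only [Finset.coe_empty, Submodule.span_empty, Submodule.mem_bot] at hx
    subst hx
    simp
  | succ n ih =>
    intro s hs
    classical
    obtain ⟨y, t, hyt, hins, htc⟩ := Finset.card_eq_succ.mp hs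
    subst hins
    obtain ⟨ι₁, φ₁, π₁, h₁⟩ := ih t htc
    set ψ : M →ₗ[R] M := LinearMap.id - π₁.comp φ₁ with hψ
    obtain ⟨ι₂, θ, π₂, hθ⟩ := key_aux hB hM (ψ y) (ψ y) (fun r hr => hr)
    set e : ((ι₁ ⊕ ι₂) →₀ R) ≃ₗ[R] (ι₁ →₀ R) × (ι₂ →₀ R) :=
      Finsupp.sumFinsuppLEquivProdFinsupp R with he
    refine ⟨ι₁ ⊕ ι₂, e.symm.toLinearMap.comp (φ₁.prod (θ.comp ψ)),
      ((π₁.comp (LinearMap.fst R _ _)) + (π₂.comp (LinearMap.snd R _ _))).comp e.toLinearMap, ?_⟩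
    intro x hx
    have hcoe : ((insert y t : Finset M) : Set M) = insert y (t : Set M) := by simp
    rw [hcoe, Submodule.span_insert] at hx
    obtain ⟨z₁, hz₁, z₂, hz₂, rfl⟩ := Submodule.mem_sup.mp hx
    obtain ⟨r, rfl⟩ := Submodule.mem_span_singleton.mp hz₁
    simp only [LinearMap.coe_comp, Function.comp_apply, LinearEquiv.coe_coe,
      LinearEquiv.apply_symm_apply, LinearMap.prod_apply, Pi.prod, Function.prod_apply, LinearMap.add_apply,
      LinearMap.fst_apply, LinearMap.snd_apply]
    have hψz₂ : ψ z₂ = 0 := by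
      simp [hψ, h₁ z₂ hz₂]
    have hψx : ψ (r • y + z₂) = r • ψ y := by
      rw [map_add, map_smul, hψz₂, add_zero]
    have h2 : π₂ (θ (ψ (r • y + z₂))) = ψ (r • y + z₂) := by
      rw [hψx, map_smul, map_smul, hθ]
    rw [h2]
    have : π₁ (φ₁ (r • y + z₂)) = (r • y + z₂) - ψ (r • y + z₂) := by
      simp [hψ]
    rw [this]
    abel

end Aux

/-- if `R` is injective as a left module over itself, then every singly
projective left `R`-module is finitely injective and locally projective. -/
theorem singlyProjective_finitelyInjective_locallyProjective_of_selfInjective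
    (R : Type u) [Ring R] (hR : Module.Injective R R) (M : Type v) [AddCommGroup M]
    [Module R M] (hM : SinglyProjective R M) :
    FinitelyInjective.{u, v, w} R M ∧ LocallyProjective R M := by
  have hB : Module.Baer R R := Module.Baer.of_injective hR
  constructor
  · intro B _ _ A hA f
    obtain ⟨s, hs⟩ := hA
    subst hs
    obtain ⟨g, hg⟩ := finInj_aux hB hM s.card B s rfl f
    exact ⟨g, fun a => by simpa using hg a a.2⟩
  · intro N hN
    obtain ⟨s, hs⟩ := hN
    subst hs
    exact locProj_aux hB hM s.card s rfl
end

section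
/- Let R be a local ring with maximal ideal P and let N be a flat left R-module. Assume N is generated by a family (x_i)_{i∈I} of elements such that the images (x_i + P·N)_{i∈I} form a basis of the (R/P)-vector space N/P·N. Then N is a free R-module. -/
universe u v w

/-- A left `R`-module `M` over a (possibly noncommutative) ring is flat, expressed by the
standard equational criterion: every relation `∑ aᵢ • xᵢ = 0` trivializes. -/
def IsFlatModule (R : Type u) [Ring R] (M : Type v) [AddCommGroup M] [Module R M] : Prop :=
  ∀ (n : ℕ) (a : Fin n → R) (x : Fin n → M), (∑ i, a i • x i) = 0 →
    ∃ (m : ℕ) (b : Fin n → Fin m → R) (y : Fin m → M),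
      (∀ j, (∑ i, a i * b i j) = 0) ∧ ∀ i, x i = ∑ j, b i j • y j

/-- For a local ring `R` whose maximal ideal `P` is the set of non-units, the submodule
`P·N` of a left `R`-module `N`. -/
def maxIdealSMul (R : Type u) [Ring R] (N : Type v) [AddCommGroup N] [Module R N] :
    Submodule R N :=
  Submodule.span R {y : N | ∃ (p : R) (z : N), ¬IsUnit p ∧ y = p • z}

lemma key (R : Type u) [Ring R] [IsLocalRing R]
    (N : Type v) [AddCommGroup N] [Module R N] (hflat : IsFlatModule R N) :
    ∀ (n : ℕ) (v : Fin n → N),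
      (∀ a : Fin n → R, (∑ i, a i • v i) ∈ maxIdealSMul R N → ∀ i, ¬IsUnit (a i)) →
      ∀ a : Fin n → R, (∑ i, a i • v i) = 0 → ∀ i, a i = 0 := by
  intro n
  induction n with
  | zero => intro v _ a _ i; exact absurd i.2 (by omega)
  | succ n ih =>
    intro v hv a hsum
    obtain ⟨m, b, y, hb, hx⟩ := hflat (n+1) a v hsum
    -- some b (last) j is a unit
    have hex : ∃ j, IsUnit (b (Fin.last n) j) := by
      by_contra h
      push_neg at h
      have hmem : v (Fin.last n) ∈ maxIdealSMul R N := by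
        rw [hx (Fin.last n)]
        exact Submodule.sum_mem _ fun j _ =>
          Submodule.subset_span ⟨b (Fin.last n) j, y j, h j, rfl⟩
      have := hv (Pi.single (Fin.last n) 1) (by
        simpa [Pi.single_apply, Finset.sum_ite_eq'] using hmem) (Fin.last n)
      simp at this
    obtain ⟨j₀, hu⟩ := hex
    set u := hu.unit
    set c : Fin n → R := fun i => -(b i.castSucc j₀ * (↑u⁻¹ : R)) with hc
    have halast : a (Fin.last n) = ∑ i : Fin n, a i.castSucc * c i := by
      have h0 := hb j₀
      rw [Fin.sum_univ_castSucc] at h0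
      have h1 : a (Fin.last n) * b (Fin.last n) j₀
          = -∑ i : Fin n, a i.castSucc * b i.castSucc j₀ := eq_neg_of_add_eq_zero_right h0
      have h2 : a (Fin.last n) = a (Fin.last n) * b (Fin.last n) j₀ * (↑u⁻¹ : R) := by
        rw [mul_assoc]
        simp [u, IsUnit.mul_val_inv]
      rw [h2, h1]
      simp [hc, Finset.sum_mul, mul_assoc, Finset.mul_sum]
    set w : Fin n → N := fun i => v i.castSucc + c i • v (Fin.last n) with hw
    have hwsum : (∑ i : Fin n, a i.castSucc • w i) = 0 := by
      simp only [hw, smul_add, Finset.sum_add_distrib, smul_smul]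
      rw [← Finset.sum_smul, ← halast]
      rw [← Fin.sum_univ_castSucc (f := fun i => a i • v i)] at *
      exact hsum
    have hwind : ∀ d : Fin n → R, (∑ i, d i • w i) ∈ maxIdealSMul R N →
        ∀ i, ¬IsUnit (d i) := by
      intro d hd i
      set d' : Fin (n+1) → R := Fin.snoc d (∑ i : Fin n, d i * c i) with hd'
      have hsum' : (∑ i, d' i • v i) = ∑ i : Fin n, d i • w i := by
        rw [Fin.sum_univ_castSucc]
        simp only [hd', Fin.snoc_castSucc, Fin.snoc_last, hw, smul_add,
          Finset.sum_add_distrib, smul_smul, Finset.sum_smul]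
      have := hv d' (by rw [hsum']; exact hd) i.castSucc
      simpa [hd'] using this
    have hz := ih w hwind (fun i => a i.castSucc) hwsum
    intro i
    refine Fin.lastCases ?_ (fun i => hz i) i
    rw [halast]
    simp [hz]

/-- let `R` be a local ring with maximal ideal `P` (the set of non-units) and `N` a
flat left `R`-module generated by a family `(x i)` whose images form a basis of `N/P·N` over
`R/P` (i.e. the family spans `N` and is linearly independent modulo `P·N`).  Then `N` is free. -/
theorem free_of_flat_basis_mod_maximalIdeal (R : Type u) [Ring R] [IsLocalRing R]
    (N : Type v) [AddCommGroup N] [Module R N] (hflat : IsFlatModule R N)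
    (ι : Type w) (x : ι → N) (hgen : Submodule.span R (Set.range x) = ⊤)
    (hind : ∀ a : ι →₀ R, (a.sum fun i r => r • x i) ∈ maxIdealSMul R N →
      ∀ i, ¬IsUnit (a i)) :
    Module.Free R N := by
  have hli : LinearIndependent R x := by
    rw [linearIndependent_iff]
    intro l hl
    set s := l.support with hs
    set e : Fin s.card ≃ {a // a ∈ s} := s.equivFin.symm with he
    set v : Fin s.card → N := fun i => x (e i) with hv
    have hveq : ∀ d : Fin s.card → R, ∃ a' : ι →₀ R,
        (a'.sum fun i r => r • x i) = ∑ i, d i • v i ∧ ∀ i, a' (e i) = d i := by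
      classical
      intro d
      set f : ι → R := fun j => if h : j ∈ s then d (s.equivFin ⟨j, h⟩) else 0 with hf
      have key1 : ∀ i : Fin s.card, f (e i) = d i := by
        intro i
        have hmem : ((e i : {a // a ∈ s}) : ι) ∈ s := (e i).2
        show (if h : ((e i : {a // a ∈ s}) : ι) ∈ s then d (s.equivFin ⟨(e i : {a // a ∈ s}), h⟩) else 0) = d i
        rw [dif_pos hmem]
        have h2 : (⟨((e i : {a // a ∈ s}) : ι), hmem⟩ : {a // a ∈ s}) = e i := rfl
        rw [h2, he, Equiv.apply_symm_apply]
      have hsupp : ∀ j : ι, f j ≠ 0 → j ∈ s := by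
        intro j hj
        by_contra h
        rw [hf] at hj
        simp [h] at hj
      refine ⟨Finsupp.onFinset s f hsupp, ?_, ?_⟩
      · rw [Finsupp.onFinset_sum hsupp (fun a => zero_smul R (x a))]
        rw [← Finset.sum_coe_sort s (fun j => f j • x j),
          ← Equiv.sum_comp e (fun j : {a // a ∈ s} => f (j : ι) • x (j : ι))]
        exact Finset.sum_congr rfl fun i _ => by rw [key1 i]
      · intro i
        simpa using key1 i
    have hcond : ∀ d : Fin s.card → R, (∑ i, d i • v i) ∈ maxIdealSMul R N →
        ∀ i, ¬IsUnit (d i) := by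
      intro d hd i
      obtain ⟨a', ha', hval⟩ := hveq d
      have := hind a' (ha' ▸ hd) (e i)
      rwa [hval i] at this
    have hlv : (∑ i, (fun i => l (e i)) i • v i) = 0 := by
      have h3 : Finsupp.linearCombination R x l = ∑ j ∈ s, l j • x j := by
        rw [Finsupp.linearCombination_apply, Finsupp.sum]
      rw [← hl, h3, ← Finset.sum_coe_sort s (fun j => l j • x j),
        ← Equiv.sum_comp e (fun j : {a // a ∈ s} => l (j : ι) • x (j : ι))]
    have hz := key R N hflat s.card v hcond _ hlv
    ext j
    by_cases hj : j ∈ s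
    · have h4 := hz (s.equivFin ⟨j, hj⟩)
      simpa [he] using h4
    · exact Finsupp.notMem_support_iff.mp hj
  exact Module.Free.of_basis (Module.Basis.mk hli (by rw [hgen]))
end

section
/- Let R be a commutative ring whose total quotient ring Q is von Neumann regular. Then the following conditions are equivalent: (1) Q is a semisimple ring; (2) every flat R-module is finitely projective; (3) every flat R-module is singly projective. -/
universe u

/-- `M` is finitely projective if for every finitely generated submodule `N` of `M` the
inclusion `N → M` factors through a free module. -/
def FinitelyProjective (R : Type u) [Ring R] (M : Type v) [AddCommGroup M] [Module R M] : Prop :=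
  ∀ N : Submodule R M, N.FG → ∃ (ι : Type v) (φ : N →ₗ[R] (ι →₀ R))
    (π : (ι →₀ R) →ₗ[R] M), ∀ n : N, π (φ n) = (n : M)

section VNR
variable {Q : Type*} [CommRing Q]

/-- In a commutative von Neumann regular ring, every f.g. ideal is generated by an idempotent. -/
theorem fg_ideal_idem (hQ : ∀ a : Q, ∃ b, a * b * a = a) (J : Ideal Q) (hJ : J.FG) :
    ∃ e : Q, e * e = e ∧ J = Ideal.span {e} := by
  refine Submodule.fg_induction (motive := fun J _ => ∃ e : Q, e * e = e ∧ J = Ideal.span {e}) ?_ ?_ J hJ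
  · intro a
    obtain ⟨b, hb⟩ := hQ a
    refine ⟨a * b, by linear_combination b * hb, le_antisymm ?_ ?_⟩
    · rw [Submodule.span_le, Set.singleton_subset_iff, SetLike.mem_coe, Ideal.mem_span_singleton]
      exact ⟨a, by linear_combination -hb⟩
    · rw [Ideal.span_le, Set.singleton_subset_iff, SetLike.mem_coe]
      show a * b ∈ Ideal.span {a}
      rw [Ideal.mem_span_singleton]
      exact ⟨b, rfl⟩
  · rintro J₁ J₂ _ _ ⟨e₁, he₁, rfl⟩ ⟨e₂, he₂, rfl⟩
    refine ⟨e₁ + e₂ - e₁ * e₂,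
      by linear_combination (1 - 2*e₂ + e₂*e₂) * he₁ + (1 - e₁) * he₂, le_antisymm ?_ ?_⟩
    · rw [sup_le_iff]
      refine ⟨?_, ?_⟩ <;>
        rw [Ideal.span_le, Set.singleton_subset_iff, SetLike.mem_coe, Ideal.mem_span_singleton]
      · exact ⟨e₁, by linear_combination (e₂ - 1) * he₁⟩
      · exact ⟨e₂, by linear_combination (e₁ - 1) * he₂⟩
    · rw [Ideal.span_le, Set.singleton_subset_iff, SetLike.mem_coe]
      have h2 : e₁ + e₂ - e₁ * e₂ = e₁ + (e₂ - e₁ * e₂) := by ring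
      rw [h2]
      refine Submodule.add_mem_sup (Ideal.mem_span_singleton_self e₁) ?_
      rw [Ideal.mem_span_singleton]
      exact ⟨1 - e₁, by ring⟩

/-- Every module over a commutative von Neumann regular ring is flat. -/
theorem flat_of_vnr (hQ : ∀ a : Q, ∃ b, a * b * a = a)
    (X : Type*) [AddCommGroup X] [Module Q X] : Module.Flat Q X := by
  rw [Module.Flat.iff_rTensor_injective]
  intro J hJfg
  obtain ⟨e, he, rfl⟩ := fg_ideal_idem hQ J hJfg
  set J : Ideal Q := Ideal.span {e} with hJ
  have hmem : ∀ z : Q, z • e ∈ J := fun z => Ideal.mem_span_singleton.2 ⟨z, (smul_eq_mul _ _).symm.trans (mul_comm z e)⟩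
  let r : Q →ₗ[Q] J := LinearMap.codRestrict (J : Submodule Q Q)
    (LinearMap.toSpanSingleton Q Q e) hmem
  have hr : r ∘ₗ J.subtype = LinearMap.id := by
    ext ⟨v, hv⟩
    obtain ⟨c, rfl⟩ := Ideal.mem_span_singleton.1 hv
    have : (r (e * c) : Q) = e * c := by
      change (e * c) • e = e * c
      simp only [r, LinearMap.codRestrict_apply, LinearMap.toSpanSingleton_apply, smul_eq_mul]
      linear_combination c * he
    simpa [Subtype.ext_iff] using this
  have hsplit : (r.rTensor X) ∘ (J.subtype.rTensor X) = id := by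
    rw [← LinearMap.coe_comp, ← LinearMap.rTensor_comp, hr, LinearMap.rTensor_id]
    rfl
  exact Function.LeftInverse.injective (g := r.rTensor X) (congrFun hsplit)

end VNR

theorem singly_to_semisimple (R : Type u) [CommRing R]
    (hQ : ∀ a : FractionRing R, ∃ b, a * b * a = a)
    (h3 : ∀ (M : Type u) [AddCommGroup M] [Module R M], Module.Flat R M → SinglyProjective R M) :
    IsSemisimpleRing (FractionRing R) := by
  set Q := FractionRing R with hQdef
  have key : ∀ I : Ideal Q, ∃ u : Q, I = Ideal.span {u} := by
    intro I
    haveI h1 : Module.Flat Q (Q ⧸ I) := flat_of_vnr hQ _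
    haveI h2 : Module.Flat R Q := IsLocalization.flat Q (nonZeroDivisors R)
    haveI h3' : Module.Flat R (Q ⧸ I) := Module.Flat.trans R Q (Q ⧸ I)
    set x₀ : Q ⧸ I := Ideal.Quotient.mk I 1 with hx₀
    obtain ⟨ι, φ, π, hπφ⟩ := h3 (Q ⧸ I) h3' x₀
    set n₀ : Submodule.span R ({x₀} : Set (Q ⧸ I)) :=
      ⟨x₀, Submodule.mem_span_singleton_self x₀⟩ with hn₀
    set c : ι →₀ R := φ n₀ with hc
    have hsur : ∀ i : ι, ∃ z : Q, Ideal.Quotient.mk I z = π (Finsupp.single i 1) :=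
      fun i => Ideal.Quotient.mk_surjective _
    choose q hq using hsur
    set u : Q := ∑ i ∈ c.support, algebraMap R Q (c i) * q i with hu
    -- mk u = x₀
    have claimA : Ideal.Quotient.mk I u = x₀ := by
      rw [hu, map_sum]
      have : ∀ i ∈ c.support,
          Ideal.Quotient.mk I (algebraMap R Q (c i) * q i) = π (Finsupp.single i (c i)) := by
        intro i _
        have h0 : (Ideal.Quotient.mk I) (c i • q i) = (c i) • (Ideal.Quotient.mk I (q i)) :=
          Submodule.Quotient.mk_smul I (c i) (q i)
        rw [← Algebra.smul_def, h0, hq i, ← map_smul, Finsupp.smul_single, smul_eq_mul, mul_one]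
      rw [Finset.sum_congr rfl this, ← map_sum]
      have hc' : (∑ i ∈ c.support, Finsupp.single i (c i)) = c := Finsupp.sum_single c
      rw [hc', hc, hπφ n₀]
    have claimB : ∀ r : R, algebraMap R Q r ∈ I → ∀ i, r * c i = 0 := by
      intro r hr i
      have hn : r • n₀ = 0 := by
        apply Subtype.ext
        show r • x₀ = 0
        have h0 : r • x₀ = Ideal.Quotient.mk I (r • (1:Q)) :=
          (Submodule.Quotient.mk_smul I r (1:Q)).symm
        rw [h0, Algebra.smul_def, mul_one, Ideal.Quotient.eq_zero_iff_mem]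
        exact hr
      have hsc : r • c = 0 := by rw [hc, ← map_smul, hn, map_zero]
      have h1 : (r • c) i = 0 := by rw [hsc]; rfl
      simpa [Finsupp.smul_apply, smul_eq_mul] using h1
    have claimC : ∀ t ∈ I, t * u = 0 := by
      intro t ht
      obtain ⟨⟨r, s⟩, hmk : IsLocalization.mk' Q r s = t⟩ := IsLocalization.mk'_surjective (nonZeroDivisors R) t
      have hspec := IsLocalization.mk'_spec Q r s
      rw [hmk] at hspec
      have hrI : algebraMap R Q r ∈ I := by
        rw [← hspec]
        exact I.mul_mem_right _ ht
      have hru : algebraMap R Q r * u = 0 := by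
        rw [hu, Finset.mul_sum]
        refine Finset.sum_eq_zero fun i _ => ?_
        rw [← mul_assoc, ← map_mul, claimB r hrI i, map_zero, zero_mul]
      have hs : IsUnit (algebraMap R Q (s : R)) := IsLocalization.map_units Q s
      have h5 : algebraMap R Q (s : R) * (t * u) = 0 := by
        calc algebraMap R Q (s:R) * (t * u) = (t * algebraMap R Q (s:R)) * u := by ring
          _ = algebraMap R Q r * u := by rw [hspec]
          _ = 0 := hru
      exact (IsUnit.mul_right_eq_zero hs).mp h5
    refine ⟨1 - u, le_antisymm ?_ ?_⟩
    · intro t ht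
      rw [Ideal.mem_span_singleton]
      exact ⟨t, by linear_combination claimC t ht⟩
    · rw [Ideal.span_le, Set.singleton_subset_iff, SetLike.mem_coe]
      rw [← Ideal.Quotient.eq_zero_iff_mem, map_sub, claimA, hx₀, map_one, sub_self]
  refine (isSemisimpleModule_iff _ _).2 ⟨?_⟩
  intro I
  obtain ⟨w, hw⟩ := key I
  obtain ⟨e, he, hIe⟩ := fg_ideal_idem hQ I (by rw [hw]; exact ⟨{w}, by simp; rfl⟩)
  refine ⟨Ideal.span {1 - e}, ?_, ?_⟩
  · rw [disjoint_iff, hIe, eq_bot_iff]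
    rintro v hv
    rw [Submodule.mem_inf] at hv
    obtain ⟨a, rfl⟩ := Ideal.mem_span_singleton.1 hv.1
    obtain ⟨b, hb⟩ := Ideal.mem_span_singleton.1 hv.2
    rw [Submodule.mem_bot]
    linear_combination e * hb + (-a - b) * he
  · rw [codisjoint_iff, hIe, eq_top_iff]
    intro z _
    have : z = z * e + z * (1 - e) := by ring
    rw [this]
    exact Submodule.add_mem_sup (Ideal.mem_span_singleton.2 ⟨z, mul_comm z e⟩)
      (Ideal.mem_span_singleton.2 ⟨z, mul_comm z (1-e)⟩)

open LinearMap TensorProduct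

theorem semisimple_to_finitelyProjective (R : Type u) [CommRing R]
    (hss : IsSemisimpleRing (FractionRing R))
    (M : Type u) [AddCommGroup M] [Module R M] (hM : Module.Flat R M) :
    FinitelyProjective R M := by
  classical
  haveI := hM
  haveI := hss
  intro N hN
  set Q := FractionRing R with hQdef
  obtain ⟨S, hS⟩ := hN
  set k := S.card with hk
  set x : Fin k → M := fun i => ((S.equivFin.symm i : S) : M) with hx
  have hrange : Set.range x = (S : Set M) := by
    ext m
    constructor
    · rintro ⟨i, rfl⟩; exact (S.equivFin.symm i).2
    · intro hm; exact ⟨S.equivFin ⟨m, hm⟩, by simp [hx]⟩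
  set f : (Fin k → R) →ₗ[R] M := Fintype.linearCombination R x with hf
  have hfr : LinearMap.range f = N := by
    rw [hf, Fintype.range_linearCombination, hrange, hS]
  -- the injection of M into Q ⊗ M
  set j : M →ₗ[R] Q ⊗[R] M :=
    (LinearMap.rTensor M (Algebra.linearMap R Q)) ∘ₗ (TensorProduct.lid R M).symm.toLinearMap
    with hjdef
  have hj : ∀ m : M, j m = (1 : Q) ⊗ₜ[R] m := by
    intro m
    simp only [hjdef, LinearMap.comp_apply, LinearEquiv.coe_coe, TensorProduct.lid_symm_apply,
      LinearMap.rTensor_tmul, Algebra.linearMap_apply, map_one]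
  have hjinj : Function.Injective j := by
    rw [hjdef]
    exact (Module.Flat.rTensor_preserves_injective_linearMap (M := M) _
      (IsFractionRing.injective R Q)).comp (TensorProduct.lid R M).symm.injective
  -- the Q-linear analogue of f
  set fQ : (Fin k → Q) →ₗ[Q] Q ⊗[R] M :=
    Fintype.linearCombination Q (fun i => (1 : Q) ⊗ₜ[R] x i) with hfQ
  set ρ : (Fin k → R) →ₗ[R] (Fin k → Q) :=
    LinearMap.pi (fun i => (Algebra.linearMap R Q) ∘ₗ LinearMap.proj i) with hρdef
  have hρ : ∀ (a : Fin k → R) (i : Fin k), ρ a i = algebraMap R Q (a i) := fun a i => rfl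
  have hρinj : Function.Injective ρ := by
    intro a b h
    funext i
    exact IsFractionRing.injective R Q (by rw [← hρ, ← hρ, h])
  have hcompat : ∀ a : Fin k → R, fQ (ρ a) = j (f a) := by
    intro a
    rw [hj, hf, hfQ]
    simp only [Fintype.linearCombination_apply]
    rw [TensorProduct.tmul_sum]
    refine Finset.sum_congr rfl fun i _ => ?_
    rw [TensorProduct.tmul_smul, hρ]
    exact algebraMap_smul Q (a i) ((1:Q) ⊗ₜ[R] x i)
  -- the projection onto the kernel of fQ
  set V : Submodule Q (Fin k → Q) := LinearMap.ker fQ with hV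
  obtain ⟨W, hW⟩ := exists_isCompl V
  set E : (Fin k → Q) →ₗ[Q] (Fin k → Q) :=
    V.subtype ∘ₗ (V.linearProjOfIsCompl W hW) with hE
  have hEV : ∀ w, fQ (E w) = 0 := fun w => (V.linearProjOfIsCompl W hW w).2
  have hEfix : ∀ w, fQ w = 0 → E w = w := by
    intro w hw
    have : (V.linearProjOfIsCompl W hW) w = ⟨w, hw⟩ :=
      Submodule.linearProjOfIsCompl_apply_left hW ⟨w, hw⟩
    rw [hE, LinearMap.comp_apply, this]
    rfl
  -- common denominator
  obtain ⟨s, hs⟩ := IsLocalization.exist_integer_multiples_of_finite (nonZeroDivisors R)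
    (fun p : Fin k × Fin k => E (ρ (Pi.single p.1 1)) p.2)
  have hA' : ∀ i j : Fin k, ∃ r : R, algebraMap R Q r = (s : R) • E (ρ (Pi.single i 1)) j := by
    intro i j
    obtain ⟨r, hr⟩ := hs (i, j)
    exact ⟨r, hr⟩
  choose A hA using hA'
  set L : (Fin k → R) →ₗ[R] (Fin k → R) := Fintype.linearCombination R (fun i => A i) with hLdef
  -- decomposition of ρ a
  have hdecomp : ∀ a : Fin k → R, ρ a = ∑ i, algebraMap R Q (a i) • ρ (Pi.single i 1) := by
    intro a
    funext j
    rw [Finset.sum_apply]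
    simp only [Pi.smul_apply, hρ, smul_eq_mul]
    rw [Finset.sum_eq_single j]
    · simp [Pi.single_apply]
    · intro i _ hij
      simp [Pi.single_apply, Ne.symm hij]
    · intro h; exact absurd (Finset.mem_univ j) h
  -- key identity
  have hkey : ∀ a : Fin k → R, ρ (L a) = (s : R) • E (ρ a) := by
    intro a
    have h1 : E (ρ a) = ∑ i, algebraMap R Q (a i) • E (ρ (Pi.single i 1)) := by
      rw [hdecomp a, map_sum]
      exact Finset.sum_congr rfl fun i _ => map_smul E _ _
    funext jj
    rw [h1]
    have h2 : (L a) jj = ∑ i, a i * A i jj := by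
      rw [hLdef, Fintype.linearCombination_apply, Finset.sum_apply]
      exact Finset.sum_congr rfl fun i _ => rfl
    rw [hρ, h2, map_sum, Pi.smul_apply, Finset.sum_apply, Finset.smul_sum]
    refine Finset.sum_congr rfl fun i _ => ?_
    rw [map_mul, hA i jj]
    simp only [Pi.smul_apply, Algebra.smul_def, Algebra.algebraMap_self, RingHom.id_apply]
    ring
  -- f ∘ L = 0
  have hfL : f ∘ₗ L = 0 := by
    apply LinearMap.ext
    intro a
    rw [LinearMap.comp_apply, LinearMap.zero_apply]
    apply hjinj
    rw [map_zero, ← hcompat, hkey]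
    have hsm : ((s : R) • E (ρ a)) = (algebraMap R Q (s : R)) • E (ρ a) :=
      (algebraMap_smul Q ((s : R)) (E (ρ a))).symm
    rw [hsm, map_smul, hEV, smul_zero]
  -- flatness factorization
  obtain ⟨k', amap₀, y₀, hfact₀, hzero₀⟩ :=
    Module.Flat.exists_factorization_of_comp_eq_zero_of_free (R := R) (M := M) hfL
  obtain ⟨κ, amap, y, hfact, hzero⟩ : ∃ (κ : Type u) (amap : (Fin k → R) →ₗ[R] (κ →₀ R))
      (y : (κ →₀ R) →ₗ[R] M), f = y ∘ₗ amap ∧ amap ∘ₗ L = 0 := by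
    let eκ : (Fin k' →₀ R) ≃ₗ[R] (ULift.{u} (Fin k') →₀ R) := Finsupp.domLCongr Equiv.ulift.symm
    refine ⟨ULift.{u} (Fin k'), eκ.toLinearMap ∘ₗ amap₀, y₀ ∘ₗ eκ.symm.toLinearMap, ?_, ?_⟩
    · rw [hfact₀]; ext a; simp
    · rw [LinearMap.comp_assoc, hzero₀, LinearMap.comp_zero]
  -- kernel of f is contained in kernel of amap
  have hker : ∀ a : Fin k → R, f a = 0 → amap a = 0 := by
    intro a ha
    have h1 : fQ (ρ a) = 0 := by rw [hcompat, ha, map_zero]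
    have h2 : E (ρ a) = ρ a := hEfix _ h1
    have h3 : ρ (L a) = ρ ((s : R) • a) := by rw [hkey, h2, map_smul]
    have h4 : L a = (s : R) • a := hρinj h3
    have h5 : (s : R) • amap a = 0 := by
      rw [← map_smul, ← h4]
      exact LinearMap.congr_fun hzero a
    ext i
    have h6 : (s : R) * (amap a) i = 0 := by
      have := congrArg (fun v : κ →₀ R => v i) h5
      simpa [Finsupp.smul_apply, smul_eq_mul] using this
    have h7 : (amap a) i * (s : R) = 0 := by rw [mul_comm]; exact h6
    exact s.prop.2 _ h7
  have hkerle : LinearMap.ker f ≤ LinearMap.ker amap := by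
    intro a ha
    rw [LinearMap.mem_ker] at ha ⊢
    exact hker a ha
  -- assemble
  refine ⟨κ, (Submodule.liftQ (LinearMap.ker f) amap hkerle) ∘ₗ
    (f.quotKerEquivRange.symm.toLinearMap ∘ₗ
      (LinearEquiv.ofEq N (LinearMap.range f) hfr.symm).toLinearMap), y, ?_⟩
  intro n
  obtain ⟨a, ha⟩ : ∃ a, f a = (n : M) := by
    have h : (n : M) ∈ LinearMap.range f := by rw [hfr]; exact n.2
    exact LinearMap.mem_range.mp h
  have h9 : f.quotKerEquivRange.symm ((LinearEquiv.ofEq N (LinearMap.range f) hfr.symm) n)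
      = Submodule.Quotient.mk a := by
    apply f.quotKerEquivRange.injective
    rw [LinearEquiv.apply_symm_apply]
    apply Subtype.ext
    simp only [LinearMap.quotKerEquivRange_apply_mk, ha]
    rfl
  rw [LinearMap.comp_apply, LinearMap.comp_apply, LinearEquiv.coe_toLinearMap,
    LinearEquiv.coe_toLinearMap, h9, Submodule.liftQ_apply]
  have h10 := LinearMap.congr_fun hfact a
  rw [LinearMap.comp_apply] at h10
  rw [← h10, ha]


/-- let `R` be a commutative ring whose total quotient ring `Q` is von Neumann
regular.  The following are equivalent: (1) `Q` is semisimple; (2) every flat `R`-module is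
finitely projective; (3) every flat `R`-module is singly projective. -/
theorem semisimple_iff_flat_finitelyProjective_iff_flat_singlyProjective
    (R : Type u) [CommRing R] (hQ : ∀ a : FractionRing R, ∃ b, a * b * a = a) :
    (IsSemisimpleRing (FractionRing R) ↔
      (∀ (M : Type u) [AddCommGroup M] [Module R M],
        Module.Flat R M → FinitelyProjective R M)) ∧
    ((∀ (M : Type u) [AddCommGroup M] [Module R M],
        Module.Flat R M → FinitelyProjective R M) ↔
      (∀ (M : Type u) [AddCommGroup M] [Module R M],
        Module.Flat R M → SinglyProjective R M)) := by
  have AtoB : IsSemisimpleRing (FractionRing R) →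
      (∀ (M : Type u) [AddCommGroup M] [Module R M],
        Module.Flat R M → FinitelyProjective R M) :=
    fun hss M _ _ hM => semisimple_to_finitelyProjective R hss M hM
  have BtoC : (∀ (M : Type u) [AddCommGroup M] [Module R M],
        Module.Flat R M → FinitelyProjective R M) →
      (∀ (M : Type u) [AddCommGroup M] [Module R M],
        Module.Flat R M → SinglyProjective R M) := by
    intro hB M _ _ hM x
    exact hB M hM (Submodule.span R {x}) (Submodule.fg_span_singleton x)
  have CtoA : (∀ (M : Type u) [AddCommGroup M] [Module R M],
        Module.Flat R M → SinglyProjective R M) → IsSemisimpleRing (FractionRing R) :=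
    singly_to_semisimple R hQ
  exact ⟨⟨AtoB, fun hB => CtoA (BtoC hB)⟩, ⟨BtoC, fun hC M _ _ hM => AtoB (CtoA hC) M hM⟩⟩
end

section
/- Let R be a commutative ring. Then the following conditions are equivalent: (1) R is π-coherent, i.e. for every index set Λ every finitely generated submodule of the R-module R^Λ is finitely presented; (2) for every index set Λ, the R-module R^Λ is finitely projective; (3) every product of finitely projective R-modules is finitely projective. -/
universe u

/-- `R` is π-coherent if for every index set `Λ` every finitely generated submodule of `R^Λ`
is finitely presented. -/
def PiCoherent (R : Type u) [CommRing R] : Prop :=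
  ∀ (Λ : Type u) (N : Submodule R (Λ → R)), N.FG → Module.FinitePresentation R N

universe v w

section Helpers

variable {R : Type u} [CommRing R]

private lemma sum_single_of_support_subset {ι : Type v} (T : Finset ι) (g : ι →₀ R)
    (h : g.support ⊆ T) : ∑ j ∈ T, Finsupp.single j (g j) = g := by
  classical
  conv_rhs => rw [← Finsupp.sum_single g]
  rw [Finsupp.sum]
  exact (Finset.sum_subset h fun j _ hj => by
    rw [Finsupp.notMem_support_iff.mp hj, Finsupp.single_zero]).symm

private lemma support_subset_of_mem_span {ι : Type v} {κ : Type w} [Fintype κ]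
    (v : κ → (ι →₀ R)) {g : ι →₀ R} (T : Finset ι) (hT : ∀ s, (v s).support ⊆ T)
    (hg : g ∈ Submodule.span R (Set.range v)) :
    g.support ⊆ T := by
  classical
  refine Submodule.span_induction ?_ ?_ ?_ ?_ hg
  · rintro _ ⟨s, rfl⟩ a ha
    exact hT s ha
  · simp
  · intro f f' _ _ hf hf' a ha
    rcases Finset.mem_union.mp (Finsupp.support_add ha) with h | h
    · exact hf h
    · exact hf' h
  · intro r f _ hf a ha
    exact hf (Finsupp.support_smul ha)

private lemma pi_eval_expand {ι : Type v} {Γ : Type w} (π : (ι →₀ R) →ₗ[R] (Γ → R))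
    (T : Finset ι) (g : ι →₀ R) (h : g.support ⊆ T) (w : Γ) :
    π g w = ∑ j ∈ T, g j * π (Finsupp.single j 1) w := by
  classical
  conv_lhs => rw [← sum_single_of_support_subset T g h]
  rw [map_sum, Finset.sum_apply]
  refine Finset.sum_congr rfl fun j _ => ?_
  rw [← Finsupp.smul_single_one j (g j), map_smul]
  simp

private lemma span_lift_eq_top {M : Type v} [AddCommGroup M] [Module R M] {n : ℕ}
    (x : Fin n → M) (N : Submodule R M) (hx : Submodule.span R (Set.range x) = N)
    (hmem : ∀ s, x s ∈ N) :
    Submodule.span R (Set.range fun s => (⟨x s, hmem s⟩ : N)) = ⊤ := by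
  apply Submodule.map_injective_of_injective (Submodule.injective_subtype N)
  rw [Submodule.map_span, Submodule.map_top, Submodule.range_subtype, ← Set.range_comp]
  exact hx

private lemma finProj_of_fin_factor {M : Type v} [AddCommGroup M] [Module R M]
    (N : Submodule R M) (k : ℕ) (φ : N →ₗ[R] (Fin k → R)) (π : (Fin k → R) →ₗ[R] M)
    (h : ∀ n : N, π (φ n) = n) :
    ∃ (ι : Type v) (φ' : N →ₗ[R] (ι →₀ R)) (π' : (ι →₀ R) →ₗ[R] M), ∀ n : N, π' (φ' n) = n := by
  let e : (ULift.{v} (Fin k) →₀ R) ≃ₗ[R] (Fin k → R) :=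
    (Finsupp.domLCongr Equiv.ulift).trans (Finsupp.linearEquivFunOnFinite R R (Fin k))
  refine ⟨ULift.{v} (Fin k), e.symm.toLinearMap ∘ₗ φ, π ∘ₗ e.toLinearMap, fun n => ?_⟩
  simpa using h n

private lemma finitelyProjective_self : FinitelyProjective R R := by
  intro N _
  refine ⟨PUnit.{u+1}, (Finsupp.lsingle PUnit.unit) ∘ₗ N.subtype,
    Finsupp.lapply PUnit.unit, fun n => by simp⟩

/-- Direction (2) → (1). -/
private lemma piCoherent_of_pow (hpow : ∀ Λ : Type u, FinitelyProjective R (Λ → R)) :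
    PiCoherent R := by
  classical
  intro Λ N hN
  obtain ⟨n, x, hx⟩ := Submodule.fg_iff_exists_fin_generating_family.mp hN
  set q : (Fin n → R) →ₗ[R] (Λ → R) := Fintype.linearCombination R x with hq
  have hrange : LinearMap.range q = N := by
    rw [hq, Fintype.range_linearCombination, hx]
  set K : Submodule R (Fin n → R) := LinearMap.ker q with hK
  set z : Fin n → (↥K → R) := fun s w => (w : Fin n → R) s with hzdef
  have hzmem : ∀ s, z s ∈ Submodule.span R (Set.range z) :=
    fun s => Submodule.subset_span ⟨s, rfl⟩
  obtain ⟨ι, φ, π, hfac⟩ := hpow ↥K (Submodule.span R (Set.range z))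
    (Submodule.fg_span (Set.finite_range z))
  set zz : Fin n → ↥(Submodule.span R (Set.range z)) := fun s => ⟨z s, hzmem s⟩ with hzz
  set b : ι → (Fin n → R) := fun j s => φ (zz s) j with hb
  set T : Finset ι := Finset.univ.biUnion fun s => (φ (zz s)).support with hT
  have hbK : ∀ j, b j ∈ K := by
    intro j
    have key : ∀ lam : Λ, ∑ s, x s lam * b j s = 0 := by
      intro lam
      have hcomb : (∑ s, x s lam • zz s) = 0 := by
        apply Subtype.ext
        have hz0 : (∑ s, x s lam • z s) = 0 := by
          funext w
          have hw : q (w : Fin n → R) = 0 := w.2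
          have hw' := congrFun hw lam
          simp only [hq, Fintype.linearCombination_apply, Finset.sum_apply,
            Pi.smul_apply, smul_eq_mul, Pi.zero_apply] at hw'
          simp only [Finset.sum_apply, Pi.smul_apply, smul_eq_mul, Pi.zero_apply, hzdef]
          calc ∑ s, x s lam * (w : Fin n → R) s
              = ∑ s, (w : Fin n → R) s * x s lam := by
                exact Finset.sum_congr rfl fun s _ => mul_comm _ _
            _ = 0 := hw'
        simpa using hz0
      have h2 : (∑ s, x s lam • φ (zz s)) = 0 := by
        have := congrArg φ hcomb
        rw [map_sum, map_zero] at this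
        simpa using this
      have h3 := congrArg (fun gg : ι →₀ R => gg j) h2
      simpa [Finset.sum_apply', hb, mul_comm] using h3
    show b j ∈ LinearMap.ker q
    rw [LinearMap.mem_ker]
    funext lam
    simp only [hq, Fintype.linearCombination_apply, Finset.sum_apply, Pi.smul_apply,
      smul_eq_mul, Pi.zero_apply]
    calc ∑ s, b j s * x s lam = ∑ s, x s lam * b j s :=
          Finset.sum_congr rfl fun s _ => mul_comm _ _
      _ = 0 := key lam
  have hspan : K = Submodule.span R (b '' ↑T) := by
    apply le_antisymm
    · intro w hw
      set w' : ↥K := ⟨w, hw⟩ with hw'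
      have hexp : ∀ s, w s = ∑ j ∈ T, (π (Finsupp.single j 1)) w' * b j s := by
        intro s
        have h1 : (π (φ (zz s))) w' = z s w' := by rw [hfac (zz s)]
        have h2 : (φ (zz s)).support ⊆ T := fun a ha =>
          Finset.mem_biUnion.mpr ⟨s, Finset.mem_univ s, ha⟩
        have h3 := pi_eval_expand π T (φ (zz s)) h2 w'
        rw [h1] at h3
        have h4 : z s w' = w s := rfl
        rw [h4] at h3
        rw [h3]
        exact Finset.sum_congr rfl fun j _ => mul_comm _ _
      have hweq : w = ∑ j ∈ T, (π (Finsupp.single j 1)) w' • b j := by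
        funext s
        rw [Finset.sum_apply]
        simpa [smul_eq_mul] using hexp s
      rw [hweq]
      exact Submodule.sum_mem _ fun j hj => Submodule.smul_mem _ _
        (Submodule.subset_span (Set.mem_image_of_mem b (Finset.mem_coe.mpr hj)))
    · rw [Submodule.span_le]
      rintro _ ⟨j, -, rfl⟩
      exact hbK j
  have hKfg : K.FG := by
    rw [hspan, ← Finset.coe_image]
    exact ⟨T.image b, rfl⟩
  set q' := q.codRestrict N (fun a => hrange ▸ LinearMap.mem_range_self q a) with hq'd
  have hsurj : Function.Surjective q' := by
    rintro ⟨y, hy⟩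
    rw [← hrange] at hy
    obtain ⟨a, ha⟩ := hy
    exact ⟨a, Subtype.ext ha⟩
  exact Module.finitePresentation_of_surjective q' hsurj
    (by rwa [LinearMap.ker_codRestrict])

/-- Direction (1) → (2). -/
private lemma pow_of_piCoherent (hpc : PiCoherent R) (Λ : Type u) :
    FinitelyProjective R (Λ → R) := by
  classical
  intro N hN
  obtain ⟨n, x, hx⟩ := Submodule.fg_iff_exists_fin_generating_family.mp hN
  set q : (Fin n → R) →ₗ[R] (Λ → R) := Fintype.linearCombination R x with hq
  have hrange : LinearMap.range q = N := by
    rw [hq, Fintype.range_linearCombination, hx]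
  set q' := q.codRestrict N (fun a => hrange ▸ LinearMap.mem_range_self q a) with hq'd
  have hsurj : Function.Surjective q' := by
    rintro ⟨y, hy⟩
    rw [← hrange] at hy
    obtain ⟨a, ha⟩ := hy
    exact ⟨a, Subtype.ext ha⟩
  haveI : Module.FinitePresentation R ↥N := hpc Λ N hN
  have hK0 : (LinearMap.ker q).FG := by
    have := Module.FinitePresentation.fg_ker q' hsurj
    rwa [hq'd, LinearMap.ker_codRestrict] at this
  obtain ⟨t, w, hw⟩ := Submodule.fg_iff_exists_fin_generating_family.mp hK0
  set Mm : (Fin n → R) →ₗ[R] (ULift.{u} (Fin t) → R) :=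
    LinearMap.pi (fun j => Fintype.linearCombination R (w j.down)) with hMm
  have hMrange : (LinearMap.range Mm).FG := by
    rw [LinearMap.range_eq_map]
    exact (Module.finite_def.mp inferInstance).map Mm
  haveI : Module.FinitePresentation R ↥(LinearMap.range Mm) :=
    hpc (ULift.{u} (Fin t)) _ hMrange
  have hKfg : (LinearMap.ker Mm).FG := by
    rw [← LinearMap.ker_rangeRestrict]
    exact Module.FinitePresentation.fg_ker Mm.rangeRestrict
      (LinearMap.surjective_rangeRestrict Mm)
  obtain ⟨k, d, hd⟩ := Submodule.fg_iff_exists_fin_generating_family.mp hKfg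
  have hdK : ∀ (t' : Fin k) (a : Fin n → R), a ∈ LinearMap.ker q →
      ∑ s, a s * d t' s = 0 := by
    intro t' a ha
    rw [← hw] at ha
    refine Submodule.span_induction ?_ ?_ ?_ ?_ ha
    · rintro _ ⟨j, rfl⟩
      have hdt : d t' ∈ LinearMap.ker Mm := hd ▸ Submodule.subset_span ⟨t', rfl⟩
      have h0 := congrFun (LinearMap.mem_ker.mp hdt) (ULift.up j)
      simp only [hMm, LinearMap.pi_apply, Fintype.linearCombination_apply,
        smul_eq_mul, Pi.zero_apply] at h0
      calc ∑ s, w j s * d t' s = ∑ s, d t' s * w j s :=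
            Finset.sum_congr rfl fun s _ => mul_comm _ _
        _ = 0 := h0
    · simp
    · intro a b _ _ haa hbb
      simp only [Pi.add_apply, add_mul, Finset.sum_add_distrib, haa, hbb, add_zero]
    · intro r a _ haa
      simp only [Pi.smul_apply, smul_eq_mul, mul_assoc, ← Finset.mul_sum, haa, mul_zero]
  have hbmem : ∀ lam : Λ, (fun s => x s lam) ∈ LinearMap.ker Mm := by
    intro lam
    rw [LinearMap.mem_ker]
    funext j
    simp only [hMm, LinearMap.pi_apply, Fintype.linearCombination_apply,
      smul_eq_mul, Pi.zero_apply]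
    have hwj : w j.down ∈ LinearMap.ker q := hw ▸ Submodule.subset_span ⟨j.down, rfl⟩
    have h0 := congrFun (LinearMap.mem_ker.mp hwj) lam
    simp only [hq, Fintype.linearCombination_apply, Finset.sum_apply, Pi.smul_apply,
      smul_eq_mul, Pi.zero_apply] at h0
    calc ∑ s, x s lam * w j.down s = ∑ s, w j.down s * x s lam :=
          Finset.sum_congr rfl fun s _ => mul_comm _ _
      _ = 0 := h0
  have hexists : ∀ lam : Λ, ∃ c : Fin k → R, ∑ t', c t' • d t' = fun s => x s lam := by
    intro lam
    have hm := hbmem lam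
    rw [← hd] at hm
    exact (Submodule.mem_span_range_iff_exists_fun R).mp hm
  choose c hc using hexists
  set ψ : (Fin n → R) →ₗ[R] (Fin k → R) :=
    LinearMap.pi (fun t' => Fintype.linearCombination R (d t')) with hψ
  have hkerle : LinearMap.ker q' ≤ LinearMap.ker ψ := by
    rw [hq'd, LinearMap.ker_codRestrict]
    intro a ha
    rw [LinearMap.mem_ker]
    funext t'
    simp only [hψ, LinearMap.pi_apply, Fintype.linearCombination_apply, smul_eq_mul,
      Pi.zero_apply]
    exact hdK t' a ha
  set e := q'.quotKerEquivOfSurjective hsurj with he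
  set φ : ↥N →ₗ[R] (Fin k → R) :=
    ((LinearMap.ker q').liftQ ψ hkerle) ∘ₗ e.symm.toLinearMap with hφ
  set π : (Fin k → R) →ₗ[R] (Λ → R) :=
    LinearMap.pi (fun lam => Fintype.linearCombination R (c lam)) with hπ
  refine finProj_of_fin_factor N k φ π ?_
  intro nn
  obtain ⟨a, ha⟩ := hsurj nn
  have hsymm : e.symm nn = Submodule.Quotient.mk a := by
    apply e.injective
    rw [LinearEquiv.apply_symm_apply, ← ha]
    rfl
  have hφa : φ nn = ψ a := by
    rw [hφ]
    simp only [LinearMap.comp_apply, LinearEquiv.coe_coe, hsymm, Submodule.liftQ_apply]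
  have hna : (nn : Λ → R) = q a := by rw [← ha]; rfl
  rw [hφa, hna]
  funext lam
  have hx_lam : ∀ s, x s lam = ∑ t', c lam t' * d t' s := by
    intro s
    have h0 := congrFun (hc lam) s
    simp only [Finset.sum_apply, Pi.smul_apply, smul_eq_mul] at h0
    exact h0.symm
  simp only [hπ, hψ, hq, LinearMap.pi_apply, Fintype.linearCombination_apply,
    Finset.sum_apply, Pi.smul_apply, smul_eq_mul]
  calc ∑ t', (∑ s, a s * d t' s) * c lam t'
      = ∑ t', ∑ s, a s * d t' s * c lam t' := by
        exact Finset.sum_congr rfl fun t' _ => Finset.sum_mul _ _ _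
    _ = ∑ s, ∑ t', a s * d t' s * c lam t' := Finset.sum_comm
    _ = ∑ s, a s * x s lam := by
        refine Finset.sum_congr rfl fun s _ => ?_
        rw [hx_lam s, Finset.mul_sum]
        exact Finset.sum_congr rfl fun t' _ => by ring

/-- Direction (2) → (3). -/
private lemma prod_of_pow (hpow : ∀ Λ : Type u, FinitelyProjective R (Λ → R))
    (Λ : Type u) (M : Λ → Type u) [∀ i, AddCommGroup (M i)] [∀ i, Module R (M i)]
    (hM : ∀ i, FinitelyProjective R (M i)) : FinitelyProjective R (∀ i, M i) := by
  classical
  intro N hN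
  obtain ⟨n, x, hx⟩ := Submodule.fg_iff_exists_fin_generating_family.mp hN
  have hxN : ∀ s, x s ∈ N := fun s => hx ▸ Submodule.subset_span ⟨s, rfl⟩
  set xN : Fin n → ↥N := fun s => ⟨x s, hxN s⟩ with hxNdef
  have htop : Submodule.span R (Set.range xN) = ⊤ := span_lift_eq_top x N hx hxN
  set Ni : ∀ i, Submodule R (M i) := fun i => Submodule.span R (Set.range fun s => x s i)
    with hNi
  have hproj : ∀ i, ∀ v ∈ N, (LinearMap.proj i : (∀ i, M i) →ₗ[R] M i) v ∈ Ni i := by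
    intro i v hv
    rw [← hx] at hv
    have h0 := Submodule.apply_mem_span_image_of_mem_span
      (LinearMap.proj i : (∀ i, M i) →ₗ[R] M i) hv
    rw [← Set.range_comp] at h0
    exact h0
  choose ι φ π hfac using fun i => hM i (Ni i)
    (Submodule.fg_span (Set.finite_range _))
  set pm : ∀ i, ↥N →ₗ[R] ↥(Ni i) :=
    fun i => (LinearMap.proj i : (∀ i, M i) →ₗ[R] M i).restrict (hproj i) with hpm
  set g : ∀ i, ↥N →ₗ[R] (ι i →₀ R) := fun i => (φ i) ∘ₗ pm i with hg
  set T : ∀ i, Finset (ι i) :=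
    fun i => Finset.univ.biUnion fun s => (g i (xN s)).support with hTdef
  have hsupp : ∀ i (nn : ↥N), (g i nn).support ⊆ T i := by
    intro i nn
    have h1 : nn ∈ Submodule.span R (Set.range xN) := htop ▸ Submodule.mem_top
    have h2 := Submodule.apply_mem_span_image_of_mem_span (g i) h1
    rw [← Set.range_comp] at h2
    exact support_subset_of_mem_span _ (T i)
      (fun s a ha => Finset.mem_biUnion.mpr ⟨s, Finset.mem_univ s, ha⟩) h2
  set Γ := (i : Λ) × {j // j ∈ T i} with hΓ
  set E : ↥N →ₗ[R] (Γ → R) :=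
    LinearMap.pi (fun γ => Finsupp.lapply γ.2.1 ∘ₗ g γ.1) with hE
  haveI : Module.Finite R ↥N := Module.Finite.iff_fg.mpr hN
  have hErange : (LinearMap.range E).FG := by
    rw [LinearMap.range_eq_map]
    exact (Module.finite_def.mp inferInstance).map E
  obtain ⟨ιJ, Φ, PP, hΦ⟩ := hpow Γ (LinearMap.range E) hErange
  set ψbig : (Γ → R) →ₗ[R] (∀ i, ι i →₀ R) :=
    LinearMap.pi (fun i => ∑ j ∈ (T i).attach,
      Finsupp.lsingle (R := R) j.1 ∘ₗ LinearMap.proj (⟨i, j⟩ : Γ)) with hψbig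
  refine ⟨ιJ, Φ ∘ₗ E.rangeRestrict,
    (LinearMap.pi fun i => (π i) ∘ₗ (LinearMap.proj i : (∀ i, ι i →₀ R) →ₗ[R] (ι i →₀ R)))
      ∘ₗ ψbig ∘ₗ PP, ?_⟩
  intro nn
  have h1 : PP (Φ (E.rangeRestrict nn)) = E nn := hΦ (E.rangeRestrict nn)
  simp only [LinearMap.comp_apply]
  rw [h1]
  funext i
  simp only [LinearMap.pi_apply, LinearMap.comp_apply, LinearMap.proj_apply]
  have hcomp : ψbig (E nn) i = g i nn := by
    simp only [hψbig, LinearMap.pi_apply, LinearMap.sum_apply, LinearMap.comp_apply,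
      LinearMap.proj_apply]
    have heval : ∀ (jj : {j // j ∈ T i}), (E nn) (⟨i, jj⟩ : Γ) = g i nn jj.1 := fun jj => rfl
    calc ∑ j ∈ (T i).attach, Finsupp.lsingle (R := R) j.1 ((E nn) (⟨i, j⟩ : Γ))
        = ∑ j ∈ (T i).attach, Finsupp.single j.1 (g i nn j.1) := by
          exact Finset.sum_congr rfl fun j _ => by rw [heval j]; rfl
      _ = ∑ j ∈ T i, Finsupp.single j (g i nn j) :=
          Finset.sum_attach (T i) (fun j => Finsupp.single j (g i nn j))
      _ = g i nn := sum_single_of_support_subset _ _ (hsupp i nn)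
  rw [hcomp]
  exact hfac i (pm i nn)

end Helpers

/-- for a commutative ring `R` the following are equivalent: (1) `R` is
π-coherent; (2) `R^Λ` is finitely projective for every index set `Λ`; (3) every product of
finitely projective `R`-modules is finitely projective. -/
theorem piCoherent_iff_pow_finitelyProjective_iff_prod_finitelyProjective
    (R : Type u) [CommRing R] :
    (PiCoherent R ↔ ∀ Λ : Type u, FinitelyProjective R (Λ → R)) ∧
    ((∀ Λ : Type u, FinitelyProjective R (Λ → R)) ↔
      (∀ (Λ : Type u) (M : Λ → Type u) [∀ i, AddCommGroup (M i)] [∀ i, Module R (M i)],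
        (∀ i, FinitelyProjective R (M i)) → FinitelyProjective R (∀ i, M i))) := by
  refine ⟨⟨fun hpc => pow_of_piCoherent hpc, fun hpow => piCoherent_of_pow hpow⟩,
    ⟨fun hpow Λ M _ _ hM => prod_of_pow hpow Λ M hM, fun hprod Λ => ?_⟩⟩
  exact hprod Λ (fun _ => R) (fun _ => finitelyProjective_self)
end

section
/- Let R be a commutative von Neumann regular ring. Then the following conditions are equivalent: (1) every product of singly projective R-modules is singly projective; (2) the R-module R^R (the product of R copies of R) is singly projective; (3) R is a Baer ring; (4) the intersection of every family of finitely generated ideals of R is finitely generated; (5) for every cyclic R-module C, the module Hom_R(C,R) is finitely generated; (6) the prime spectrum Spec R with the Zariski topology is extremally disconnected. -/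
universe u

/-- A commutative ring `R` is a Baer ring if for every subset `A` of `R` the annihilator
`(0 : A)` is generated by an idempotent. -/
def IsBaerRing (R : Type u) [CommRing R] : Prop :=
  ∀ A : Set R, ∃ e : R, IsIdempotentElem e ∧
    {r : R | ∀ a ∈ A, r * a = 0} = (Ideal.span {e} : Set R)

universe v

section AuxHelpers
variable {R : Type u} [CommRing R]

variable {R : Type u} [CommRing R]

lemma idem_mem_span_iff {e : R} (he : IsIdempotentElem e) (r : R) :
    r ∈ Ideal.span {e} ↔ r * e = r := by
  constructor
  · intro h
    obtain ⟨c, rfl⟩ := Ideal.mem_span_singleton'.mp h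
    rw [mul_assoc, he]
  · intro h
    exact h ▸ Ideal.mul_mem_left _ r (Ideal.mem_span_singleton_self e)

lemma vnr_isReduced (hvnr : ∀ a : R, ∃ b : R, a * b * a = a) : IsReduced R := by
  constructor
  intro a ⟨n, hn⟩
  obtain ⟨b, hb⟩ := hvnr a
  have key : ∀ k : ℕ, a = a * (b * a) ^ k := by
    intro k
    induction k with
    | zero => simp
    | succ k ih =>
      calc a = a * b * a := hb.symm
        _ = (a * (b*a)^k) * b * a := by rw [← ih]
        _ = a * (b*a)^(k+1) := by ring
  have := key n
  rw [mul_pow, ← mul_assoc] at this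
  calc a = a * b ^ n * a ^ n := this
    _ = a * b ^ n * 0 := by rw [hn]
    _ = 0 := by ring

lemma ann_elem (hvnr : ∀ a : R, ∃ b : R, a * b * a = a) (a : R) :
    ∃ e : R, IsIdempotentElem e ∧ ∀ r : R, r * a = 0 ↔ r ∈ Ideal.span {e} := by
  obtain ⟨b, hb⟩ := hvnr a
  have hidem : IsIdempotentElem (a * b) := by
    unfold IsIdempotentElem
    calc a * b * (a * b) = (a * b * a) * b := by ring
      _ = a * b := by rw [hb]
  refine ⟨1 - a * b, hidem.one_sub, fun r => ?_⟩
  rw [idem_mem_span_iff hidem.one_sub]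
  constructor
  · intro h
    have : r * a * b = 0 := by rw [h]; ring
    linear_combination -this
  · intro h
    have h2 : r * (a * b) = 0 := by
      have h3 := congrArg (· * (a*b)) h
      try simp only at h3
      have h4 : a * b * (a * b) = a * b := hidem
      linear_combination -r * h4 - h3
    calc r * a = r * (a * b * a) := by rw [hb]
      _ = (r * (a * b)) * a := by ring
      _ = 0 := by rw [h2]; ring

lemma span_eq_idem (hvnr : ∀ a : R, ∃ b : R, a * b * a = a) (a : R) :
    ∃ e : R, IsIdempotentElem e ∧ Ideal.span {a} = Ideal.span {e} := by
  obtain ⟨b, hb⟩ := hvnr a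
  have hidem : IsIdempotentElem (a * b) := by
    unfold IsIdempotentElem
    calc a * b * (a * b) = (a * b * a) * b := by ring
      _ = a * b := by rw [hb]
  refine ⟨a * b, hidem, le_antisymm ?_ ?_⟩
  · rw [Ideal.span_singleton_le_iff_mem, Ideal.mem_span_singleton']
    exact ⟨a, by linear_combination hb⟩
  · rw [Ideal.span_singleton_le_iff_mem, Ideal.mem_span_singleton']
    exact ⟨b, by ring⟩

lemma sup_span_idem {e f : R} (he : IsIdempotentElem e) (hf : IsIdempotentElem f) :
    ∃ g : R, IsIdempotentElem g ∧
      Ideal.span {e} ⊔ Ideal.span {f} = Ideal.span {g} := by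
  refine ⟨e + f - e * f, ?_, ?_⟩
  · unfold IsIdempotentElem
    have h1 : e * e = e := he
    have h2 : f * f = f := hf
    linear_combination (1 + f*f - 2*f) * h1 + (1 - e) * h2
  · have h1 : e * e = e := he
    have h2 : f * f = f := hf
    apply le_antisymm
    · apply sup_le <;> rw [Ideal.span_singleton_le_iff_mem, Ideal.mem_span_singleton']
      · exact ⟨e, by linear_combination (1 - f) * h1⟩
      · exact ⟨f, by linear_combination (1 - e) * h2⟩
    · rw [Ideal.span_singleton_le_iff_mem]
      have h1 : e ∈ Ideal.span {e} ⊔ Ideal.span {f} :=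
        Submodule.mem_sup_left (Ideal.mem_span_singleton_self e)
      have h2 : f ∈ Ideal.span {e} ⊔ Ideal.span {f} :=
        Submodule.mem_sup_right (Ideal.mem_span_singleton_self f)
      have h3 : e * f ∈ Ideal.span {e} ⊔ Ideal.span {f} :=
        Ideal.mul_mem_left _ e h2
      exact sub_mem (add_mem h1 h2) h3

lemma fg_idem (hvnr : ∀ a : R, ∃ b : R, a * b * a = a) (I : Ideal R) (hI : I.FG) :
    ∃ e : R, IsIdempotentElem e ∧ I = Ideal.span {e} := by
  obtain ⟨s, rfl⟩ := hI
  classical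
  induction s using Finset.induction_on with
  | empty => exact ⟨0, by simp [IsIdempotentElem], by simp only [Finset.coe_empty, Ideal.span_empty]; exact (Submodule.span_zero_singleton R).symm⟩
  | insert a s hnotmem ih =>
    obtain ⟨f, hf, hfs⟩ := ih
    obtain ⟨g, hg, hga⟩ := span_eq_idem hvnr a
    obtain ⟨h, hh, hsup⟩ := sup_span_idem hg hf
    refine ⟨h, hh, ?_⟩
    rw [Finset.coe_insert, Ideal.span_insert, hfs, hga, hsup]

lemma prod_idem {ι : Type*} (s : Finset ι) (ε : ι → R)
    (h : ∀ i ∈ s, IsIdempotentElem (ε i)) :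
    IsIdempotentElem (∏ i ∈ s, ε i) ∧
      ∀ r : R, (r * ∏ i ∈ s, ε i = r ↔ ∀ i ∈ s, r * ε i = r) := by
  classical
  induction s using Finset.induction_on with
  | empty => simp [IsIdempotentElem]
  | insert a s hnotmem ih =>
    obtain ⟨hP, hPr⟩ := ih (fun i hi => h i (Finset.mem_insert_of_mem hi))
    have ha : IsIdempotentElem (ε a) := h a (Finset.mem_insert_self a s)
    rw [Finset.prod_insert hnotmem]
    constructor
    · unfold IsIdempotentElem
      have h1 : ε a * ε a = ε a := ha
      have h2 : (∏ i ∈ s, ε i) * (∏ i ∈ s, ε i) = ∏ i ∈ s, ε i := hP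
      linear_combination (∏ i ∈ s, ε i) * (∏ i ∈ s, ε i) * h1 + (ε a) * h2
    · intro r
      constructor
      · intro hr
        have hra : r * ε a = r := by
          calc r * ε a = (r * (ε a * ∏ i ∈ s, ε i)) * ε a := by rw [hr]
            _ = (r * ∏ i ∈ s, ε i) * (ε a * ε a) := by ring
            _ = (r * ∏ i ∈ s, ε i) * ε a := by rw [ha]
            _ = r * (ε a * ∏ i ∈ s, ε i) := by ring
            _ = r := hr
        have hrP : r * ∏ i ∈ s, ε i = r := by
          calc r * ∏ i ∈ s, ε i = (r * (ε a * ∏ i ∈ s, ε i)) * ∏ i ∈ s, ε i := by rw [hr]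
            _ = (r * ε a) * ((∏ i ∈ s, ε i) * (∏ i ∈ s, ε i)) := by ring
            _ = (r * ε a) * ∏ i ∈ s, ε i := by rw [hP]
            _ = r * (ε a * ∏ i ∈ s, ε i) := by ring
            _ = r := hr
        intro i hi
        rcases Finset.mem_insert.mp hi with rfl | hi
        · exact hra
        · exact (hPr r).mp hrP i hi
      · intro hall
        have hra : r * ε a = r := hall a (Finset.mem_insert_self a s)
        have hrP : r * ∏ i ∈ s, ε i = r :=
          (hPr r).mpr (fun i hi => hall i (Finset.mem_insert_of_mem hi))
        calc r * (ε a * ∏ i ∈ s, ε i) = (r * ε a) * ∏ i ∈ s, ε i := by ring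
          _ = r * ∏ i ∈ s, ε i := by rw [hra]
          _ = r := hrP

lemma baer_iInf (hB : IsBaerRing R) {ι : Type*} (f : ι → R) :
    ∃ e : R, IsIdempotentElem e ∧ ∀ r : R, ((∀ i, r * f i = r) ↔ r ∈ Ideal.span {e}) := by
  obtain ⟨e, he, hset⟩ := hB (Set.range (fun i => 1 - f i))
  refine ⟨e, he, fun r => ?_⟩
  have : (∀ a ∈ Set.range (fun i => 1 - f i), r * a = 0) ↔ r ∈ Ideal.span {e} := by
    constructor
    · intro h; have : r ∈ {r : R | ∀ a ∈ Set.range (fun i => 1 - f i), r * a = 0} := h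
      rw [hset] at this; exact this
    · intro h; have : r ∈ (Ideal.span {e} : Set R) := h
      rw [← hset] at this; exact this
  rw [← this]
  constructor
  · rintro h a ⟨i, rfl⟩
    simp only
    linear_combination -h i
  · intro h i
    have := h (1 - f i) ⟨i, rfl⟩
    linear_combination -this

/-- Lemma C: if the annihilator of `x` is generated by an idempotent, the factoring
property holds at `x`. -/
lemma factor_of_idem {M : Type v} [AddCommGroup M] [Module R M] (x : M) {e : R}
    (he : IsIdempotentElem e) (hx : ∀ r : R, r • x = 0 ↔ r ∈ Ideal.span {e}) :
    ∃ (ι : Type v) (φ : (Submodule.span R ({x} : Set M)) →ₗ[R] (ι →₀ R))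
      (π : (ι →₀ R) →ₗ[R] M), ∀ n : (Submodule.span R ({x} : Set M)), π (φ n) = (n : M) := by
  classical
  set f : R →ₗ[R] M := LinearMap.toSpanSingleton R M x with hf
  have hker : LinearMap.ker f = Ideal.span {e} := by
    ext r
    rw [LinearMap.mem_ker]
    exact hx r
  -- the map span{x} → R ⧸ ker f
  have heq : Submodule.span R ({x} : Set M) = LinearMap.range f :=
    LinearMap.span_singleton_eq_range R M x
  set E1 : (Submodule.span R ({x} : Set M)) ≃ₗ[R] LinearMap.range f :=
    LinearEquiv.ofEq _ _ heq
  set E2 : (R ⧸ LinearMap.ker f) ≃ₗ[R] LinearMap.range f := f.quotKerEquivRange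
  set q : (Submodule.span R ({x} : Set M)) →ₗ[R] (R ⧸ LinearMap.ker f) :=
    (E2.symm : LinearMap.range f →ₗ[R] R ⧸ LinearMap.ker f) ∘ₗ
      (E1 : Submodule.span R ({x} : Set M) →ₗ[R] LinearMap.range f)
  set g : R →ₗ[R] R := LinearMap.toSpanSingleton R R (1 - e)
  have hle : LinearMap.ker f ≤ LinearMap.ker g := by
    intro r hr
    rw [hker] at hr
    rw [LinearMap.mem_ker]
    obtain ⟨c, rfl⟩ := Ideal.mem_span_singleton'.mp hr
    show (c * e) • (1 - e) = 0
    have h1 : e * e = e := he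
    rw [smul_eq_mul]
    linear_combination -c * h1
  set gbar : (R ⧸ LinearMap.ker f) →ₗ[R] R := Submodule.liftQ _ g hle
  set φ : (Submodule.span R ({x} : Set M)) →ₗ[R] (PUnit.{v+1} →₀ R) :=
    (Finsupp.lsingle PUnit.unit) ∘ₗ gbar ∘ₗ q
  set π : (PUnit.{v+1} →₀ R) →ₗ[R] M := Finsupp.linearCombination R (fun _ : PUnit.{v+1} => x)
  refine ⟨PUnit.{v+1}, φ, π, ?_⟩
  have hex : e • x = 0 := (hx e).mpr (Ideal.mem_span_singleton_self e)
  have hxmem : x ∈ Submodule.span R ({x} : Set M) := Submodule.mem_span_singleton_self x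
  have key : π (φ ⟨x, hxmem⟩) = x := by
    have hq : q ⟨x, hxmem⟩ = Submodule.Quotient.mk (1 : R) := by
      show E2.symm (E1 ⟨x, hxmem⟩) = Submodule.Quotient.mk (1 : R)
      rw [LinearEquiv.symm_apply_eq]
      have : E2 (Submodule.Quotient.mk (1 : R)) = ⟨f 1, LinearMap.mem_range_self f 1⟩ := by
        apply Subtype.ext
        exact f.quotKerEquivRange_apply_mk 1
      rw [this]
      apply Subtype.ext
      show ((E1 ⟨x, hxmem⟩ : LinearMap.range f) : M) = f 1
      have h1 : ((E1 ⟨x, hxmem⟩ : LinearMap.range f) : M) = x := rfl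
      have h2 : f 1 = x := by show (1 : R) • x = x; rw [one_smul]
      rw [h1, h2]
    show π ((Finsupp.lsingle (R := R) (M := R) PUnit.unit) (gbar (q ⟨x, hxmem⟩))) = x
    rw [hq]
    have hgbar : gbar (Submodule.Quotient.mk (1 : R)) = 1 - e := by
      show g 1 = 1 - e
      show (1 : R) • (1 - e) = 1 - e
      rw [one_smul]
    rw [hgbar]
    show π (Finsupp.single PUnit.unit (1 - e)) = x
    rw [Finsupp.linearCombination_single]
    rw [sub_smul, one_smul, hex, sub_zero]
  intro n
  obtain ⟨r, hr⟩ := Submodule.mem_span_singleton.mp n.2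
  have hn : n = r • (⟨x, hxmem⟩ : Submodule.span R ({x} : Set M)) := by
    apply Subtype.ext
    exact hr.symm
  rw [hn, map_smul, map_smul, key]
  rfl

/-- Lemma D: from the factoring property at `x`, vnr gives an idempotent generator of
the annihilator. -/
lemma idem_of_factor (hvnr : ∀ a : R, ∃ b : R, a * b * a = a)
    (ann_elem : ∀ a : R, ∃ e : R, IsIdempotentElem e ∧ ∀ r : R, r * a = 0 ↔ r ∈ Ideal.span {e})
    (prod_idem : ∀ {ι : Type v} (s : Finset ι) (ε : ι → R),
      (∀ i ∈ s, IsIdempotentElem (ε i)) →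
      IsIdempotentElem (∏ i ∈ s, ε i) ∧
        ∀ r : R, (r * ∏ i ∈ s, ε i = r ↔ ∀ i ∈ s, r * ε i = r))
    {M : Type v} [AddCommGroup M] [Module R M] (x : M)
    (h : ∃ (ι : Type v) (φ : (Submodule.span R ({x} : Set M)) →ₗ[R] (ι →₀ R))
      (π : (ι →₀ R) →ₗ[R] M), ∀ n : (Submodule.span R ({x} : Set M)), π (φ n) = (n : M)) :
    ∃ e : R, IsIdempotentElem e ∧ ∀ r : R, r • x = 0 ↔ r ∈ Ideal.span {e} := by
  classical
  obtain ⟨ι, φ, π, hπφ⟩ := h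
  have hxmem : x ∈ Submodule.span R ({x} : Set M) := Submodule.mem_span_singleton_self x
  set y : ι →₀ R := φ ⟨x, hxmem⟩ with hy
  -- annihilator of x equals annihilator of y
  have hann : ∀ r : R, r • x = 0 ↔ r • y = 0 := by
    intro r
    constructor
    · intro hr
      have : r • (⟨x, hxmem⟩ : Submodule.span R ({x} : Set M)) = 0 := by
        apply Subtype.ext
        show r • x = 0
        exact hr
      rw [hy, ← map_smul, this, map_zero]
    · intro hr
      have : π (r • y) = r • x := by
        rw [map_smul, hy, hπφ]
      rw [hr, map_zero] at this
      exact this.symm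
  -- choose idempotents for each coordinate
  choose ε hει hεr using ann_elem
  set e : R := ∏ i ∈ y.support, ε (y i) with he
  obtain ⟨hidem, hmem⟩ := prod_idem y.support (fun i => ε (y i)) (fun i _ => hει (y i))
  refine ⟨e, hidem, fun r => ?_⟩
  rw [hann r, idem_mem_span_iff hidem]
  rw [hmem r]
  constructor
  · intro hr i _
    have hryi : r * y i = 0 := by simpa using DFunLike.congr_fun hr i
    exact (idem_mem_span_iff (hει (y i)) r).mp ((hεr (y i) r).mp hryi)
  · intro hr
    ext i
    simp only [Finsupp.smul_apply, smul_eq_mul, Finsupp.coe_zero, Pi.zero_apply]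
    by_cases hi : i ∈ y.support
    · have := hr i hi
      rw [← idem_mem_span_iff (hει (y i)) r] at this
      exact (hεr (y i) r).mpr this
    · rw [Finsupp.notMem_support_iff.mp hi, mul_zero]

lemma basicOpen_nonempty_of_ne_zero [IsReduced R] {a : R} (ha : a ≠ 0) :
    ((PrimeSpectrum.basicOpen a : TopologicalSpace.Opens (PrimeSpectrum R)) :
      Set (PrimeSpectrum R)).Nonempty := by
  rw [Set.nonempty_iff_ne_empty]
  intro h
  have : PrimeSpectrum.basicOpen a = ⊥ := by
    apply TopologicalSpace.Opens.ext
    simpa using h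
  exact ha (((PrimeSpectrum.basicOpen_eq_bot_iff a).mp this).eq_zero)

lemma baer_to_ed (hvnr : ∀ a : R, ∃ b : R, a * b * a = a)
    (hred : IsReduced R) (hB : IsBaerRing R) :
    ExtremallyDisconnected (PrimeSpectrum R) := by
  constructor
  intro U hU
  obtain ⟨s, hs⟩ := (PrimeSpectrum.isOpen_iff U).mp hU
  have hUeq : U = (PrimeSpectrum.zeroLocus s)ᶜ := by
    rw [← hs, compl_compl]
  obtain ⟨e, he, hann⟩ := hB s
  have hememann : ∀ a ∈ s, e * a = 0 := by
    have : e ∈ {r : R | ∀ a ∈ s, r * a = 0} := by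
      rw [hann]
      exact Ideal.mem_span_singleton_self e
    exact this
  have hUe : U ⊆ PrimeSpectrum.zeroLocus {e} := by
    intro p hp
    rw [PrimeSpectrum.mem_zeroLocus, Set.singleton_subset_iff]
    rw [hUeq, Set.mem_compl_iff, PrimeSpectrum.mem_zeroLocus, Set.not_subset] at hp
    obtain ⟨a, has, hap⟩ := hp
    have h0 : e * a ∈ p.asIdeal := by
      rw [hememann a has]; exact p.asIdeal.zero_mem
    exact (p.isPrime.mem_or_mem h0).resolve_right hap
  have hcl : closure U = PrimeSpectrum.zeroLocus {e} := by
    apply Set.Subset.antisymm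
    · exact closure_minimal hUe (PrimeSpectrum.isClosed_zeroLocus _)
    · intro p hp
      rw [PrimeSpectrum.mem_zeroLocus, Set.singleton_subset_iff] at hp
      rw [mem_closure_iff]
      intro o ho hpo
      obtain ⟨bO, ⟨b, rfl⟩, hpb, hbo⟩ :=
        PrimeSpectrum.isTopologicalBasis_basic_opens.exists_subset_of_mem_open hpo ho
      have hbp : b ∉ p.asIdeal := hpb
      have hba : ∃ a ∈ s, b * a ≠ 0 := by
        by_contra hcon
        push_neg at hcon
        have : b ∈ {r : R | ∀ a ∈ s, r * a = 0} := hcon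
        rw [hann] at this
        have hbe : b * e = b := (idem_mem_span_iff he b).mp this
        exact hbp (hbe ▸ p.asIdeal.mul_mem_left b hp)
      obtain ⟨a, has, hba⟩ := hba
      obtain ⟨q, hq⟩ := basicOpen_nonempty_of_ne_zero hba
      rw [PrimeSpectrum.basicOpen_mul] at hq
      obtain ⟨hqb, hqa⟩ := hq
      refine ⟨q, hbo hqb, ?_⟩
      rw [hUeq, Set.mem_compl_iff, PrimeSpectrum.mem_zeroLocus, Set.not_subset]
      exact ⟨a, has, hqa⟩
  rw [hcl, PrimeSpectrum.zeroLocus_eq_basicOpen_of_isIdempotentElem e he]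
  exact (PrimeSpectrum.basicOpen (1 - e)).isOpen

lemma ed_to_baer (hvnr : ∀ a : R, ∃ b : R, a * b * a = a)
    (hred : IsReduced R) (h : ExtremallyDisconnected (PrimeSpectrum R)) :
    IsBaerRing R := by
  intro A
  set U : Set (PrimeSpectrum R) := (PrimeSpectrum.zeroLocus A)ᶜ with hu
  have hUopen : IsOpen U := (PrimeSpectrum.isClosed_zeroLocus A).isOpen_compl
  have hclopen : IsClopen (closure U) := ⟨isClosed_closure, h.open_closure U hUopen⟩
  obtain ⟨e, he, hce⟩ := PrimeSpectrum.isClopen_iff.mp hclopen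
  refine ⟨1 - e, he.one_sub, ?_⟩
  ext r
  simp only [Set.mem_setOf_eq, SetLike.mem_coe]
  rw [idem_mem_span_iff he.one_sub r]
  constructor
  · intro hra
    have hsub : U ⊆ ((PrimeSpectrum.basicOpen r : TopologicalSpace.Opens (PrimeSpectrum R)) :
        Set (PrimeSpectrum R))ᶜ := by
      intro q hq
      rw [hu, Set.mem_compl_iff, PrimeSpectrum.mem_zeroLocus, Set.not_subset] at hq
      obtain ⟨a, haA, haq⟩ := hq
      intro hqr
      have hqr' : r ∉ q.asIdeal := hqr
      have h0 : r * a ∈ q.asIdeal := by rw [hra a haA]; exact q.asIdeal.zero_mem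
      rcases q.isPrime.mem_or_mem h0 with h' | h'
      · exact hqr' h'
      · exact haq h'
    have hclsub : closure U ⊆ ((PrimeSpectrum.basicOpen r : TopologicalSpace.Opens
        (PrimeSpectrum R)) : Set (PrimeSpectrum R))ᶜ :=
      closure_minimal hsub (PrimeSpectrum.basicOpen r).isOpen.isClosed_compl
    have hre : r * e = 0 := by
      by_contra hre0
      obtain ⟨q, hq⟩ := basicOpen_nonempty_of_ne_zero hre0
      rw [PrimeSpectrum.basicOpen_mul] at hq
      obtain ⟨hqr, hqe⟩ := hq
      have : q ∈ closure U := by rw [hce]; exact hqe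
      exact hclsub this hqr
    linear_combination -hre
  · intro hre
    have hre0 : r * e = 0 := by linear_combination -hre
    intro a haA
    by_contra hra0
    obtain ⟨q, hq⟩ := basicOpen_nonempty_of_ne_zero hra0
    rw [PrimeSpectrum.basicOpen_mul] at hq
    obtain ⟨hqr, hqa⟩ := hq
    have hqU : q ∈ U := by
      rw [hu, Set.mem_compl_iff, PrimeSpectrum.mem_zeroLocus, Set.not_subset]
      exact ⟨a, haA, hqa⟩
    have hqe : q ∈ ((PrimeSpectrum.basicOpen e : TopologicalSpace.Opens (PrimeSpectrum R)) :
        Set (PrimeSpectrum R)) := by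
      rw [← hce]; exact subset_closure hqU
    have h0 : r * e ∈ q.asIdeal := by rw [hre0]; exact q.asIdeal.zero_mem
    rcases q.isPrime.mem_or_mem h0 with h' | h'
    · exact hqr h'
    · exact hqe h'

lemma four_to_five
    (ann_elem : ∀ a : R, ∃ e : R, IsIdempotentElem e ∧ ∀ r : R, r * a = 0 ↔ r ∈ Ideal.span {e})
    (h4 : ∀ (ι : Type u) (I : ι → Ideal R), (∀ i, (I i).FG) → (⨅ i, I i).FG)
    (C : Type u) [AddCommGroup C] [Module R C]
    (hcyc : ∃ c : C, Submodule.span R ({c} : Set C) = ⊤) :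
    Module.Finite R (C →ₗ[R] R) := by
  classical
  obtain ⟨c, hc⟩ := hcyc
  set f : R →ₗ[R] C := LinearMap.toSpanSingleton R C c with hf
  set ev : (C →ₗ[R] R) →ₗ[R] R := LinearMap.applyₗ c with hev
  have hinj : Function.Injective ev := by
    intro g₁ g₂ hg
    have hgc : g₁ c = g₂ c := hg
    ext z
    have hz : z ∈ Submodule.span R ({c} : Set C) := hc ▸ Submodule.mem_top
    obtain ⟨r, rfl⟩ := Submodule.mem_span_singleton.mp hz
    rw [map_smul, map_smul, hgc]
  choose E hEidem hEr using ann_elem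
  set J : Ideal R := ⨅ s : {s : R // s • c = 0}, Ideal.span {E s.val} with hJ
  have hJfg : J.FG := by
    apply h4
    intro s
    exact ⟨{E s.val}, by simp⟩
  have hrange : LinearMap.range ev = J := by
    apply le_antisymm
    · rintro _ ⟨g, rfl⟩
      rw [hJ, Submodule.mem_iInf]
      intro s
      rw [← hEr]
      have : g (s.val • c) = 0 := by rw [s.2, map_zero]
      rw [map_smul, smul_eq_mul] at this
      rw [mul_comm]
      exact this
    · intro r hr
      rw [hJ, Submodule.mem_iInf] at hr
      have hann : ∀ s : R, s • c = 0 → r * s = 0 := fun s hs => (hEr s r).mpr (hr ⟨s, hs⟩)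
      set g : R →ₗ[R] R := LinearMap.toSpanSingleton R R r with hg
      have hle : LinearMap.ker f ≤ LinearMap.ker g := by
        intro s hs
        rw [LinearMap.mem_ker] at hs ⊢
        show s • r = 0
        rw [smul_eq_mul, mul_comm]
        exact hann s hs
      set gbar : (R ⧸ LinearMap.ker f) →ₗ[R] R := Submodule.liftQ _ g hle with hgbar
      have hrangef : LinearMap.range f = ⊤ := by
        rw [← LinearMap.span_singleton_eq_range, hc]
      set E3 : (LinearMap.range f) ≃ₗ[R] C := LinearEquiv.ofTop _ hrangef with hE3
      set gc : C →ₗ[R] R := gbar ∘ₗ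
        (f.quotKerEquivRange.symm : LinearMap.range f →ₗ[R] R ⧸ LinearMap.ker f) ∘ₗ
        (E3.symm : C →ₗ[R] LinearMap.range f) with hgc
      refine ⟨gc, ?_⟩
      show gc c = r
      have h1 : E3.symm c = ⟨f 1, LinearMap.mem_range_self f 1⟩ := by
        rw [LinearEquiv.symm_apply_eq]
        have h2 : E3 ⟨f 1, LinearMap.mem_range_self f 1⟩ = f 1 := rfl
        rw [h2]
        show c = (1 : R) • c
        rw [one_smul]
      show gbar (f.quotKerEquivRange.symm (E3.symm c)) = r
      rw [h1, f.quotKerEquivRange_symm_apply_image 1]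
      show g 1 = r
      show (1 : R) • r = r
      rw [one_smul]
  have hfin : Module.Finite R (LinearMap.range ev) := by
    rw [Module.Finite.iff_fg, hrange]
    exact hJfg
  exact Module.Finite.equiv (LinearEquiv.ofInjective ev hinj).symm

lemma five_to_three (hvnr : ∀ a : R, ∃ b : R, a * b * a = a)
    (fg_idem : ∀ (I : Ideal R), I.FG → ∃ e : R, IsIdempotentElem e ∧ I = Ideal.span {e})
    (h5 : ∀ (C : Type u) [AddCommGroup C] [Module R C],
      (∃ c : C, Submodule.span R ({c} : Set C) = ⊤) → Module.Finite R (C →ₗ[R] R)) :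
    IsBaerRing R := by
  classical
  intro A
  set I : Ideal R := Ideal.span A with hI
  set c : R ⧸ I := Submodule.Quotient.mk 1 with hcdef
  have hcyc : ∃ c' : R ⧸ I, Submodule.span R ({c'} : Set (R ⧸ I)) = ⊤ := by
    refine ⟨c, ?_⟩
    rw [eq_top_iff]
    rintro x -
    obtain ⟨r, rfl⟩ := Submodule.Quotient.mk_surjective I x
    rw [Submodule.mem_span_singleton]
    exact ⟨r, by rw [hcdef, ← Submodule.Quotient.mk_smul, smul_eq_mul, mul_one]⟩
  haveI := h5 (R ⧸ I) hcyc
  set ev : ((R ⧸ I) →ₗ[R] R) →ₗ[R] R := LinearMap.applyₗ c with hev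
  have hKfg : (LinearMap.range ev).FG := by
    rw [LinearMap.range_eq_map]
    exact Submodule.FG.map ev (Module.Finite.iff_fg.mp inferInstance)
  obtain ⟨e, he, hKe⟩ := fg_idem _ hKfg
  refine ⟨e, he, ?_⟩
  ext r
  simp only [Set.mem_setOf_eq, SetLike.mem_coe]
  rw [← hKe]
  constructor
  · intro hr
    have hle : I ≤ LinearMap.ker (LinearMap.toSpanSingleton R R r) := by
      rw [hI, Ideal.span_le]
      intro a ha
      rw [SetLike.mem_coe, LinearMap.mem_ker]
      show a • r = 0
      rw [smul_eq_mul, mul_comm]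
      exact hr a ha
    set g : (R ⧸ I) →ₗ[R] R := Submodule.liftQ I _ hle with hg
    refine ⟨g, ?_⟩
    show g c = r
    rw [hcdef]
    show g (Submodule.Quotient.mk 1) = r
    rw [hg, Submodule.liftQ_apply]
    show (1 : R) • r = r
    rw [one_smul]
  · rintro ⟨g, rfl⟩
    intro a ha
    have hma : (Submodule.Quotient.mk a : R ⧸ I) = 0 :=
      (Submodule.Quotient.mk_eq_zero I).mpr (Ideal.subset_span ha)
    have : a • (ev g) = 0 := by
      show a • g c = 0
      rw [← map_smul, hcdef, ← Submodule.Quotient.mk_smul, smul_eq_mul, mul_one, hma, map_zero]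
    rw [smul_eq_mul] at this
    rw [mul_comm]
    exact this

end AuxHelpers

/-- for a commutative von Neumann regular ring `R` the following are equivalent:
(1) every product of singly projective modules is singly projective; (2) `R^R` is singly
projective; (3) `R` is a Baer ring; (4) the intersection of every family of finitely
generated ideals is finitely generated; (5) `Hom_R(C, R)` is finitely generated for every
cyclic module `C`; (6) `Spec R` is extremally disconnected. -/
theorem vonNeumannRegular_baer_tfae (R : Type u) [CommRing R]
    (hvnr : ∀ a : R, ∃ b : R, a * b * a = a) :
    List.TFAE
      [∀ (ι : Type u) (M : ι → Type u) [∀ i, AddCommGroup (M i)] [∀ i, Module R (M i)],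
        (∀ i, SinglyProjective R (M i)) → SinglyProjective R (∀ i, M i),
       SinglyProjective R (R → R),
       IsBaerRing R,
       ∀ (ι : Type u) (I : ι → Ideal R), (∀ i, (I i).FG) → (⨅ i, I i).FG,
       ∀ (C : Type u) [AddCommGroup C] [Module R C],
        (∃ c : C, Submodule.span R ({c} : Set C) = ⊤) → Module.Finite R (C →ₗ[R] R),
       ExtremallyDisconnected (PrimeSpectrum R)] := by
  classical
  have hred : IsReduced R := vnr_isReduced hvnr
  tfae_have 1 → 2 := by
    intro h1
    have hR : SinglyProjective R R := by
      intro x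
      obtain ⟨e, he, hx⟩ := ann_elem hvnr x
      exact factor_of_idem x he (fun r => by rw [smul_eq_mul]; exact hx r)
    exact h1 R (fun _ => R) (fun _ => hR)
  tfae_have 2 → 3 := by
    intro h2 A
    set x : R → R := fun s => if s ∈ A then s else 0 with hxdef
    obtain ⟨e, he, hx⟩ := idem_of_factor hvnr (ann_elem hvnr)
      (fun s ε h => prod_idem s ε h) x (h2 x)
    refine ⟨e, he, ?_⟩
    ext r
    simp only [Set.mem_setOf_eq, SetLike.mem_coe]
    rw [← hx r]
    constructor
    · intro h
      funext s
      rw [Pi.smul_apply, smul_eq_mul, Pi.zero_apply, hxdef]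
      by_cases hs : s ∈ A
      · simp only [if_pos hs]
        exact h s hs
      · simp only [if_neg hs, mul_zero]
    · intro h a ha
      have := congrFun h a
      rw [Pi.smul_apply, smul_eq_mul, Pi.zero_apply, hxdef] at this
      simpa only [if_pos ha] using this
  tfae_have 3 → 1 := by
    intro h3 ι M _ _ hM x
    have hD : ∀ i, ∃ e : R, IsIdempotentElem e ∧ ∀ r : R, r • x i = 0 ↔ r ∈ Ideal.span {e} :=
      fun i => idem_of_factor hvnr (ann_elem hvnr) (fun s ε h => prod_idem s ε h)
        (x i) (hM i (x i))
    choose f hfidem hfr using hD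
    obtain ⟨e, he, hiff⟩ := baer_iInf h3 f
    apply factor_of_idem x he
    intro r
    rw [← hiff r]
    constructor
    · intro h i
      rw [← idem_mem_span_iff (hfidem i) r, ← hfr i r]
      have := congrFun h i
      rwa [Pi.smul_apply, Pi.zero_apply] at this
    · intro h
      funext i
      rw [Pi.smul_apply, Pi.zero_apply]
      rw [hfr i r, idem_mem_span_iff (hfidem i) r]
      exact h i
  tfae_have 3 → 4 := by
    intro h3 ι I hI
    have hfi : ∀ i, ∃ f : R, IsIdempotentElem f ∧ I i = Ideal.span {f} :=
      fun i => fg_idem hvnr (I i) (hI i)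
    choose f hfidem hfI using hfi
    obtain ⟨e, he, hiff⟩ := baer_iInf h3 f
    have heq : ⨅ i, I i = Ideal.span {e} := by
      ext r
      rw [Submodule.mem_iInf, ← hiff r]
      constructor
      · intro h i
        rw [← idem_mem_span_iff (hfidem i) r, ← hfI i]
        exact h i
      · intro h i
        rw [hfI i, idem_mem_span_iff (hfidem i) r]
        exact h i
    rw [heq]
    exact ⟨{e}, by simp⟩
  tfae_have 4 → 5 := by
    intro h4 C _ _ hcyc
    exact four_to_five (ann_elem hvnr) h4 C hcyc
  tfae_have 5 → 3 := fun h5 => five_to_three hvnr (fg_idem hvnr) h5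
  tfae_have 3 → 6 := fun h3 => baer_to_ed hvnr hred h3
  tfae_have 6 → 3 := fun h6 => ed_to_baer hvnr hred h6
  tfae_finish
end

section
/- Let R be a valuation ring, let M be a flat R-module and let E be an injective hull of M. Then E is a flat R-module. -/
universe u v

open TensorProduct LinearMap

section Aux

variable {R : Type u} [CommRing R]

/-- In a ring whose ideals are totally ordered, every finitely generated ideal is principal. -/
lemma fg_principal (hval : ∀ I J : Ideal R, I ≤ J ∨ J ≤ I) (I : Ideal R) (hI : I.FG) :
    ∃ r : R, I = Ideal.span {r} := by
  obtain ⟨s, rfl⟩ := hI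
  classical
  induction s using Finset.induction_on with
  | empty => exact ⟨0, by simp [Ideal.span_singleton_eq_bot.mpr rfl]⟩
  | @insert a s _ ih =>
    obtain ⟨r, hr⟩ := ih
    push_cast [Finset.coe_insert]
    rw [show (insert a (↑s : Set R)) = {a} ∪ ↑s from rfl, Ideal.span_union, hr]
    rcases hval (Ideal.span {a}) (Ideal.span {r}) with h | h
    · exact ⟨r, by rw [sup_eq_right.mpr h]⟩
    · exact ⟨a, by rw [sup_eq_left.mpr h]⟩

/-- Elementwise consequence of flatness: a relation `c • y = 0` in a flat module factors
through the annihilator of `c`. -/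
lemma flat_elementwise (hval : ∀ I J : Ideal R, I ≤ J ∨ J ≤ I)
    {N : Type v} [AddCommGroup N] [Module R N] [Module.Flat R N]
    (c : R) (y : N) (hcy : c • y = 0) :
    ∃ (b : R) (m : N), c * b = 0 ∧ y = b • m := by
  classical
  -- the ideal `span {c}` and the annihilator of `c`
  set I : Ideal R := Ideal.span {c} with hIdef
  have hcmem : c ∈ I := Ideal.subset_span rfl
  set A : Ideal R := LinearMap.ker (LinearMap.toSpanSingleton R R c) with hAdef
  have hmemA : ∀ t : R, t ∈ A ↔ t * c = 0 := by
    intro t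
    simp [hAdef, LinearMap.mem_ker, LinearMap.toSpanSingleton_apply, smul_eq_mul]
  -- the surjection `φ : R → span {c}` and the inclusion `ι : A → R`
  set φ : R →ₗ[R] I := LinearMap.toSpanSingleton R I ⟨c, hcmem⟩ with hφdef
  have hφ : ∀ t : R, (φ t : R) = t * c := fun t => by
    simp [hφdef, LinearMap.toSpanSingleton_apply, smul_eq_mul]
  have hφsurj : Function.Surjective φ := by
    rintro ⟨w, hw⟩
    obtain ⟨t, ht⟩ := Ideal.mem_span_singleton'.mp hw
    exact ⟨t, Subtype.ext (by rw [hφ t, ht])⟩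
  have hexact : Function.Exact (A.subtype) φ := by
    rw [LinearMap.exact_iff]
    ext t
    simp only [LinearMap.mem_ker, Submodule.range_subtype]
    constructor
    · intro h
      rw [hmemA]
      have := congrArg (fun w : I => (w : R)) h
      simpa [hφ t] using this
    · intro h
      apply Subtype.ext
      simpa [hφ t] using (hmemA t).mp h
  -- `⟨c⟩ ⊗ y = 0` in `I ⊗ N` by flatness
  have hinj : Function.Injective (rTensor N I.subtype) :=
    (Module.Flat.iff_rTensor_injective (R := R) (M := N)).mp ‹Module.Flat R N›
      (by rw [hIdef]; exact ⟨{c}, by simp⟩)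
  have hc0 : (⟨c, hcmem⟩ ⊗ₜ[R] y : I ⊗[R] N) = 0 := by
    apply hinj
    rw [map_zero, rTensor_tmul]
    have : (I.subtype ⟨c, hcmem⟩) ⊗ₜ[R] y = (1 : R) ⊗ₜ[R] (c • y) := by
      rw [tmul_smul]
      rw [show (I.subtype ⟨c, hcmem⟩) = c from rfl]
      rw [smul_tmul', smul_eq_mul, mul_one]
    rw [this, hcy, tmul_zero]
  -- use right exactness to pull `1 ⊗ y` back to `A ⊗ N`
  have hex2 := rTensor_exact (f := A.subtype) (g := φ) N hexact hφsurj
  have h10 : (rTensor N φ) ((1 : R) ⊗ₜ[R] y) = 0 := by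
    rw [rTensor_tmul]
    have : φ 1 = ⟨c, hcmem⟩ := Subtype.ext (by rw [hφ 1, one_mul])
    rw [this, hc0]
  obtain ⟨ξ, hξ⟩ := (hex2 _).mp h10
  -- analyze `ξ : A ⊗ N`
  have key : ∀ ξ : (↥A) ⊗[R] N, ∃ (b : R) (m : N),
      c * b = 0 ∧ (TensorProduct.lid R N) (rTensor N A.subtype ξ) = b • m := by
    intro ξ
    induction ξ with
    | zero => exact ⟨0, 0, by simp, by simp⟩
    | tmul bb m =>
      obtain ⟨b, hb⟩ := bb
      refine ⟨b, m, ?_, ?_⟩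
      · rw [mul_comm]; exact (hmemA b).mp hb
      · simp [rTensor_tmul, TensorProduct.lid_tmul]
    | add ξ₁ ξ₂ ih₁ ih₂ =>
      obtain ⟨b₁, m₁, hb₁, hv₁⟩ := ih₁
      obtain ⟨b₂, m₂, hb₂, hv₂⟩ := ih₂
      rcases hval (Ideal.span {b₁}) (Ideal.span {b₂}) with h | h
      · obtain ⟨t, ht⟩ := Ideal.mem_span_singleton.mp (h (Ideal.subset_span rfl))
        refine ⟨b₂, t • m₁ + m₂, hb₂, ?_⟩
        rw [map_add, map_add, hv₁, hv₂, ht]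
        rw [smul_add, mul_smul]
      · obtain ⟨t, ht⟩ := Ideal.mem_span_singleton.mp (h (Ideal.subset_span rfl))
        refine ⟨b₁, m₁ + t • m₂, hb₁, ?_⟩
        rw [map_add, map_add, hv₁, hv₂, ht]
        rw [smul_add, mul_smul]
  obtain ⟨b, m, hcb, hbm⟩ := key ξ
  refine ⟨b, m, hcb, ?_⟩
  rw [← hbm, hξ]
  simp [TensorProduct.lid_tmul]

variable {E : Type v} [AddCommGroup E] [Module R E]

/-- Divisibility in an injective module: if whenever `t` kills all of `b • E` it also kills `z`,
then `z` is divisible by `b`.  We use the `Type v` module `E → E` to avoid universe issues. -/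
lemma divide_of_injective (hinj : Module.Injective R E) (b : R) (z : E)
    (H : ∀ t : R, (∀ v : E, t • (b • v) = 0) → t • z = 0) :
    ∃ e : E, z = b • e := by
  classical
  set V₀ : E → E := fun v => b • v with hV₀def
  -- key well-definedness
  have key : ∀ t t' : R, t • V₀ = t' • V₀ → t • z = t' • z := by
    intro t t' h
    have h2 : (t - t') • V₀ = 0 := by rw [sub_smul, h, sub_self]
    have h3 : ∀ v : E, (t - t') • (b • v) = 0 := by
      intro v
      have := congrFun h2 v
      simpa using this
    have h4 := H (t - t') h3
    rw [sub_smul, sub_eq_zero] at h4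
    exact h4
  set X : Submodule R (E → E) := Submodule.span R {V₀} with hXdef
  have hmem : ∀ ξ : X, ∃ a : R, a • V₀ = (ξ : E → E) := fun ξ =>
    Submodule.mem_span_singleton.mp ξ.2
  set coef : X → R := fun ξ => Classical.choose (hmem ξ) with hcoefdef
  have hcoef : ∀ ξ : X, coef ξ • V₀ = (ξ : E → E) := fun ξ =>
    Classical.choose_spec (hmem ξ)
  set g : X →ₗ[R] E :=
    { toFun := fun ξ => coef ξ • z
      map_add' := by
        intro ξ₁ ξ₂
        have h1 : coef (ξ₁ + ξ₂) • V₀ = (coef ξ₁ + coef ξ₂) • V₀ := by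
          rw [hcoef, add_smul, hcoef, hcoef]
          rfl
        show coef (ξ₁ + ξ₂) • z = coef ξ₁ • z + coef ξ₂ • z
        rw [key _ _ h1, add_smul]
      map_smul' := by
        intro a ξ
        have h1 : coef (a • ξ) • V₀ = (a * coef ξ) • V₀ := by
          rw [hcoef, mul_smul, hcoef]
          rfl
        show coef (a • ξ) • z = (RingHom.id R) a • (coef ξ • z)
        rw [key _ _ h1, mul_smul]
        rfl } with hgdef
  obtain ⟨h, hh⟩ := hinj.out X.subtype X.injective_subtype g
  set ξ₀ : X := ⟨V₀, Submodule.mem_span_singleton_self V₀⟩ with hξ₀def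
  have hco : coef ξ₀ • V₀ = (1 : R) • V₀ := by rw [hcoef, one_smul]
  have hz : h V₀ = z := by
    have := hh ξ₀
    simp only [Submodule.coe_subtype, hgdef, LinearMap.coe_mk, AddHom.coe_mk] at this
    rw [key _ _ hco, one_smul] at this
    exact this
  refine ⟨h (fun v => v), ?_⟩
  have hVb : V₀ = b • (fun v => v : E → E) := by
    funext v
    simp [hV₀def]
  rw [← hz, hVb, map_smul]

/-- A module over a chain ring is flat as soon as every elementwise relation
`r • x = 0` factors through the annihilator of `r`. -/
lemma flat_of_pointwise (hval : ∀ I J : Ideal R, I ≤ J ∨ J ≤ I)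
    (h : ∀ (r : R) (x : E), r • x = 0 → ∃ (a : R) (e : E), r * a = 0 ∧ x = a • e) :
    Module.Flat R E := by
  rw [Module.Flat.iff_rTensor_injective]
  intro I hIfg
  obtain ⟨r, rfl⟩ := fg_principal hval I hIfg
  set I : Ideal R := Ideal.span {r} with hIdef
  have hrmem : r ∈ I := Ideal.subset_span rfl
  rw [← LinearMap.ker_eq_bot]
  rw [eq_bot_iff]
  intro ζ hζ
  rw [LinearMap.mem_ker] at hζ
  -- every element of I ⊗ E has the form ⟨r⟩ ⊗ x
  have repr : ∀ ζ : (↥I) ⊗[R] E, ∃ x : E, ζ = (⟨r, hrmem⟩ : ↥I) ⊗ₜ[R] x := by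
    intro ζ
    induction ζ with
    | zero => exact ⟨0, by rw [tmul_zero]⟩
    | tmul w v =>
      obtain ⟨w, hw⟩ := w
      obtain ⟨a, ha⟩ := Ideal.mem_span_singleton'.mp hw
      refine ⟨a • v, ?_⟩
      have : (⟨w, hw⟩ : ↥I) = a • (⟨r, hrmem⟩ : ↥I) := by
        apply Subtype.ext
        simp [← ha, smul_eq_mul]
      rw [this, smul_tmul]
    | add ζ₁ ζ₂ ih₁ ih₂ =>
      obtain ⟨x₁, rfl⟩ := ih₁
      obtain ⟨x₂, rfl⟩ := ih₂
      exact ⟨x₁ + x₂, by rw [tmul_add]⟩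
  obtain ⟨x, rfl⟩ := repr ζ
  -- from `hζ` deduce `r • x = 0`
  have hrx : r • x = 0 := by
    have h1 : (rTensor E I.subtype) ((⟨r, hrmem⟩ : ↥I) ⊗ₜ[R] x) = r ⊗ₜ[R] x := by
      rw [rTensor_tmul]; rfl
    have h2 : (r : R) ⊗ₜ[R] x = 0 := by rw [← h1, hζ]
    have h3 := congrArg (TensorProduct.lid R E) h2
    simpa using h3
  obtain ⟨a, e, hra, rfl⟩ := h r x hrx
  rw [Submodule.mem_bot]
  have : (⟨r, hrmem⟩ : ↥I) ⊗ₜ[R] (a • e) = (a • (⟨r, hrmem⟩ : ↥I)) ⊗ₜ[R] e := by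
    rw [smul_tmul]
  rw [this]
  have hz : a • (⟨r, hrmem⟩ : ↥I) = 0 := by
    apply Subtype.ext
    simp [smul_eq_mul, mul_comm a r, hra]
  rw [hz, zero_tmul]

end Aux

/-- let `R` be a valuation ring (a commutative ring whose ideals are totally
ordered by inclusion), `M` a flat submodule of a module `E` which is an injective hull of `M`
(`E` is injective and `M` is essential in `E`).  Then `E` is flat. -/
theorem injectiveHull_flat_of_flat (R : Type u) [CommRing R]
    (hval : ∀ I J : Ideal R, I ≤ J ∨ J ≤ I)
    (E : Type v) [AddCommGroup E] [Module R E] (hinj : Module.Injective R E)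
    (M : Submodule R E) (hflat : Module.Flat R M)
    (hess : ∀ K : Submodule R E, K ⊓ M = ⊥ → K = ⊥) :
    Module.Flat R E := by
  apply flat_of_pointwise hval
  intro r x hrx
  by_cases hr : r = 0
  · exact ⟨1, x, by rw [hr, zero_mul], (one_smul R x).symm⟩
  by_contra hbad
  push_neg at hbad
  -- hbad : ∀ a e, r * a = 0 → x ≠ a • e
  have hx0 : x ≠ 0 := by
    intro h0
    exact hbad 0 0 (mul_zero r) (by rw [h0, zero_smul])
  -- essentiality: find s with s • x ∈ M, s • x ≠ 0
  have hs : ∃ s : R, s • x ∈ M ∧ s • x ≠ 0 := by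
    by_contra hns
    push_neg at hns
    apply hx0
    have hKbot : Submodule.span R {x} ⊓ M = ⊥ := by
      rw [eq_bot_iff]
      rintro w ⟨hw1, hw2⟩
      obtain ⟨s, rfl⟩ := Submodule.mem_span_singleton.mp hw1
      rw [Submodule.mem_bot]
      exact hns s hw2
    have := hess _ hKbot
    have hx : x ∈ Submodule.span R {x} := Submodule.mem_span_singleton_self x
    rw [this, Submodule.mem_bot] at hx
    exact hx
  obtain ⟨s, hsM, hsx0⟩ := hs
  -- `r = s * c`
  have hrs : r ∈ Ideal.span {s} := by
    rcases hval (Ideal.span {r}) (Ideal.span {s}) with h | h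
    · exact h (Ideal.subset_span rfl)
    · exfalso
      obtain ⟨d, rfl⟩ := Ideal.mem_span_singleton.mp (h (Ideal.subset_span rfl))
      apply hsx0
      rw [mul_comm, mul_smul, hrx, smul_zero]
  obtain ⟨c, hc⟩ := Ideal.mem_span_singleton.mp hrs
  -- the element `y = s • x` of `M` is killed by `c`
  set y : ↥M := ⟨s • x, hsM⟩ with hydef
  have hcy : c • y = 0 := by
    apply Subtype.ext
    show c • (s • x) = 0
    rw [smul_smul, mul_comm, ← hc, hrx]
  obtain ⟨b, m, hcb, hym⟩ := flat_elementwise hval c y hcy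
  have hyE : s • x = b • (m : E) := by
    have := congrArg (fun w : ↥M => (w : E)) hym
    simpa using this
  -- `b = s * b'`
  have hbs : b ∈ Ideal.span {s} := by
    rcases hval (Ideal.span {b}) (Ideal.span {s}) with h | h
    · exact h (Ideal.subset_span rfl)
    · exfalso
      obtain ⟨d, hd⟩ := Ideal.mem_span_singleton.mp (h (Ideal.subset_span rfl))
      apply hr
      rw [hc, hd]
      calc b * d * c = c * b * d := by ring
      _ = 0 := by rw [hcb, zero_mul]
  obtain ⟨b', hb'⟩ := Ideal.mem_span_singleton.mp hbs
  have hrb' : r * b' = 0 := by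
    rw [hc]
    calc s * c * b' = c * (s * b') := by ring
    _ = c * b := by rw [hb']
    _ = 0 := hcb
  -- `z = x - b' • m` is killed by `s`
  set z : E := x - b' • (m : E) with hzdef
  have hsz : s • z = 0 := by
    rw [hzdef, smul_sub, hyE, hb', smul_smul, sub_self]
  -- divisibility hypothesis for `z` by `b'`
  have Hdiv : ∀ t : R, (∀ v : E, t • (b' • v) = 0) → t • z = 0 := by
    intro t ht
    by_contra htz
    -- essentiality at t • z
    have hs2 : ∃ σ : R, σ • (t • z) ∈ M ∧ σ • (t • z) ≠ 0 := by
      by_contra hns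
      push_neg at hns
      apply htz
      have hKbot : Submodule.span R {t • z} ⊓ M = ⊥ := by
        rw [eq_bot_iff]
        rintro w ⟨hw1, hw2⟩
        obtain ⟨σ, rfl⟩ := Submodule.mem_span_singleton.mp hw1
        rw [Submodule.mem_bot]
        exact hns σ hw2
      have := hess _ hKbot
      have hx : t • z ∈ Submodule.span R {t • z} := Submodule.mem_span_singleton_self _
      rw [this, Submodule.mem_bot] at hx
      exact hx
    obtain ⟨σ, _, hσ0⟩ := hs2
    rcases hval (Ideal.span {σ * t}) (Ideal.span {s}) with h | h
    · -- σ * t = s * λ' : contradiction with σ • (t • z) ≠ 0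
      obtain ⟨lam, hlam⟩ := Ideal.mem_span_singleton.mp (h (Ideal.subset_span rfl))
      apply hσ0
      rw [smul_smul, hlam, mul_comm, mul_smul, hsz, smul_zero]
    · -- s = (σ * t) * λ : then b • m = 0, contradicting s • x ≠ 0
      obtain ⟨lam, hlam⟩ := Ideal.mem_span_singleton.mp (h (Ideal.subset_span rfl))
      apply hsx0
      rw [hyE, hb', hlam]
      calc (σ * t * lam * b') • (m : E) = (σ * lam) • (t • (b' • (m : E))) := by
            rw [smul_smul, smul_smul]
            congr 1
            ring
      _ = 0 := by rw [ht, smul_zero]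
  obtain ⟨e, he⟩ := divide_of_injective hinj b' z Hdiv
  -- conclude: x = b' • (e + m) is a good decomposition, contradiction
  apply hbad b' (e + (m : E)) hrb'
  rw [smul_add, ← he, hzdef]
  abel
end

section
/- Let R be a valuation ring with maximal ideal P and let M be a flat R-module. Then M contains a pure free submodule N such that the inclusion induces an isomorphism N/P·N ≅ M/P·M. -/
universe u v

open scoped TensorProduct

/-- A submodule `N` of an `R`-module `M` is pure if for every `R`-module `B` the induced map
`B ⊗ N → B ⊗ M` is injective. -/
def Submodule.IsPureSubmodule {R : Type u} [CommRing R] {M : Type v} [AddCommGroup M]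
    [Module R M] (N : Submodule R M) : Prop :=
  ∀ (B : Type v) [AddCommGroup B] [Module R B],
    Function.Injective (LinearMap.lTensor B N.subtype)

section Vanishing

open DirectSum LinearMap Function Submodule Finsupp TensorProduct

universe w w'

variable {R : Type u} [CommRing R]
variable {M : Type v} [AddCommGroup M] [Module R M]
variable {N : Type w'} [AddCommGroup N] [Module R N]
variable {ι : Type w} [Fintype ι]

/-- Universe-polymorphic version of `TensorProduct.vanishesTrivially_of_sum_tmul_eq_zero`. -/
theorem tp_vanish₀ (m : ι → M) (n : ι → N) (hm : Submodule.span R (Set.range m) = ⊤)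
    (hmn : ∑ i, m i ⊗ₜ n i = (0 : M ⊗[R] N)) :
    ∃ (κ : Type (max u w' w)) (_ : Fintype κ) (a : ι → κ → R) (y : κ → N),
      (∀ i, n i = ∑ j, a i j • y j) ∧ ∀ j, ∑ i, a i j • m i = 0 := by
  set G : (ι →₀ R) →ₗ[R] M := Finsupp.linearCombination R m with hG
  have G_basis_eq (i : ι) : G (Finsupp.single i 1) = m i := by simp [hG]
  have G_surjective : Surjective G := by
    apply LinearMap.range_eq_top.mp
    apply top_le_iff.mp
    rw [← hm]
    apply Submodule.span_le.mpr
    rintro _ ⟨i, rfl⟩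
    use Finsupp.single i 1, G_basis_eq i
  set en : (ι →₀ R) ⊗[R] N := ∑ i, Finsupp.single i 1 ⊗ₜ n i with hen
  have en_mem_ker : en ∈ ker (rTensor N G) := by simp [hen, G_basis_eq, hmn]
  have exact_ker_subtype : Exact (ker G).subtype G := G.exact_subtype_ker_map
  have exact_rTensor_ker_subtype : Exact (rTensor N (ker G).subtype) (rTensor N G) :=
    rTensor_exact (M := ↥(ker G)) N exact_ker_subtype G_surjective
  have en_mem_range : en ∈ range (rTensor N (ker G).subtype) :=
    exact_rTensor_ker_subtype.linearMap_ker_eq ▸ en_mem_ker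
  obtain ⟨kn, hkn⟩ := en_mem_range
  obtain ⟨ma, rfl : kn = ∑ kj ∈ ma, kj.1 ⊗ₜ[R] kj.2⟩ := exists_finset kn
  refine ⟨↑↑ma, FinsetCoe.fintype ma, ?_⟩
  use fun i ⟨⟨kj, _⟩, _⟩ ↦ (kj : ι →₀ R) i
  use fun ⟨⟨_, yj⟩, _⟩ ↦ yj
  constructor
  · intro i
    classical
    apply_fun finsuppScalarLeft R N ι at hkn
    apply_fun (· i) at hkn
    symm at hkn
    simp only [map_sum, finsuppScalarLeft_apply_tmul, zero_smul, Finsupp.single_zero,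
      Finsupp.sum_single_index, one_smul, Finsupp.finset_sum_apply, Finsupp.single_apply,
      Finset.sum_ite_eq', Finset.mem_univ, ↓reduceIte, rTensor_tmul, coe_subtype, Finsupp.sum_apply,
      Finsupp.sum_ite_eq', Finsupp.mem_support_iff, ne_eq, ite_not, en] at hkn
    simp only [Finset.univ_eq_attach, Finset.sum_attach ma (fun x ↦ (x.1 : ι →₀ R) i • x.2)]
    convert hkn using 2 with x _
    split
    · next h'x => rw [h'x, zero_smul]
    · rfl
  · rintro ⟨⟨⟨k, hk⟩, _⟩, _⟩
    simpa only [hG, linearCombination_apply, zero_smul, implies_true, Finsupp.sum_fintype] using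
      mem_ker.mp hk

/-- Universe-polymorphic version of
`TensorProduct.vanishesTrivially_of_sum_tmul_eq_zero_of_rTensor_injective`, with the index
type of the factorization converted to `Fin n`. -/
theorem tp_vanish (m : ι → M) (n : ι → N)
    (hinj : Injective (rTensor N (span R (Set.range m)).subtype))
    (hmn : ∑ i, m i ⊗ₜ n i = (0 : M ⊗[R] N)) :
    ∃ (d : ℕ) (a : ι → Fin d → R) (y : Fin d → N),
      (∀ i, n i = ∑ j, a i j • y j) ∧ ∀ j, ∑ i, a i j • m i = 0 := by
  have mem_M' i : m i ∈ span R (Set.range m) := subset_span ⟨i, rfl⟩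
  set m' : ι → span R (Set.range m) := Subtype.coind m mem_M' with m'_eq
  have hm' : span R (Set.range m') = ⊤ := by
    apply map_injective_of_injective (injective_subtype (span R (Set.range m)))
    rw [Submodule.map_span, Submodule.map_top, range_subtype, coe_subtype, ← Set.range_comp]
    rfl
  have hm'n : ∑ i, m' i ⊗ₜ n i = (0 : span R (Set.range m) ⊗[R] N) := by
    apply hinj
    simp only [m'_eq, map_sum, rTensor_tmul, coe_subtype, Subtype.coind_coe, _root_.map_zero, hmn]
  obtain ⟨κ, _, a, y, h₁, h₂⟩ := tp_vanish₀ m' n hm' hm'n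
  obtain ⟨e⟩ : Nonempty (κ ≃ Fin (Fintype.card κ)) := ⟨Fintype.equivFin κ⟩
  refine ⟨Fintype.card κ, fun i j => a i (e.symm j), fun j => y (e.symm j), ?_, ?_⟩
  · intro i
    rw [h₁ i]
    exact (e.symm.sum_comp (fun j => a i j • y j)).symm
  · intro j
    have h3 := h₂ (e.symm j)
    have h4 : (∑ i, a i (e.symm j) • m' i : span R (Set.range m)) = 0 := h3
    have := congrArg (Submodule.subtype _) h4
    simpa [map_sum, m'_eq] using this

end Vanishing

section KeyLemma

open IsLocalRing

universe w

/-- Key lemma: if the `x i` are "linearly independent modulo `P`", then any vanishing sum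
`∑ bᵢ ⊗ xᵢ = 0` in `B ⊗ M` (with `M` flat) forces all `bᵢ = 0`. -/
theorem coeffs_eq_zero {R : Type u} [CommRing R] [IsLocalRing R] {M : Type v}
    [AddCommGroup M] [Module R M] [Module.Flat R M] {ι : Type v} (x : ι → M)
    (hx : ∀ (s : Finset ι) (r : ι → R),
      (∑ i ∈ s, r i • x i) ∈ (maximalIdeal R • ⊤ : Submodule R M) →
      ∀ i ∈ s, r i ∈ maximalIdeal R)
    (B : Type w) [AddCommGroup B] [Module R B] (s : Finset ι) (b : ι → B)
    (hb : ∑ i ∈ s, b i ⊗ₜ[R] x i = (0 : B ⊗[R] M)) : ∀ i ∈ s, b i = 0 := by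
  classical
  set P := maximalIdeal R with hPdef
  have hsum : ∑ i : ↥s, b ↑i ⊗ₜ[R] x ↑i = (0 : B ⊗[R] M) := by
    rw [Finset.sum_coe_sort s (fun i => b i ⊗ₜ[R] x i)]; exact hb
  have hinj : Function.Injective
      (LinearMap.rTensor M (Submodule.span R (Set.range (fun i : ↥s => b ↑i))).subtype) :=
    Module.Flat.rTensor_preserves_injective_linearMap _ (Submodule.injective_subtype _)
  obtain ⟨d, a, y, hxy, hab⟩ := tp_vanish (fun i : ↥s => b ↑i) (fun i : ↥s => x ↑i) hinj hsum
  let k := R ⧸ P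
  letI : Field k := Ideal.Quotient.field P
  let π : R →+* k := Ideal.Quotient.mk P
  -- rows of `a` are linearly independent modulo `P`
  have hrow : ∀ c : ↥s → R, (∀ j, ∑ i, c i * a i j ∈ P) → ∀ i, c i ∈ P := by
    intro c hc i
    have hmem : (∑ i : ↥s, c i • x ↑i) ∈ (P • ⊤ : Submodule R M) := by
      have hcalc : ∑ i : ↥s, c i • x ↑i = ∑ j, (∑ i : ↥s, c i * a i j) • y j := by
        calc ∑ i : ↥s, c i • x ↑i = ∑ i : ↥s, ∑ j, (c i * a i j) • y j := by
              refine Finset.sum_congr rfl fun i _ => ?_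
              rw [hxy i, Finset.smul_sum]
              exact Finset.sum_congr rfl fun j _ => (smul_smul _ _ _)
          _ = ∑ j, (∑ i : ↥s, c i * a i j) • y j := by
              rw [Finset.sum_comm]
              exact Finset.sum_congr rfl fun j _ => (Finset.sum_smul).symm
      rw [hcalc]
      exact Submodule.sum_mem _ fun j _ =>
        Submodule.smul_mem_smul (hc j) Submodule.mem_top
    have hsum2 : ∑ i₀ ∈ s, (if h : i₀ ∈ s then c ⟨i₀, h⟩ else 0) • x i₀
        = ∑ i : ↥s, c i • x ↑i := by
      rw [← Finset.sum_coe_sort s (fun i₀ => (if h : i₀ ∈ s then c ⟨i₀, h⟩ else 0) • x i₀)]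
      exact Finset.sum_congr rfl fun i _ => by rw [dif_pos i.2]
    have := hx s (fun i₀ => if h : i₀ ∈ s then c ⟨i₀, h⟩ else 0) (by rw [hsum2]; exact hmem)
      ↑i i.2
    simpa [i.2] using this
  -- the matrix of `a` modulo `P` gives an injective linear map, hence has a left inverse
  let Abar : Matrix ↥s (Fin d) k := fun i j => π (a i j)
  have hker : LinearMap.ker Abar.vecMulLinear = ⊥ := by
    rw [LinearMap.ker_eq_bot']
    intro cbar hcbar
    choose c hc using fun i => Ideal.Quotient.mk_surjective (cbar i)
    have hcP : ∀ i, c i ∈ P := by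
      apply hrow
      intro j
      rw [← Ideal.Quotient.eq_zero_iff_mem]
      have h0 := congrFun hcbar j
      simp only [Matrix.vecMulLinear_apply, Matrix.vecMul, dotProduct,
        Pi.zero_apply] at h0
      rw [map_sum]
      rw [← h0]
      exact Finset.sum_congr rfl fun i _ => by rw [map_mul, hc]
    funext i
    have := Ideal.Quotient.eq_zero_iff_mem.mpr (hcP i)
    rw [hc i] at this
    simpa using this
  obtain ⟨gbar, hgbar⟩ := Abar.vecMulLinear.exists_leftInverse_of_injective hker
  let Lbar : Matrix ↥s (Fin d) k := fun i j => gbar (Pi.single j 1) i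
  have hLA : ∀ i i' : ↥s, ∑ j, Lbar i j * Abar i' j = if i = i' then 1 else 0 := by
    intro i i'
    have h1 : Abar.vecMulLinear (Pi.single i' 1) = fun j => Abar i' j := by
      funext j
      simp only [Matrix.vecMulLinear_apply, Matrix.vecMul, dotProduct]
      rw [Finset.sum_eq_single i']
      · simp
      · intro i₀ _ hne
        rw [Pi.single_apply, if_neg hne, zero_mul]
      · intro h; exact absurd (Finset.mem_univ i') h
    have h2 : gbar (fun j => Abar i' j) = Pi.single i' 1 := by
      rw [← h1]
      exact congrFun (congrArg (fun f : _ →ₗ[k] _ => ⇑f) hgbar) (Pi.single i' 1)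
    have h3 : (fun j => Abar i' j) = ∑ j, Abar i' j • (Pi.single j 1 : Fin d → k) := by
      funext j'
      rw [Finset.sum_apply]
      rw [Finset.sum_eq_single j']
      · simp
      · intro j₀ _ hne
        rw [Pi.smul_apply, Pi.single_apply, if_neg (Ne.symm hne), smul_zero]
      · intro h; exact absurd (Finset.mem_univ j') h
    calc ∑ j, Lbar i j * Abar i' j = gbar (fun j => Abar i' j) i := by
          rw [h3, map_sum, Finset.sum_apply]
          exact Finset.sum_congr rfl fun j _ => by
            rw [map_smul, Pi.smul_apply, smul_eq_mul, mul_comm]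
      _ = (Pi.single i' 1 : ↥s → k) i := by rw [h2]
      _ = if i = i' then 1 else 0 := by rw [Pi.single_apply]
  -- lift the left inverse to `R` and correct it
  choose l hl using fun i j => Ideal.Quotient.mk_surjective (Lbar i j)
  let C : Matrix ↥s ↥s R := fun i i' => ∑ j, l i j * a i' j
  have hCdet : IsUnit C.det := by
    have h1 : π.mapMatrix C = 1 := by
      ext i i'
      show π (∑ j, l i j * a i' j) = (1 : Matrix ↥s ↥s k) i i'
      rw [map_sum]
      have : ∑ j, π (l i j * a i' j) = ∑ j, Lbar i j * Abar i' j := by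
        exact Finset.sum_congr rfl fun j _ => by rw [map_mul, hl]
      rw [this, hLA, Matrix.one_apply]
    by_contra hu
    have hmem : C.det ∈ P := (IsLocalRing.mem_maximalIdeal _).mpr hu
    have h0 : π C.det = 0 := Ideal.Quotient.eq_zero_iff_mem.mpr hmem
    rw [RingHom.map_det, h1, Matrix.det_one] at h0
    exact one_ne_zero h0
  have hCC : C⁻¹ * C = 1 := Matrix.nonsing_inv_mul C hCdet
  -- final computation
  intro i hi
  suffices h : ∀ i : ↥s, b ↑i = 0 from h ⟨i, hi⟩
  intro i
  have hdelta : ∀ i' : ↥s,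
      ∑ j, (∑ i'', C⁻¹ i i'' * l i'' j) * a i' j = if i = i' then 1 else 0 := by
    intro i'
    have h5 : ∑ j, (∑ i'', C⁻¹ i i'' * l i'' j) * a i' j
        = ∑ i'', C⁻¹ i i'' * C i'' i' := by
      simp only [C, Finset.sum_mul, Finset.mul_sum]
      rw [Finset.sum_comm]
      exact Finset.sum_congr rfl fun i'' _ =>
        Finset.sum_congr rfl fun j _ => by ring
    rw [h5]
    have h6 := congrFun (congrFun hCC i) i'
    rw [Matrix.mul_apply, Matrix.one_apply] at h6
    exact h6
  calc b ↑i = ∑ i' : ↥s, (if i = i' then (1 : R) else 0) • b ↑i' := by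
        simp [ite_smul]
    _ = ∑ i' : ↥s, (∑ j, (∑ i'', C⁻¹ i i'' * l i'' j) * a i' j) • b ↑i' := by
        exact Finset.sum_congr rfl fun i' _ => by rw [hdelta i']
    _ = ∑ j, (∑ i'', C⁻¹ i i'' * l i'' j) • (∑ i' : ↥s, a i' j • b ↑i') := by
        simp only [Finset.sum_smul, Finset.smul_sum, mul_smul]
        exact Finset.sum_comm
    _ = 0 := by
        simp only [hab, smul_zero, Finset.sum_const_zero]

end KeyLemma

/-- let `R` be a valuation ring with maximal ideal `P` and `M` a flat
`R`-module.  Then `M` contains a pure free submodule `N` such that the inclusion induces an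
isomorphism `N/P·N ≅ M/P·M` (the induced map `N → M/P·M` is surjective with kernel `P·N`). -/
theorem flat_contains_pure_free_submodule (R : Type u) [CommRing R] [IsLocalRing R]
    (hval : ∀ I J : Ideal R, I ≤ J ∨ J ≤ I)
    (M : Type v) [AddCommGroup M] [Module R M] (hflat : Module.Flat R M) :
    ∃ N : Submodule R M, N.IsPureSubmodule ∧ Module.Free R N ∧
      Function.Surjective
        ((IsLocalRing.maximalIdeal R • (⊤ : Submodule R M)).mkQ ∘ₗ N.subtype) ∧
      LinearMap.ker ((IsLocalRing.maximalIdeal R • (⊤ : Submodule R M)).mkQ ∘ₗ N.subtype) =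
        IsLocalRing.maximalIdeal R • (⊤ : Submodule R N) := by
  classical
  haveI := hflat
  set P := IsLocalRing.maximalIdeal R with hPdef
  let k := R ⧸ P
  letI : Field k := Ideal.Quotient.field P
  let π : R →+* k := Ideal.Quotient.mk P
  -- the quotient M / P•M as a k-vector space
  let Q := M ⧸ (P • ⊤ : Submodule R M)
  letI : Module k Q := inferInstanceAs (Module (R ⧸ P) (M ⧸ P • (⊤ : Submodule R M)))
  let V := Module.Basis.ofVectorSpace k Q
  set ι := ↑(Module.Basis.ofVectorSpaceIndex k Q) with hι
  -- lift the basis vectors to M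
  choose x hxv using fun i : ι => Submodule.Quotient.mk_surjective
    (P • ⊤ : Submodule R M) (V i)
  -- independence modulo P
  have hindep : ∀ (s : Finset ι) (r : ι → R),
      (∑ i ∈ s, r i • x i) ∈ (P • ⊤ : Submodule R M) → ∀ i ∈ s, r i ∈ P := by
    intro s r hmem i hi
    have h0 : Submodule.Quotient.mk (p := (P • ⊤ : Submodule R M)) (∑ i ∈ s, r i • x i)
        = 0 := (Submodule.Quotient.mk_eq_zero _).mpr hmem
    have h1 : ∑ i ∈ s, (π (r i)) • V i = (0 : Q) := by
      rw [← h0]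
      rw [← Submodule.mkQ_apply, map_sum]
      refine Finset.sum_congr rfl fun i _ => ?_
      rw [Submodule.mkQ_apply, ← hxv i]
      exact Module.Quotient.mk_smul_mk M P (r i) (x i)
    have h2 := linearIndependent_iff'.mp V.linearIndependent s (fun i => π (r i)) h1 i hi
    exact Ideal.Quotient.eq_zero_iff_mem.mp h2
  -- linear independence over R
  have hLI : LinearIndependent R x := by
    rw [linearIndependent_iff']
    intro s g hsum i hi
    have htens : ∑ i ∈ s, g i ⊗ₜ[R] x i = (0 : R ⊗[R] M) := by
      apply (TensorProduct.lid R M).injective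
      rw [map_sum, map_zero]
      rw [← hsum]
      exact Finset.sum_congr rfl fun i _ => TensorProduct.lid_tmul (x i) (g i)
    exact coeffs_eq_zero x hindep R s g htens i hi
  refine ⟨Submodule.span R (Set.range x), ?_, ?_, ?_, ?_⟩
  · -- purity
    intro B _ _
    set N := Submodule.span R (Set.range x) with hN
    let e : Module.Basis ι R ↥N := Module.Basis.span hLI
    let θ : (ι →₀ B) ≃ₗ[R] B ⊗[R] ↥N :=
      (TensorProduct.finsuppScalarRight R R B ι).symm.trans
        (TensorProduct.congr (LinearEquiv.refl R B) e.repr.symm)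
    let χ : (ι →₀ B) →ₗ[R] B ⊗[R] M :=
      (LinearMap.lTensor B N.subtype) ∘ₗ (θ : (ι →₀ B) →ₗ[R] B ⊗[R] ↥N)
    have hχ_single : ∀ (i : ι) (c : B), χ (Finsupp.single i c) = c ⊗ₜ[R] x i := by
      intro i c
      show (LinearMap.lTensor B N.subtype) (θ (Finsupp.single i c)) = c ⊗ₜ[R] x i
      have hθ : θ (Finsupp.single i c) = c ⊗ₜ[R] (e i) := by
        show (TensorProduct.congr (LinearEquiv.refl R B) e.repr.symm)
          ((TensorProduct.finsuppScalarRight R R B ι).symm (Finsupp.single i c))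
          = c ⊗ₜ[R] (e i)
        rw [TensorProduct.finsuppScalarRight_symm_apply_single]
        rw [TensorProduct.congr_tmul]
        rw [LinearEquiv.refl_apply, Module.Basis.repr_symm_single_one]
      rw [hθ]
      rw [LinearMap.lTensor_tmul]
      congr 1
      exact congrArg Subtype.val (Module.Basis.span_apply hLI i)
    have hχ_inj : Function.Injective χ := by
      rw [← LinearMap.ker_eq_bot]
      rw [LinearMap.ker_eq_bot']
      intro φ hφ
      have hrepr : χ φ = ∑ i ∈ φ.support, φ i ⊗ₜ[R] x i := by
        conv_lhs => rw [← Finsupp.sum_single φ]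
        rw [Finsupp.sum, map_sum]
        exact Finset.sum_congr rfl fun i _ => hχ_single i (φ i)
      have hzero : ∑ i ∈ φ.support, φ i ⊗ₜ[R] x i = (0 : B ⊗[R] M) := by
        rw [← hrepr]; exact hφ
      have := coeffs_eq_zero x hindep B φ.support φ hzero
      ext i
      by_cases hi : i ∈ φ.support
      · exact this i hi
      · exact Finsupp.notMem_support_iff.mp hi
    have hcomp : ⇑(LinearMap.lTensor B N.subtype) = ⇑χ ∘ ⇑θ.symm := by
      funext t
      show (LinearMap.lTensor B N.subtype) t
        = (LinearMap.lTensor B N.subtype) (θ (θ.symm t))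
      rw [θ.apply_symm_apply]
    rw [hcomp]
    exact hχ_inj.comp θ.symm.injective
  · -- freeness
    exact Module.Free.of_basis (Module.Basis.span hLI)
  · -- surjectivity
    intro z
    set c : ι →₀ k := V.repr z with hc
    choose r hr using fun i : ι => Ideal.Quotient.mk_surjective (c i)
    have hn : (∑ i ∈ c.support, r i • x i) ∈ Submodule.span R (Set.range x) :=
      Submodule.sum_mem _ fun i _ =>
        Submodule.smul_mem _ _ (Submodule.subset_span ⟨i, rfl⟩)
    refine ⟨⟨∑ i ∈ c.support, r i • x i, hn⟩, ?_⟩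
    show Submodule.mkQ _ (∑ i ∈ c.support, r i • x i) = z
    rw [map_sum]
    have h1 : ∀ i ∈ c.support, (Submodule.mkQ (P • ⊤ : Submodule R M)) (r i • x i)
        = c i • V i := by
      intro i _
      rw [Submodule.mkQ_apply]
      rw [← hr i, ← hxv i]
      exact Module.Quotient.mk_smul_mk M P (r i) (x i)
    rw [Finset.sum_congr rfl h1]
    have := V.linearCombination_repr z
    rw [← this, Finsupp.linearCombination_apply, Finsupp.sum]
  · -- kernel
    set N := Submodule.span R (Set.range x) with hN
    let e : Module.Basis ι R ↥N := Module.Basis.span hLI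
    apply le_antisymm
    · intro n hn
      rw [LinearMap.mem_ker, LinearMap.comp_apply, Submodule.mkQ_apply,
        Submodule.Quotient.mk_eq_zero] at hn
      set c := e.repr n with hcdef
      have h2 : (Finsupp.linearCombination R (⇑e)) c = n := e.linearCombination_repr n
      have h3 : (n : M) = ∑ i ∈ c.support, c i • x i := by
        calc (n : M) = N.subtype ((Finsupp.linearCombination R (⇑e)) c) := by rw [h2]; rfl
          _ = ∑ i ∈ c.support, c i • x i := by
              rw [Finsupp.linearCombination_apply, Finsupp.sum, map_sum]
              refine Finset.sum_congr rfl fun i _ => ?_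
              rw [map_smul]
              congr 1
              exact congrArg Subtype.val (Module.Basis.span_apply hLI i)
      have h4 : ∀ i ∈ c.support, c i ∈ P := hindep c.support c (by rw [← h3]; exact hn)
      have h5 : n = ∑ i ∈ c.support, c i • e i := by
        conv_lhs => rw [← h2]
        rw [Finsupp.linearCombination_apply, Finsupp.sum]
      rw [h5]
      exact Submodule.sum_mem _ fun i hi =>
        Submodule.smul_mem_smul (h4 i hi) Submodule.mem_top
    · rw [Submodule.smul_le]
      intro p hp n _
      rw [LinearMap.mem_ker, LinearMap.comp_apply, Submodule.mkQ_apply]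
      rw [Submodule.Quotient.mk_eq_zero]
      show ((p • n : ↥N) : M) ∈ (P • ⊤ : Submodule R M)
      rw [Submodule.coe_smul]
      exact Submodule.smul_mem_smul hp Submodule.mem_top
end

section
/- Let R be a valuation ring. A non-zero R-module M is singly projective if and only if for each x ∈ M there exists y ∈ M such that the annihilator of y in R is zero and x ∈ R·y. -/
universe u v

/-- In a ring where divisibility is total, every nonempty finite family has a member
dividing all the others. -/
lemma exists_dvd_all_aux {R : Type u} [CommRing R] (hdvd : ∀ a b : R, a ∣ b ∨ b ∣ a)
    {ι : Type v} (f : ι → R) :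
    ∀ s : Finset ι, s.Nonempty → ∃ i₀ ∈ s, ∀ i ∈ s, f i₀ ∣ f i := by
  classical
  intro s
  induction s using Finset.induction_on with
  | empty => intro h; exact absurd h (by simp)
  | @insert j s hj ih =>
    intro _
    rcases s.eq_empty_or_nonempty with rfl | hs
    · exact ⟨j, by simp, by simp⟩
    · obtain ⟨i₀, hi₀, hall⟩ := ih hs
      rcases hdvd (f i₀) (f j) with h | h
      · refine ⟨i₀, Finset.mem_insert_of_mem hi₀, ?_⟩
        intro i hi
        rcases Finset.mem_insert.mp hi with rfl | hi
        · exact h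
        · exact hall i hi
      · refine ⟨j, Finset.mem_insert_self _ _, ?_⟩
        intro i hi
        rcases Finset.mem_insert.mp hi with rfl | hi
        · exact dvd_rfl
        · exact dvd_trans h (hall i hi)

/-- over a valuation ring `R`, a non-zero `R`-module `M` is singly projective if
and only if each `x ∈ M` lies in `R·y` for some `y ∈ M` with zero annihilator. -/
theorem singlyProjective_iff_forall_mem_span_of_annihilator_eq_bot (R : Type u) [CommRing R]
    (hval : ∀ I J : Ideal R, I ≤ J ∨ J ≤ I)
    (M : Type v) [AddCommGroup M] [Module R M] (hM : ∃ x : M, x ≠ 0) :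
    SinglyProjective R M ↔
      ∀ x : M, ∃ y : M, (∀ r : R, r • y = 0 → r = 0) ∧ x ∈ Submodule.span R ({y} : Set M) := by
  have hdvd : ∀ a b : R, a ∣ b ∨ b ∣ a := by
    intro a b
    rcases hval (Ideal.span {a}) (Ideal.span {b}) with h | h
    · right; exact Ideal.mem_span_singleton.mp (h (Ideal.mem_span_singleton_self a))
    · left; exact Ideal.mem_span_singleton.mp (h (Ideal.mem_span_singleton_self b))
  constructor
  · intro hsp
    have key : ∀ x : M, x ≠ 0 →
        ∃ y : M, (∀ r : R, r • y = 0 → r = 0) ∧ x ∈ Submodule.span R ({y} : Set M) := by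
      intro x hx
      obtain ⟨ι, φ, π, hπφ⟩ := hsp x
      set xe : Submodule.span R ({x} : Set M) := ⟨x, Submodule.mem_span_singleton_self x⟩
        with hxe
      set f : ι →₀ R := φ xe with hf
      have hfx : π f = x := hπφ xe
      have hf0 : f ≠ 0 := by
        intro h
        apply hx
        rw [← hfx, h, map_zero]
      have hsupp : f.support.Nonempty := Finsupp.support_nonempty_iff.mpr hf0
      obtain ⟨i₀, hi₀, hmax⟩ := exists_dvd_all_aux hdvd (fun i => f i) f.support hsupp
      set c : R := f i₀ with hc
      have hdvdall : ∀ i : ι, c ∣ f i := by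
        intro i
        by_cases h : i ∈ f.support
        · exact hmax i h
        · rw [Finsupp.notMem_support_iff.mp h]
          exact dvd_zero c
      choose g hg using hdvdall
      set w : ι →₀ R := f.sum (fun i _ => Finsupp.single i (g i)) with hw
      have hcw : c • w = f := by
        rw [hw, Finsupp.smul_sum]
        conv_rhs => rw [← Finsupp.sum_single f]
        apply Finsupp.sum_congr
        intro i hi
        rw [Finsupp.smul_single, smul_eq_mul, ← hg i]
      set y : M := π w with hy
      have hxy : x = c • y := by
        have h1 : π (c • w) = c • y := by rw [map_smul]
        rw [hcw, hfx] at h1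
        exact h1
      have hann : ∀ r : R, r • x = 0 → r * c = 0 := by
        intro r hr
        have h1 : r • xe = (0 : Submodule.span R ({x} : Set M)) := by
          apply Subtype.ext
          simpa [hxe] using hr
        have h2 : r • f = 0 := by
          rw [hf, ← map_smul, h1, map_zero]
        have h3 := DFunLike.congr_fun h2 i₀
        simpa [hc, smul_eq_mul] using h3
      refine ⟨y, ?_, ?_⟩
      · intro b hb
        rcases hdvd c b with ⟨s, hs⟩ | ⟨s, hs⟩
        · -- b = c * s
          have hsx : s • x = 0 := by
            rw [hxy, ← mul_smul, mul_comm, ← hs, hb]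
          have := hann s hsx
          rw [hs, mul_comm]
          exact this
        · -- c = b * s
          exfalso
          apply hx
          rw [hxy, hs, mul_comm, mul_smul, hb, smul_zero]
      · exact Submodule.mem_span_singleton.mpr ⟨c, hxy.symm⟩
    intro x
    by_cases hx : x = 0
    · obtain ⟨m, hm⟩ := hM
      obtain ⟨y, hy1, _⟩ := key m hm
      exact ⟨y, hy1, hx ▸ Submodule.zero_mem _⟩
    · exact key x hx
  · intro h x
    obtain ⟨y, hy, hxy⟩ := h x
    set σ : R →ₗ[R] M := LinearMap.toSpanSingleton R M y with hσ
    have hinj : Function.Injective σ := by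
      intro r s hrs
      have h0 : (r - s) • y = 0 := by
        rw [sub_smul, sub_eq_zero]
        simpa [hσ, LinearMap.toSpanSingleton_apply] using hrs
      have := hy _ h0
      exact sub_eq_zero.mp this
    have hrange : Submodule.span R ({x} : Set M) ≤ LinearMap.range σ := by
      rw [hσ, ← LinearMap.span_singleton_eq_range]
      exact Submodule.span_le.mpr (by simpa using hxy)
    set e : R ≃ₗ[R] LinearMap.range σ := LinearEquiv.ofInjective σ hinj with he
    refine ⟨PUnit.{v+1},
      (Finsupp.lsingle PUnit.unit).comp (e.symm.toLinearMap.comp (Submodule.inclusion hrange)),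
      σ.comp (Finsupp.lapply PUnit.unit), ?_⟩
    intro n
    simp only [LinearMap.comp_apply, Finsupp.lsingle_apply, Finsupp.lapply_apply,
      Finsupp.single_eq_same, LinearEquiv.coe_coe]
    have h1 : σ (e.symm (Submodule.inclusion hrange n)) =
        ↑(e (e.symm (Submodule.inclusion hrange n))) := by
      rw [he]
      exact (LinearEquiv.ofInjective_apply σ (e.symm (Submodule.inclusion hrange n))).symm
    rw [h1, LinearEquiv.apply_symm_apply]
    rfl
end

section
/- Let R be a valuation ring with maximal ideal P and let Z be its set of zero-divisors (a prime ideal of R). Then Z = P (i.e. every non-unit of R is a zero-divisor) if and only if every singly projective R-module is a content module. -/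
universe u v

section Helpers
variable {R : Type u} [CommRing R]

lemma vr_finset_max (hval : ∀ I J : Ideal R, I ≤ J ∨ J ≤ I)
    {ι : Type v} (s : Finset ι) (f : ι → R) (hs : s.Nonempty) :
    ∃ i ∈ s, ∀ j ∈ s, f i ∣ f j := by
  classical
  revert hs
  induction s using Finset.induction_on with
  | empty => intro hs; simp at hs
  | @insert a s ha ih =>
    intro _
    by_cases h0 : s.Nonempty
    · obtain ⟨i, hi, hd⟩ := ih h0
      have hdvd : f i ∣ f a ∨ f a ∣ f i := by
        rcases hval (Ideal.span {f a}) (Ideal.span {f i}) with h | h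
        · exact Or.inl (Ideal.span_singleton_le_span_singleton.mp h)
        · exact Or.inr (Ideal.span_singleton_le_span_singleton.mp h)
      rcases hdvd with h | h
      · refine ⟨i, Finset.mem_insert_of_mem hi, fun j hj => ?_⟩
        rcases Finset.mem_insert.mp hj with rfl | hj
        · exact h
        · exact hd j hj
      · refine ⟨a, Finset.mem_insert_self a s, fun j hj => ?_⟩
        rcases Finset.mem_insert.mp hj with rfl | hj
        · exact dvd_refl _
        · exact dvd_trans h (hd j hj)
    · have hse : s = ∅ := Finset.not_nonempty_iff_eq_empty.mp h0
      subst hse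
      refine ⟨a, by simp, fun j hj => ?_⟩
      simp only [Finset.mem_insert, Finset.notMem_empty, or_false] at hj
      subst hj; exact dvd_refl _

lemma vr_finsupp_decomp (hval : ∀ I J : Ideal R, I ≤ J ∨ J ≤ I)
    {ι : Type v} (y : ι →₀ R) (hy : y ≠ 0) :
    ∃ (c : R) (z : ι →₀ R), c ≠ 0 ∧ y = c • z ∧ ∀ s : R, s • y = 0 → s * c = 0 := by
  classical
  obtain ⟨i₀, hi₀, hdvd⟩ := vr_finset_max hval y.support y (Finsupp.support_nonempty_iff.mpr hy)
  have hc : y i₀ ≠ 0 := Finsupp.mem_support_iff.mp hi₀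
  have hch : ∀ j, ∃ rj : R, y j = y i₀ * rj := by
    intro j
    by_cases hj : j ∈ y.support
    · exact hdvd j hj
    · exact ⟨0, by rw [mul_zero]; exact Finsupp.notMem_support_iff.mp hj⟩
  choose t ht using hch
  refine ⟨y i₀, Finsupp.onFinset y.support (fun j => if j ∈ y.support then t j else 0)
      (fun j hj => by by_contra h; simp [h] at hj), hc, ?_, ?_⟩
  · ext j
    rw [Finsupp.smul_apply, Finsupp.onFinset_apply]
    by_cases hj : j ∈ y.support
    · rw [if_pos hj, smul_eq_mul]; exact ht j
    · rw [if_neg hj, smul_zero]; exact Finsupp.notMem_support_iff.mp hj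
  · intro s hs
    have := congrArg (fun v : ι →₀ R => v i₀) hs
    simpa using this

lemma vr_ann_lemma [IsLocalRing R] (hval : ∀ I J : Ideal R, I ≤ J ∨ J ≤ I)
    (hZ : ∀ u ∈ IsLocalRing.maximalIdeal R, ∃ s : R, s ≠ 0 ∧ u * s = 0)
    {c u : R} (hc : c ≠ 0) (hu : u ∈ IsLocalRing.maximalIdeal R) :
    ∃ s : R, s * (c * u) = 0 ∧ s * c ≠ 0 := by
  by_cases hcu : c * u = 0
  · exact ⟨1, by rw [one_mul, hcu], by simpa using hc⟩
  obtain ⟨t, ht0, htu⟩ := hZ u hu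
  rcases hval (Ideal.span {t}) (Ideal.span {c * u}) with h | h
  · obtain ⟨s₀, hs₀⟩ := Ideal.mem_span_singleton.mp (h (Ideal.mem_span_singleton_self t))
    refine ⟨u * s₀, ?_, ?_⟩
    · calc u * s₀ * (c * u) = (c * u * s₀) * u := by ring
        _ = t * u := by rw [← hs₀]
        _ = 0 := by rw [mul_comm]; exact htu
    · intro h0
      apply ht0
      rw [hs₀]
      calc c * u * s₀ = u * s₀ * c := by ring
        _ = 0 := h0
  · obtain ⟨r, hr⟩ := Ideal.mem_span_singleton.mp (h (Ideal.mem_span_singleton_self (c * u)))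
    refine ⟨u, ?_, ?_⟩
    · rw [hr]
      calc u * (t * r) = (u * t) * r := by ring
        _ = 0 := by rw [htu, zero_mul]
    · rw [mul_comm]; exact hcu

lemma vr_smul_extract [IsLocalRing R] {M : Type v} [AddCommGroup M] [Module R M]
    (hval : ∀ I J : Ideal R, I ≤ J ∨ J ≤ I) {w : M}
    (hw : w ∈ (IsLocalRing.maximalIdeal R) • (⊤ : Submodule R M)) :
    ∃ b ∈ IsLocalRing.maximalIdeal R, ∃ w' : M, w = b • w' := by
  refine Submodule.smul_induction_on hw ?_ ?_
  · intro r hr n _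
    exact ⟨r, hr, n, rfl⟩
  · rintro v₁ v₂ ⟨b₁, hb₁, w₁, rfl⟩ ⟨b₂, hb₂, w₂, rfl⟩
    rcases hval (Ideal.span {b₁}) (Ideal.span {b₂}) with h | h
    · obtain ⟨r, hr⟩ := Ideal.mem_span_singleton.mp (h (Ideal.mem_span_singleton_self b₁))
      refine ⟨b₂, hb₂, r • w₁ + w₂, ?_⟩
      rw [smul_add, smul_smul, ← hr]
    · obtain ⟨r, hr⟩ := Ideal.mem_span_singleton.mp (h (Ideal.mem_span_singleton_self b₂))
      refine ⟨b₁, hb₁, w₁ + r • w₂, ?_⟩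
      rw [smul_add, smul_smul, ← hr]

lemma vr_span_smul_extract {M : Type v} [AddCommGroup M] [Module R M]
    {c : R} {N : Submodule R M} {x : M} (hx : x ∈ (Ideal.span {c} : Ideal R) • N) :
    ∃ w ∈ N, x = c • w := by
  refine Submodule.smul_induction_on hx ?_ ?_
  · intro r hr n hn
    obtain ⟨s, hs⟩ := Ideal.mem_span_singleton.mp hr
    exact ⟨s • n, N.smul_mem s hn, by rw [hs, mul_smul]⟩
  · rintro v₁ v₂ ⟨w₁, h₁, rfl⟩ ⟨w₂, h₂, rfl⟩
    exact ⟨w₁ + w₂, N.add_mem h₁ h₂, (smul_add c w₁ w₂).symm⟩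

end Helpers

/-- `M` is a content module if `x ∈ c(x)·M` for every `x ∈ M`, where the content ideal `c(x)`
is the intersection of all ideals `A` with `x ∈ A·M`. -/
def ContentModule (R : Type u) [CommRing R] (M : Type v) [AddCommGroup M] [Module R M] :
    Prop :=
  ∀ x : M, x ∈ (sInf {A : Ideal R | x ∈ A • (⊤ : Submodule R M)}) • (⊤ : Submodule R M)

lemma forward_dir (R : Type u) [CommRing R] [IsLocalRing R]
    (hval : ∀ I J : Ideal R, I ≤ J ∨ J ≤ I)
    (hZ : {r : R | ∃ s : R, s ≠ 0 ∧ r * s = 0} = (IsLocalRing.maximalIdeal R : Set R))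
    (M : Type u) [AddCommGroup M] [Module R M] (hsp : SinglyProjective R M) :
    ContentModule R M := by
  intro x
  by_cases hx0 : x = 0
  · subst hx0; exact Submodule.zero_mem _
  obtain ⟨ι, φ, π, hπφ⟩ := hsp x
  have hxs : x ∈ Submodule.span R ({x} : Set M) := Submodule.mem_span_singleton_self x
  have hxπ : π (φ ⟨x, hxs⟩) = x := hπφ ⟨x, hxs⟩
  have hyne : (φ ⟨x, hxs⟩ : ι →₀ R) ≠ 0 := fun h => hx0 (by rw [← hxπ, h, map_zero])
  obtain ⟨c, z, hc0, hyz, hannc⟩ := vr_finsupp_decomp hval _ hyne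
  have hxm : x = c • π z := by rw [← hxπ, hyz, map_smul]
  have hann : ∀ s : R, s • x = 0 → s * c = 0 := by
    intro s hs
    apply hannc
    have h1 : s • (⟨x, hxs⟩ : Submodule.span R ({x} : Set M)) = 0 := Subtype.ext (by simpa using hs)
    rw [← map_smul, h1, map_zero]
  have hP2Z : ∀ u ∈ IsLocalRing.maximalIdeal R, ∃ s : R, s ≠ 0 ∧ u * s = 0 := by
    intro u hu
    have : u ∈ {r : R | ∃ s : R, s ≠ 0 ∧ r * s = 0} := by rw [hZ]; exact hu
    exact this
  have hcS : x ∈ (Ideal.span {c} : Ideal R) • (⊤ : Submodule R M) := by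
    rw [hxm]
    exact Submodule.smul_mem_smul (Ideal.mem_span_singleton_self c) Submodule.mem_top
  have hkey : ∀ A : Ideal R, x ∈ A • (⊤ : Submodule R M) → c ∈ A := by
    intro A hA
    by_contra hcA
    have hAc : A ≤ Ideal.span {c} := by
      rcases hval A (Ideal.span {c}) with h | h
      · exact h
      · exact absurd (h (Ideal.mem_span_singleton_self c)) hcA
    have hx2 : x ∈ (Ideal.span {c} : Ideal R) •
        ((IsLocalRing.maximalIdeal R) • (⊤ : Submodule R M)) := by
      refine Submodule.smul_induction_on hA ?_ ?_
      · intro a ha n _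
        obtain ⟨ra, hra⟩ := Ideal.mem_span_singleton.mp (hAc ha)
        have hraP : ra ∈ IsLocalRing.maximalIdeal R := by
          rw [IsLocalRing.mem_maximalIdeal, mem_nonunits_iff]
          intro hu
          obtain ⟨v, hv⟩ := hu.exists_right_inv
          apply hcA
          have hca : c = a * v := by rw [hra, mul_assoc, hv, mul_one]
          rw [hca]
          exact Ideal.mul_mem_right _ _ ha
        have han : a • n = c • (ra • n) := by rw [smul_smul, ← hra]
        rw [han]
        exact Submodule.smul_mem_smul (Ideal.mem_span_singleton_self c)
          (Submodule.smul_mem_smul hraP Submodule.mem_top)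
      · intro v₁ v₂ h₁ h₂
        exact Submodule.add_mem _ h₁ h₂
    obtain ⟨w, hw, hxw⟩ := vr_span_smul_extract hx2
    obtain ⟨b, hb, w', rfl⟩ := vr_smul_extract hval hw
    obtain ⟨ι', φ', π', hπφ'⟩ := hsp w'
    have hws : w' ∈ Submodule.span R ({w'} : Set M) := Submodule.mem_span_singleton_self w'
    have hw'π : π' (φ' ⟨w', hws⟩) = w' := hπφ' ⟨w', hws⟩
    by_cases hy'0 : (φ' ⟨w', hws⟩ : ι' →₀ R) = 0
    · exact hx0 (by rw [hxw, ← hw'π, hy'0, map_zero, smul_zero, smul_zero])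
    obtain ⟨c', z', hc'0, hy'z, _⟩ := vr_finsupp_decomp hval _ hy'0
    obtain ⟨s, hs1, hs2⟩ := vr_ann_lemma hval hP2Z hc0 (Ideal.mul_mem_right c' _ hb)
    apply hs2
    apply hann
    rw [hxw, smul_smul, smul_smul, ← hw'π, ← map_smul, hy'z, smul_smul]
    have h4 : s * c * b * c' = 0 := by
      calc s * c * b * c' = s * (c * (b * c')) := by ring
        _ = 0 := hs1
    rw [h4, zero_smul, map_zero]
  have hle : Ideal.span {c} ≤ sInf {A : Ideal R | x ∈ A • (⊤ : Submodule R M)} :=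
    le_sInf fun A hA => (Ideal.span_singleton_le_iff_mem _).mpr (hkey A hA)
  exact Submodule.smul_mono_left hle hcS

lemma backward_dir (R : Type u) [CommRing R] [IsLocalRing R]
    (hval : ∀ I J : Ideal R, I ≤ J ∨ J ≤ I)
    (hall : ∀ (M : Type u) [AddCommGroup M] [Module R M],
        SinglyProjective R M → ContentModule R M) :
    {r : R | ∃ s : R, s ≠ 0 ∧ r * s = 0} = (IsLocalRing.maximalIdeal R : Set R) := by
  have hZsub : {r : R | ∃ s : R, s ≠ 0 ∧ r * s = 0} ⊆ (IsLocalRing.maximalIdeal R : Set R) := by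
    rintro r ⟨s, hs0, hrs⟩
    rw [SetLike.mem_coe, IsLocalRing.mem_maximalIdeal, mem_nonunits_iff]
    intro hu
    apply hs0
    obtain ⟨v, hv⟩ := hu.exists_left_inv
    calc s = (v * r) * s := by rw [hv, one_mul]
      _ = v * (r * s) := by ring
      _ = 0 := by rw [hrs, mul_zero]
  refine Set.Subset.antisymm hZsub ?_
  intro r hrP
  by_contra hrZ
  have hreg : ∀ s : R, r * s = 0 → s = 0 := by
    intro s hs
    by_contra hs0
    exact hrZ ⟨s, hs0, hs⟩
  have hrnzd : r ∈ nonZeroDivisors R := ⟨hreg, fun s hs => hreg s (by rwa [mul_comm] at hs)⟩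
  set M := Localization.Away r with hMdef
  have hle : Submonoid.powers r ≤ nonZeroDivisors R := by
    rintro t ⟨n, rfl⟩
    exact pow_mem hrnzd n
  have hinj : Function.Injective (algebraMap R M) := IsLocalization.injective M hle
  have hinj' : Function.Injective (Algebra.linearMap R M) := hinj
  have hsp : SinglyProjective R M := by
    intro x
    obtain ⟨⟨a, t⟩, hx⟩ := IsLocalization.surj (Submonoid.powers r) x
    have hu : IsUnit (algebraMap R M (t : R)) := IsLocalization.map_units M t
    set e : M := ↑hu.unit⁻¹ with he
    have heT : e * algebraMap R M (t : R) = 1 := by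
      rw [he]
      nth_rewrite 2 [← hu.unit_spec]
      exact hu.unit.inv_mul
    set g : Submodule.span R ({x} : Set M) →ₗ[R] M :=
      (LinearMap.mulLeft R (algebraMap R M (t : R))) ∘ₗ
        (Submodule.span R ({x} : Set M)).subtype with hg
    have hrange : ∀ v : Submodule.span R ({x} : Set M),
        g v ∈ LinearMap.range (Algebra.linearMap R M) := by
      rintro ⟨v, hv⟩
      obtain ⟨s, hs⟩ := Submodule.mem_span_singleton.mp hv
      refine ⟨s * a, ?_⟩
      have hgv : g ⟨v, hv⟩ = algebraMap R M (t : R) * v := rfl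
      rw [hgv, Algebra.linearMap_apply]
      calc (algebraMap R M) (s * a) = algebraMap R M s * algebraMap R M a := map_mul _ _ _
        _ = algebraMap R M s * (x * algebraMap R M (t : R)) := by rw [hx]
        _ = algebraMap R M (t : R) * (algebraMap R M s * x) := by ring
        _ = algebraMap R M (t : R) * (s • x) := by rw [Algebra.smul_def]
        _ = algebraMap R M (t : R) * v := by rw [hs]
    set eqv := LinearEquiv.ofInjective (Algebra.linearMap R M) hinj' with heqv
    set φ₀ : Submodule.span R ({x} : Set M) →ₗ[R] R :=
      eqv.symm.toLinearMap ∘ₗ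
        (g.codRestrict (LinearMap.range (Algebra.linearMap R M)) hrange) with hφ₀def
    have hφ₀ : ∀ v, algebraMap R M (φ₀ v) = g v := by
      intro v
      have h1 : eqv (eqv.symm (g.codRestrict (LinearMap.range (Algebra.linearMap R M)) hrange v))
          = g.codRestrict (LinearMap.range (Algebra.linearMap R M)) hrange v :=
        eqv.apply_symm_apply _
      have h2 := congrArg Subtype.val h1
      rw [heqv] at h2
      rw [LinearEquiv.ofInjective_apply] at h2
      exact h2
    refine ⟨PUnit.{u+1},
      (Finsupp.LinearEquiv.finsuppUnique R R PUnit.{u+1}).symm.toLinearMap ∘ₗ φ₀,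
      (LinearMap.toSpanSingleton R M e) ∘ₗ
        (Finsupp.LinearEquiv.finsuppUnique R R PUnit.{u+1}).toLinearMap, ?_⟩
    intro v
    simp only [LinearMap.comp_apply, LinearEquiv.coe_coe, LinearEquiv.apply_symm_apply]
    show φ₀ v • e = ↑v
    rw [Algebra.smul_def, hφ₀]
    have hgv : g v = algebraMap R M (t : R) * ↑v := rfl
    rw [hgv]
    calc algebraMap R M (t : R) * ↑v * e = ↑v * (e * algebraMap R M (t : R)) := by ring
      _ = ↑v := by rw [heT, mul_one]
  have hcm := hall M hsp 1
  have hpow : ∀ n : ℕ, (1 : M) ∈ (Ideal.span {r ^ n} : Ideal R) • (⊤ : Submodule R M) := by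
    intro n
    have hu : IsUnit (algebraMap R M (r ^ n)) :=
      IsLocalization.map_units M (⟨r ^ n, n, rfl⟩ : Submonoid.powers r)
    have h1 : (1 : M) = (r ^ n) • (↑hu.unit⁻¹ : M) := by
      rw [Algebra.smul_def]
      nth_rewrite 1 [← hu.unit.mul_inv]
      rw [hu.unit_spec]
    rw [h1]
    exact Submodule.smul_mem_smul (Ideal.mem_span_singleton_self _) Submodule.mem_top
  have hgen : ∀ v : M, v ∈ sInf {A : Ideal R | (1 : M) ∈ A • (⊤ : Submodule R M)} •
      (⊤ : Submodule R M) → ∃ (N : ℕ) (b : R),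
      b ∈ sInf {A : Ideal R | (1 : M) ∈ A • (⊤ : Submodule R M)} ∧
      v * algebraMap R M (r ^ N) = algebraMap R M b := by
    intro v hv
    refine Submodule.smul_induction_on hv ?_ ?_
    · intro a ha m _
      obtain ⟨⟨p, t⟩, hm⟩ := IsLocalization.surj (Submonoid.powers r) m
      obtain ⟨n, hn⟩ := t.2
      have hn' : r ^ n = (t : R) := hn
      refine ⟨n, a * p, Ideal.mul_mem_right _ _ ha, ?_⟩
      calc (a • m) * algebraMap R M (r ^ n)
          = a • (m * algebraMap R M (t : R)) := by rw [hn', smul_mul_assoc]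
        _ = a • algebraMap R M p := by rw [hm]
        _ = algebraMap R M (a * p) := by rw [Algebra.smul_def, ← map_mul]
    · rintro v₁ v₂ ⟨N₁, b₁, hb₁, h₁⟩ ⟨N₂, b₂, hb₂, h₂⟩
      refine ⟨N₁ + N₂, b₁ * r ^ N₂ + b₂ * r ^ N₁,
        Ideal.add_mem _ (Ideal.mul_mem_right _ _ hb₁) (Ideal.mul_mem_right _ _ hb₂), ?_⟩
      calc (v₁ + v₂) * algebraMap R M (r ^ (N₁ + N₂))
          = (v₁ * algebraMap R M (r ^ N₁)) * algebraMap R M (r ^ N₂)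
            + (v₂ * algebraMap R M (r ^ N₂)) * algebraMap R M (r ^ N₁) := by
              rw [pow_add, map_mul]; ring
        _ = algebraMap R M b₁ * algebraMap R M (r ^ N₂)
            + algebraMap R M b₂ * algebraMap R M (r ^ N₁) := by rw [h₁, h₂]
        _ = algebraMap R M (b₁ * r ^ N₂ + b₂ * r ^ N₁) := by rw [map_add, map_mul, map_mul]
  obtain ⟨N, b, hb, h1⟩ := hgen 1 hcm
  rw [one_mul] at h1
  have hrN : r ^ N ∈ sInf {A : Ideal R | (1 : M) ∈ A • (⊤ : Submodule R M)} := by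
    rw [hinj h1]; exact hb
  have hle2 : sInf {A : Ideal R | (1 : M) ∈ A • (⊤ : Submodule R M)}
      ≤ Ideal.span {r ^ (N + 1)} := sInf_le (hpow (N + 1))
  obtain ⟨d, hd⟩ := Ideal.mem_span_singleton.mp (hle2 hrN)
  have hzero : (1 - r * d) * r ^ N = 0 := by
    have he : (1 - r * d) * r ^ N = r ^ N - r ^ (N + 1) * d := by ring
    rw [he, ← hd, sub_self]
  have h0 : (1 : R) - r * d = 0 := (pow_mem hrnzd N).2 _ hzero
  have hru : IsUnit r := IsUnit.of_mul_eq_one (a := r) d (by rwa [sub_eq_zero, eq_comm] at h0)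
  exact mem_nonunits_iff.mp ((IsLocalRing.mem_maximalIdeal r).mp hrP) hru

/-- let `R` be a valuation ring with maximal ideal `P` and `Z` its set of
zero-divisors.  Then `Z = P` if and only if every singly projective `R`-module is a content
module. -/
theorem zeroDivisors_eq_maximalIdeal_iff_singlyProjective_content (R : Type u) [CommRing R]
    [IsLocalRing R] (hval : ∀ I J : Ideal R, I ≤ J ∨ J ≤ I) :
    {r : R | ∃ s : R, s ≠ 0 ∧ r * s = 0} = (IsLocalRing.maximalIdeal R : Set R) ↔
      ∀ (M : Type u) [AddCommGroup M] [Module R M],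
        SinglyProjective R M → ContentModule R M := by
  constructor
  · intro hZ M _ _ hsp
    exact forward_dir R hval hZ M hsp
  · intro hall
    exact backward_dir R hval hall
end

section
/- Let R be a valuation ring with maximal ideal P and set of zero-divisors Z. Then the following conditions are equivalent: (1) R is injective as an R-module; (2) every singly projective R-module is locally projective; (3) Z = P and every singly projective R-module is finitely projective. -/
universe u

namespace VRAux

variable {R : Type u} [CommRing R]

/-- annihilator of an element -/
def ann (R : Type u) [CommRing R] {M : Type v} [AddCommGroup M] [Module R M] (x : M) :
    Ideal R := LinearMap.ker (LinearMap.toSpanSingleton R M x)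

theorem mem_ann {M : Type v} [AddCommGroup M] [Module R M] {x : M} {r : R} :
    r ∈ ann R x ↔ r • x = 0 := Iff.rfl

theorem ann_zero {M : Type v} [AddCommGroup M] [Module R M] : ann R (0 : M) = ⊤ := by
  ext r; simp [mem_ann]

theorem ann_one : ann R (1 : R) = ⊥ := by
  ext r; simp [mem_ann]

theorem dvd_total (hval : ∀ I J : Ideal R, I ≤ J ∨ J ≤ I) (a b : R) : a ∣ b ∨ b ∣ a := by
  rcases hval (Ideal.span {a}) (Ideal.span {b}) with h | h
  · exact Or.inr (Ideal.span_singleton_le_span_singleton.mp h)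
  · exact Or.inl (Ideal.span_singleton_le_span_singleton.mp h)

/-- in a finite nonempty family there is an element dividing all others -/
theorem exists_dvd_all (hval : ∀ I J : Ideal R, I ≤ J ∨ J ≤ I) {ι : Type*} (s : Finset ι)
    (hs : s.Nonempty) (g : ι → R) : ∃ i ∈ s, ∀ j ∈ s, g i ∣ g j := by
  classical
  induction s using Finset.induction_on with
  | empty => exact absurd hs (by simp)
  | @insert a s ha ih =>
    rcases Finset.eq_empty_or_nonempty s with rfl | hs'
    · exact ⟨a, by simp⟩
    · obtain ⟨i, hi, hdvd⟩ := ih hs'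
      rcases dvd_total hval (g a) (g i) with h | h
      · refine ⟨a, Finset.mem_insert_self _ _, ?_⟩
        intro j hj
        rcases Finset.mem_insert.mp hj with rfl | hj
        · rfl
        · exact h.trans (hdvd j hj)
      · refine ⟨i, Finset.mem_insert_of_mem hi, ?_⟩
        intro j hj
        rcases Finset.mem_insert.mp hj with rfl | hj
        · exact h
        · exact hdvd j hj

/-- a linear map out of a cyclic submodule with prescribed value. -/
theorem exists_map_span {M : Type v} {N : Type*} [AddCommGroup M] [Module R M] [AddCommGroup N]
    [Module R N] (x : M) (t : N) (h : ann R x ≤ ann R t) :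
    ∃ g : (Submodule.span R ({x} : Set M)) →ₗ[R] N,
      g ⟨x, Submodule.mem_span_singleton_self x⟩ = t := by
  set T := LinearMap.toSpanSingleton R M x with hT
  have hker : LinearMap.ker T ≤ LinearMap.ker (LinearMap.toSpanSingleton R N t) := h
  set lift : (R ⧸ LinearMap.ker T) →ₗ[R] N :=
    Submodule.liftQ _ (LinearMap.toSpanSingleton R N t) hker with hlift
  have hspan : Submodule.span R ({x} : Set M) = LinearMap.range T :=
    LinearMap.span_singleton_eq_range R M x
  set e : (Submodule.span R ({x} : Set M)) ≃ₗ[R] LinearMap.range T :=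
    LinearEquiv.ofEq _ _ hspan with he
  refine ⟨lift ∘ₗ (T.quotKerEquivRange.symm.toLinearMap) ∘ₗ e.toLinearMap, ?_⟩
  have h1 : T.quotKerEquivRange.symm (e ⟨x, Submodule.mem_span_singleton_self x⟩)
      = Submodule.Quotient.mk 1 := by
    rw [LinearEquiv.symm_apply_eq]
    apply Subtype.ext
    rw [LinearMap.quotKerEquivRange_apply_mk]
    simp [he, hT, LinearMap.toSpanSingleton_apply]
  simp only [LinearMap.comp_apply, LinearEquiv.coe_toLinearMap, h1]
  rw [hlift, Submodule.liftQ_apply, LinearMap.toSpanSingleton_apply, one_smul]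

/-- sufficient condition for `SinglyProjective`. -/
theorem sp_of_witness (M : Type v) [AddCommGroup M] [Module R M]
    (h : ∀ x : M, ∃ (s : R) (y : M), x = s • y ∧ ann R x ≤ ann R s) :
    SinglyProjective R M := by
  intro x
  obtain ⟨s, y, hxy, hann⟩ := h x
  obtain ⟨g, hg⟩ := exists_map_span x s hann
  refine ⟨PUnit, (Finsupp.lsingle PUnit.unit) ∘ₗ g,
    Finsupp.linearCombination R (fun _ : PUnit => y), ?_⟩
  rintro ⟨n, hn⟩
  obtain ⟨c, hc⟩ := Submodule.mem_span_singleton.mp hn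
  have hsub : (⟨n, hn⟩ : Submodule.span R ({x} : Set M))
      = c • ⟨x, Submodule.mem_span_singleton_self x⟩ := by
    apply Subtype.ext; simp [hc]
  simp only [LinearMap.comp_apply, Finsupp.lsingle_apply, Finsupp.linearCombination_single, hsub,
    map_smul, hg]
  rw [← hxy]
  exact hc

/-- consequence of `SinglyProjective` over a valuation ring -/
theorem sp_witness (hval : ∀ I J : Ideal R, I ≤ J ∨ J ≤ I) {M : Type v} [AddCommGroup M]
    [Module R M] (hsp : SinglyProjective R M) (x : M) :
    ∃ (s : R) (y : M), x = s • y ∧ ann R x ≤ ann R s := by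
  classical
  obtain ⟨ι, φ, π, hφ⟩ := hsp x
  set xs : Submodule.span R ({x} : Set M) := ⟨x, Submodule.mem_span_singleton_self x⟩ with hxs
  set v := φ xs with hv
  by_cases hv0 : v = 0
  · refine ⟨0, 0, ?_, ?_⟩
    · have := hφ xs
      rw [← hv, hv0] at this
      simp only [map_zero] at this
      simpa [hxs] using this.symm
    · have := hφ xs
      rw [← hv, hv0] at this
      simp only [map_zero] at this
      have : x = 0 := by simpa [hxs] using this.symm
      rw [this, ann_zero]
      have : ann R (0 : R) = ⊤ := ann_zero
      rw [this]
  · obtain ⟨l, hl, hdvdl⟩ := exists_dvd_all hval v.support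
      (Finsupp.support_nonempty_iff.mpr hv0) (fun l => v l)
    have hdvd : ∀ j : ι, v l ∣ v j := by
      intro j
      by_cases hj : j ∈ v.support
      · exact hdvdl j hj
      · rw [Finsupp.notMem_support_iff.mp hj]; exact dvd_zero _
    set w : ι →₀ R := ∑ j ∈ v.support, Finsupp.single j (Classical.choose (hdvd j)) with hw
    have hsw : v l • w = v := by
      rw [hw, Finset.smul_sum]
      have : ∀ j ∈ v.support, v l • Finsupp.single j (Classical.choose (hdvd j))
          = Finsupp.single j (v j) := by
        intro j _
        rw [Finsupp.smul_single, smul_eq_mul, ← Classical.choose_spec (hdvd j)]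
      rw [Finset.sum_congr rfl this]
      exact Finsupp.sum_single v
    refine ⟨v l, π w, ?_, ?_⟩
    · have hpv : π v = x := hφ xs
      rw [← map_smul, hsw]
      exact hpv.symm
    · intro u hu
      have hux : u • xs = 0 := by
        apply Subtype.ext
        simpa [mem_ann] using hu
      have : u • v = 0 := by rw [hv, ← map_smul, hux, map_zero]
      have := DFunLike.congr_fun this l
      simpa [mem_ann, smul_eq_mul] using this


section AtoB

variable {R : Type u} [CommRing R]

theorem lp_core (hval : ∀ I J : Ideal R, I ≤ J ∨ J ≤ I) (inj : Module.Injective R R)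
    (M : Type u) [AddCommGroup M] [Module R M] (hsp : SinglyProjective R M) :
    ∀ (n : ℕ) (S : Finset M), S.card ≤ n →
      ∃ (κ : Type u) (φ : M →ₗ[R] (κ →₀ R)) (π : (κ →₀ R) →ₗ[R] M),
        ∀ x ∈ Submodule.span R (S : Set M), π (φ x) = x := by
  classical
  intro n
  induction n with
  | zero =>
    intro S hS
    have : S = ∅ := Finset.card_eq_zero.mp (Nat.le_zero.mp hS)
    subst this
    refine ⟨PEmpty, 0, 0, ?_⟩
    intro x hx
    rw [Finset.coe_empty, Submodule.span_empty, Submodule.mem_bot] at hx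
    simp [hx]
  | succ n ih =>
    intro S hS
    rcases Finset.eq_empty_or_nonempty S with rfl | ⟨a, ha⟩
    · refine ⟨PEmpty, 0, 0, ?_⟩
      intro x hx
      rw [Finset.coe_empty, Submodule.span_empty, Submodule.mem_bot] at hx
      simp [hx]
    · -- singly projective witness at a
      obtain ⟨s, y, hxy, hann⟩ := sp_witness hval hsp a
      obtain ⟨g₀, hg₀⟩ := exists_map_span a s hann
      obtain ⟨h, hh⟩ := inj.out (Submodule.span R ({a} : Set M)).subtype
        (Submodule.injective_subtype _) g₀
      have hha : h a = s := by
        have := hh ⟨a, Submodule.mem_span_singleton_self a⟩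
        simpa [hg₀] using this
      set θ : M →ₗ[R] M := LinearMap.id - (LinearMap.toSpanSingleton R M y) ∘ₗ h with hθ
      have hθa : θ a = 0 := by
        simp [hθ, LinearMap.toSpanSingleton_apply, hha, ← hxy]
      have hθz : ∀ z : M, θ z = z - h z • y := by
        intro z; simp [hθ, LinearMap.toSpanSingleton_apply]
      set T : Finset M := (S.erase a).image θ with hT
      have hTcard : T.card ≤ n := by
        calc T.card ≤ (S.erase a).card := Finset.card_image_le
        _ ≤ n := by
            have := Finset.card_erase_of_mem ha
            omega
      obtain ⟨κ, φ', π', hp⟩ := ih T hTcard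
      have hmapθ : ∀ x ∈ Submodule.span R (S : Set M), θ x ∈ Submodule.span R (T : Set M) := by
        intro x hx
        have h1 : θ x ∈ Submodule.map θ (Submodule.span R (S : Set M)) :=
          Submodule.mem_map_of_mem hx
        rw [Submodule.map_span] at h1
        have hSins : (S : Set M) = insert a ((S.erase a : Finset M) : Set M) := by
          rw [← Finset.coe_insert, Finset.insert_erase ha]
        rw [hSins, Set.image_insert_eq, hθa, Submodule.span_insert_zero] at h1
        rwa [hT, Finset.coe_image]
      refine ⟨κ ⊕ PUnit,
        (Finsupp.lmapDomain R R Sum.inl) ∘ₗ φ' ∘ₗ θ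
          + (Finsupp.lsingle (Sum.inr PUnit.unit)) ∘ₗ h,
        π' ∘ₗ (Finsupp.lcomapDomain Sum.inl Sum.inl_injective)
          + (LinearMap.toSpanSingleton R M y) ∘ₗ Finsupp.lapply (Sum.inr PUnit.unit), ?_⟩
      intro x hx
      have e1 : (Finsupp.lcomapDomain Sum.inl Sum.inl_injective :
          ((κ ⊕ PUnit) →₀ R) →ₗ[R] (κ →₀ R))
          (Finsupp.mapDomain Sum.inl (φ' (θ x))
            + Finsupp.single (Sum.inr PUnit.unit) (h x)) = φ' (θ x) := by
        ext l
        simp only [Finsupp.lcomapDomain, LinearMap.coe_mk, AddHom.coe_mk,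
          Finsupp.comapDomain_apply, Finsupp.add_apply]
        rw [Finsupp.mapDomain_apply Sum.inl_injective]
        rw [Finsupp.single_apply_eq_zero.mpr (by simp), add_zero]
      have e2 : ((Finsupp.mapDomain Sum.inl (φ' (θ x))
            + Finsupp.single (Sum.inr PUnit.unit) (h x) : (κ ⊕ PUnit) →₀ R))
            (Sum.inr PUnit.unit) = h x := by
        rw [Finsupp.add_apply]
        rw [Finsupp.mapDomain_notin_range _ _ (by simp), zero_add, Finsupp.single_eq_same]
      simp only [LinearMap.add_apply, LinearMap.comp_apply, Finsupp.lmapDomain_apply,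
        Finsupp.lsingle_apply, Finsupp.lapply_apply]
      rw [e1, e2, hp (θ x) (hmapθ x hx), hθz, LinearMap.toSpanSingleton_apply]
      abel

theorem lp_of_inj (hval : ∀ I J : Ideal R, I ≤ J ∨ J ≤ I) (inj : Module.Injective R R)
    (M : Type u) [AddCommGroup M] [Module R M] (hsp : SinglyProjective R M) :
    LocallyProjective R M := by
  intro N hN
  obtain ⟨S, hS⟩ := hN
  obtain ⟨κ, φ, π, hp⟩ := lp_core hval inj M hsp S.card S le_rfl
  exact ⟨κ, φ, π, fun x hx => hp x (by rwa [hS])⟩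

theorem fp_of_lp (M : Type v) [AddCommGroup M] [Module R M] (hlp : LocallyProjective R M) :
    FinitelyProjective R M := by
  intro N hN
  obtain ⟨ι, φ, π, hp⟩ := hlp N hN
  exact ⟨ι, φ ∘ₗ N.subtype, π, fun n => hp n n.2⟩

end AtoB


section BtoZ

variable {R : Type u} [CommRing R] [IsLocalRing R]

theorem zp_of_lp (hval : ∀ I J : Ideal R, I ≤ J ∨ J ≤ I)
    (hB : ∀ (M : Type u) [AddCommGroup M] [Module R M],
      SinglyProjective R M → LocallyProjective R M) :
    {r : R | ∃ s : R, s ≠ 0 ∧ r * s = 0} = (IsLocalRing.maximalIdeal R : Set R) := by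
  classical
  apply Set.Subset.antisymm
  · rintro r ⟨s, hs, hrs⟩
    rw [SetLike.mem_coe, IsLocalRing.mem_maximalIdeal, mem_nonunits_iff]
    intro hu
    exact hs (hu.mul_left_cancel (by rw [hrs, mul_zero]))
  · intro p hp
    rw [SetLike.mem_coe, IsLocalRing.mem_maximalIdeal, mem_nonunits_iff] at hp
    by_contra hreg'
    simp only [Set.mem_setOf_eq, not_exists, not_and] at hreg'
    have hreg : ∀ s : R, p * s = 0 → s = 0 := by
      intro s h
      by_contra hs
      exact hreg' s hs h
    have hpow_reg : ∀ (k : ℕ) (b : R), p ^ k * b = 0 → b = 0 := by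
      intro k
      induction k with
      | zero => intro b hb; simpa using hb
      | succ k ih =>
        intro b hb
        have : p ^ k * (p * b) = 0 := by rw [← hb]; ring
        exact hreg b (ih _ this)
    set L := Localization.Away p with hL
    have hSP : SinglyProjective R L := by
      apply sp_of_witness
      intro x
      obtain ⟨⟨a, m⟩, rfl⟩ := IsLocalization.mk'_surjective (Submonoid.powers p) x
      refine ⟨a, IsLocalization.mk' L 1 m, (IsLocalization.smul_mk'_one a m).symm, ?_⟩
      intro u hu
      rw [mem_ann, IsLocalization.smul_mk', IsLocalization.mk'_eq_zero_iff] at hu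
      obtain ⟨m', hm'⟩ := hu
      obtain ⟨j, hj⟩ := (Submonoid.mem_powers_iff _ _).mp m'.2
      rw [mem_ann, smul_eq_mul]
      apply hpow_reg j
      rw [hj]
      exact hm'
    obtain ⟨ι, φ, π, hpi⟩ := hB L hSP (Submodule.span R {(1 : L)})
      (Submodule.fg_span_singleton _)
    have h1 : π (φ 1) = 1 := hpi 1 (Submodule.mem_span_singleton_self _)
    set v := φ (1 : L) with hv
    have hm : ∀ l : ι, ∃ (r : R) (t : ℕ),
        π (Finsupp.single l 1) = IsLocalization.mk' L r
          (⟨p ^ t, Submonoid.pow_mem _ (Submonoid.mem_powers p) t⟩ : Submonoid.powers p) := by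
      intro l
      obtain ⟨⟨r, m⟩, hrm⟩ := IsLocalization.mk'_surjective (Submonoid.powers p)
        (π (Finsupp.single l 1))
      obtain ⟨t, ht⟩ := (Submonoid.mem_powers_iff _ _).mp m.2
      refine ⟨r, t, ?_⟩
      simp only at hrm
      rw [← hrm]
      congr 1
      exact Subtype.ext ht.symm
    set rr : ι → R := fun l => Classical.choose (hm l) with hrr
    set tt : ι → ℕ := fun l => Classical.choose (Classical.choose_spec (hm l)) with htt
    have hmspec : ∀ l : ι, π (Finsupp.single l 1) = IsLocalization.mk' L (rr l)
        (⟨p ^ (tt l), Submonoid.pow_mem _ (Submonoid.mem_powers p) _⟩ : Submonoid.powers p) :=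
      fun l => Classical.choose_spec (Classical.choose_spec (hm l))
    set k := v.support.sup tt with hk
    set den : Submonoid.powers p :=
      ⟨p ^ (k + 1), Submonoid.pow_mem _ (Submonoid.mem_powers p) _⟩ with hden
    set w := φ (IsLocalization.mk' L 1 den) with hw
    have hvw : v = p ^ (k + 1) • w := by
      rw [hv, hw, ← map_smul, IsLocalization.smul_mk'_one, IsLocalization.mk'_self]
    -- π v as an image of algebraMap
    have hterm : ∀ l ∈ v.support, (v l) • π (Finsupp.single l 1)
        = algebraMap R L (w l * (p ^ (k + 1 - tt l) * rr l)) := by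
      intro l hl
      have htl : tt l ≤ k := Finset.le_sup hl
      have hvl : v l = p ^ (k + 1) * w l := by rw [hvw]; simp
      rw [hmspec l, hvl]
      have hsplit : p ^ (k + 1) = p ^ (k + 1 - tt l) * p ^ (tt l) := by
        rw [← pow_add]
        congr 1
        omega
      rw [hsplit]
      rw [show p ^ (k + 1 - tt l) * p ^ tt l * w l
        = (w l * p ^ (k + 1 - tt l)) * p ^ tt l by ring]
      rw [← smul_smul]
      have : (p ^ tt l : R) • IsLocalization.mk' L (rr l)
          (⟨p ^ (tt l), Submonoid.pow_mem _ (Submonoid.mem_powers p) _⟩ : Submonoid.powers p)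
          = algebraMap R L (rr l) := by
        rw [Algebra.smul_def]
        exact IsLocalization.mk'_spec' L (rr l)
          ⟨p ^ (tt l), Submonoid.pow_mem _ (Submonoid.mem_powers p) _⟩
      rw [this, Algebra.smul_def, ← map_mul]
      congr 1
      ring
    have hsum : π v = algebraMap R L (∑ l ∈ v.support, w l * (p ^ (k + 1 - tt l) * rr l)) := by
      conv_lhs => rw [← Finsupp.sum_single v]
      rw [Finsupp.sum, map_sum, map_sum]
      apply Finset.sum_congr rfl
      intro l hl
      rw [← hterm l hl, ← map_smul]
      congr 1
      rw [Finsupp.smul_single, smul_eq_mul, mul_one]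
    have hle : Submonoid.powers p ≤ nonZeroDivisors R := by
      intro x hx
      obtain ⟨j, hj⟩ := (Submonoid.mem_powers_iff _ _).mp hx
      rw [mem_nonZeroDivisors_iff_right]
      intro b hb
      rw [mul_comm, ← hj] at hb
      exact hpow_reg j b hb
    have hinj : Function.Injective (algebraMap R L) :=
      IsLocalization.injective (M := Submonoid.powers p) L hle
    have hone : (1 : R) = ∑ l ∈ v.support, w l * (p ^ (k + 1 - tt l) * rr l) := by
      apply hinj
      rw [map_one, ← hsum, h1]
    have hdvd : p ∣ (1 : R) := by
      rw [hone]
      apply Finset.dvd_sum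
      intro l hl
      have : p ∣ p ^ (k + 1 - tt l) := dvd_pow_self p (by
        have : tt l ≤ k := Finset.le_sup hl
        omega)
      exact Dvd.dvd.mul_left (this.mul_right _) _
    exact hp (isUnit_of_dvd_one hdvd)

end BtoZ


section CtoA

variable {R : Type u} [CommRing R]

/-- essential extension of `R` via `ρ` -/
def Ess {E₀ : Type u} [AddCommGroup E₀] [Module R E₀] (ρ : R →ₗ[R] E₀)
    (S : Submodule R E₀) : Prop :=
  LinearMap.range ρ ≤ S ∧ ∀ y ∈ S, y ≠ 0 → ∃ r c : R, r • y = ρ c ∧ r • y ≠ 0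

theorem exists_maximal_ess {E₀ : Type u} [AddCommGroup E₀] [Module R E₀] (ρ : R →ₗ[R] E₀) :
    ∃ E : Submodule R E₀, Maximal (Ess ρ) E := by
  have h := zorn_le₀ {S : Submodule R E₀ | Ess ρ S} ?_
  · obtain ⟨m, hm⟩ := h
    exact ⟨m, hm⟩
  · intro c hc hchain
    rcases c.eq_empty_or_nonempty with rfl | hne
    · refine ⟨LinearMap.range ρ, ⟨le_rfl, ?_⟩, by simp⟩
      rintro y ⟨a, rfl⟩ hy
      exact ⟨1, a, by rw [one_smul], by rwa [one_smul]⟩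
    · refine ⟨sSup c, ⟨?_, ?_⟩, fun z hz => le_sSup hz⟩
      · obtain ⟨S₀, hS₀⟩ := hne
        exact le_trans (hc hS₀).1 (le_sSup hS₀)
      · intro y hy hy0
        obtain ⟨S, hS, hyS⟩ := (Submodule.mem_sSup_of_directed hne hchain.directedOn).mp hy
        exact (hc hS).2 y hyS hy0

theorem ann_realized {E₀ : Type u} [AddCommGroup E₀] [Module R E₀] {ρ : R →ₗ[R] E₀}
    (hρ : Function.Injective ρ) (hval : ∀ I J : Ideal R, I ≤ J ∨ J ≤ I)
    {E : Submodule R E₀} (hE : Ess ρ E) (x : E₀) (hx : x ∈ E) :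
    ∃ s : R, ann R x = ann R s := by
  by_cases hx0 : x = 0
  · exact ⟨0, by rw [hx0, ann_zero, ann_zero]⟩
  obtain ⟨r, d, hrd, hne⟩ := hE.2 x hx hx0
  have hρ0 : ∀ a : R, ρ a = 0 → a = 0 := by
    intro a ha
    apply hρ
    rw [ha, map_zero]
  have hd0 : d ≠ 0 := by
    intro h
    rw [h, map_zero] at hrd
    exact hne hrd
  rcases dvd_total hval r d with ⟨c, hc⟩ | ⟨c, hc⟩
  · -- d = r * c
    refine ⟨c, ?_⟩
    have key : ∀ u : R, (u * r) • x = 0 ↔ u * d = 0 := by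
      intro u
      rw [mul_smul, hrd, ← map_smul, smul_eq_mul]
      constructor
      · exact fun h => hρ0 _ h
      · intro h
        rw [h, map_zero]
    have hAr : ann R x ≤ Ideal.span {r} := by
      rcases hval (ann R x) (Ideal.span {r}) with h | h
      · exact h
      · exfalso
        have hr : r ∈ ann R x := h (Ideal.mem_span_singleton_self r)
        exact hne hr
    have hBr : ann R c ≤ Ideal.span {r} := by
      rcases hval (ann R c) (Ideal.span {r}) with h | h
      · exact h
      · exfalso
        have hr : r ∈ ann R c := h (Ideal.mem_span_singleton_self r)
        rw [mem_ann, smul_eq_mul] at hr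
        exact hd0 (by rw [hc]; exact hr)
    ext u
    constructor
    · intro hu
      obtain ⟨e, he⟩ := Ideal.mem_span_singleton'.mp (hAr hu)
      rw [mem_ann] at hu ⊢
      rw [smul_eq_mul, ← he]
      have h1 : (e * r) • x = 0 := by rw [he]; exact hu
      have h2 : e * d = 0 := (key e).mp h1
      rw [hc] at h2
      rw [show e * r * c = e * (r * c) by ring, h2]
    · intro hu
      obtain ⟨e, he⟩ := Ideal.mem_span_singleton'.mp (hBr hu)
      rw [mem_ann] at hu ⊢
      rw [smul_eq_mul] at hu
      have h2 : e * d = 0 := by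
        rw [hc, ← mul_assoc, he]
        exact hu
      have := (key e).mpr h2
      rwa [he] at this
  · -- r = d * c
    refine ⟨1, ?_⟩
    set τ := c • x with hτ
    set μ := ρ 1 - τ with hμ
    have hdτ : d • τ = ρ d := by
      rw [hτ, smul_smul, ← hc, hrd]
    have hdμ : d • μ = 0 := by
      rw [hμ, smul_sub, hdτ, ← map_smul, smul_eq_mul, mul_one, sub_self]
    have hbot : ann R τ ⊓ ann R μ = ⊥ := by
      apply eq_bot_iff.mpr
      intro u hu
      rw [Submodule.mem_inf] at hu
      have h1 : u • τ = 0 := hu.1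
      have h2 : u • μ = 0 := hu.2
      have : ρ u = 0 := by
        have : u • (τ + μ) = 0 := by rw [smul_add, h1, h2, add_zero]
        rw [hμ] at this
        simp only [add_sub_cancel] at this
        rw [← map_smul] at this
        simpa [smul_eq_mul] using this
      simp [Submodule.mem_bot, hρ0 _ this]
    have hτbot : ann R τ = ⊥ := by
      rcases hval (ann R τ) (ann R μ) with h | h
      · rwa [inf_eq_left.mpr h] at hbot
      · exfalso
        have : ann R μ = ⊥ := by rwa [inf_eq_right.mpr h] at hbot
        have hdmem : d ∈ ann R μ := by rw [mem_ann]; exact hdμ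
        rw [this, Ideal.mem_bot] at hdmem
        exact hd0 hdmem
    rw [ann_one]
    apply eq_bot_iff.mpr
    intro u hu
    rw [mem_ann] at hu
    have : u ∈ ann R τ := by
      rw [mem_ann, hτ, smul_smul, mul_comm, ← smul_smul, hu, smul_zero]
    rwa [hτbot] at this

end CtoA


section Adjoin

variable {R : Type u} [CommRing R]

set_option maxHeartbeats 1000000 in
theorem adjoin {E₀ : Type u} [AddCommGroup E₀] [Module R E₀] {ρ : R →ₗ[R] E₀}
    (hρ : Function.Injective ρ) (inj : Module.Injective R E₀)
    {E : Submodule R E₀} (hE : Maximal (Ess ρ) E) (w : E₀) :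
    ∃ ζ ∈ E, ∀ (c : R) (e : E₀), e ∈ E → c • w = e → c • ζ = e := by
  classical
  set N : Submodule R E₀ := E ⊔ Submodule.span R {w} with hN
  have hEN : E ≤ N := le_sup_left
  have hwN : w ∈ N := Submodule.mem_sup_right (Submodule.mem_span_singleton_self w)
  -- maximal submodule of N intersecting range ρ trivially
  obtain ⟨C, hC⟩ : ∃ C, Maximal
      (· ∈ {C : Submodule R E₀ | C ≤ N ∧ C ⊓ LinearMap.range ρ = ⊥}) C := by
    apply zorn_le₀
    intro c hc hchain
    rcases c.eq_empty_or_nonempty with rfl | hne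
    · exact ⟨⊥, ⟨bot_le, by simp⟩, by simp⟩
    · refine ⟨sSup c, ⟨?_, ?_⟩, fun z hz => le_sSup hz⟩
      · apply sSup_le
        intro S hS
        exact (hc hS).1
      · apply eq_bot_iff.mpr
        intro z hz
        rw [Submodule.mem_inf] at hz
        obtain ⟨S, hS, hzS⟩ := (Submodule.mem_sSup_of_directed hne hchain.directedOn).mp hz.1
        have : z ∈ S ⊓ LinearMap.range ρ := Submodule.mem_inf.mpr ⟨hzS, hz.2⟩
        rw [(hc hS).2] at this
        exact this
  set C' : Submodule R ↥N := C.comap N.subtype with hC'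
  set Q := (↥N) ⧸ C' with hQ
  set mkq : ↥N →ₗ[R] Q := C'.mkQ with hmkq
  set incl : ↥E →ₗ[R] ↥N := Submodule.inclusion hEN with hincl
  set ebar : ↥E →ₗ[R] Q := mkq ∘ₗ incl with hebar
  have hρE : ∀ a : R, ρ a ∈ E := fun a => hE.prop.1 ⟨a, rfl⟩
  set ρE : R →ₗ[R] ↥E := ρ.codRestrict E hρE with hρEdef
  have hCE : ∀ z ∈ C, z ∈ E → z = 0 := by
    intro z hzC hzE
    by_contra hz0
    obtain ⟨r, a, hra, hne⟩ := hE.prop.2 z hzE hz0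
    have h1 : r • z ∈ C ⊓ LinearMap.range ρ :=
      Submodule.mem_inf.mpr ⟨Submodule.smul_mem _ _ hzC, ⟨a, hra.symm⟩⟩
    rw [hC.prop.2] at h1
    exact hne h1
  have hmk0 : ∀ n : ↥N, mkq n = 0 ↔ (n : E₀) ∈ C := by
    intro n
    rw [hmkq, Submodule.mkQ_apply, Submodule.Quotient.mk_eq_zero, hC']
    exact Iff.rfl
  have hebar_inj : Function.Injective ebar := by
    intro z₁ z₂ hz
    have : ebar (z₁ - z₂) = 0 := by rw [map_sub, hz, sub_self]
    rw [hebar] at this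
    simp only [LinearMap.comp_apply] at this
    rw [hmk0] at this
    have : ((z₁ - z₂ : ↥E) : E₀) = 0 := hCE _ this (z₁ - z₂).2
    have : z₁ - z₂ = 0 := Subtype.ext this
    exact sub_eq_zero.mp this
  obtain ⟨h, hh⟩ := inj.out ebar hebar_inj E.subtype
  have claim1 : ∀ q : Q, q ≠ 0 → ∃ r a : R, r • q = ebar (ρE a) ∧ ρ a ≠ 0 := by
    intro q hq0
    obtain ⟨n, rfl⟩ := Submodule.mkQ_surjective C' q
    have hnC : (n : E₀) ∉ C := by
      intro hmem
      exact hq0 ((hmk0 n).mpr hmem)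
    set K : Submodule R E₀ := C ⊔ Submodule.span R {(n : E₀)} with hK
    have hKN : K ≤ N := sup_le hC.prop.1
      ((Submodule.span_singleton_le_iff_mem _ _).mpr n.2)
    have hKne : ¬ (K ⊓ LinearMap.range ρ = ⊥) := by
      intro hKbot
      have : K ≤ C := hC.le_of_ge ⟨hKN, hKbot⟩ le_sup_left
      exact hnC (this (Submodule.mem_sup_right (Submodule.mem_span_singleton_self _)))
    obtain ⟨v, hvmem, hv0⟩ := Submodule.exists_mem_ne_zero_of_ne_bot hKne
    rw [Submodule.mem_inf] at hvmem
    obtain ⟨z, hzC, y, hy, hzy⟩ := Submodule.mem_sup.mp hvmem.1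
    obtain ⟨r, hr⟩ := Submodule.mem_span_singleton.mp hy
    obtain ⟨a, ha⟩ := hvmem.2
    refine ⟨r, a, ?_, by rw [ha]; exact hv0⟩
    have hrn : r • (mkq n) = mkq ⟨r • (n : E₀), Submodule.smul_mem _ _ n.2⟩ := by
      rw [← map_smul]
      congr 1
    have hv_in_N : v ∈ N := hKN hvmem.1
    have hz_in_N : z ∈ N := hC.prop.1 hzC
    have heq : (⟨r • (n : E₀), Submodule.smul_mem _ _ n.2⟩ : ↥N)
        = ⟨v, hv_in_N⟩ - ⟨z, hz_in_N⟩ := by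
      apply Subtype.ext
      simp only [AddSubgroupClass.coe_sub]
      rw [hr, ← hzy]
      abel
    rw [hrn, heq, map_sub]
    have hz0 : mkq ⟨z, hz_in_N⟩ = 0 := (hmk0 _).mpr hzC
    rw [hz0, sub_zero]
    have : ebar (ρE a) = mkq ⟨ρ a, hEN (hρE a)⟩ := by
      rw [hebar]
      simp only [LinearMap.comp_apply]
      congr 1
    rw [this]
    congr 1
    apply Subtype.ext
    simp [ha]
  have hinjh : Function.Injective h := by
    intro q₁ q₂ hq
    by_contra hne
    have hq0 : q₁ - q₂ ≠ 0 := fun hc => hne (sub_eq_zero.mp hc)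
    obtain ⟨r, a, hra, hρa⟩ := claim1 _ hq0
    have : h (r • (q₁ - q₂)) = 0 := by
      rw [map_smul, map_sub, hq, sub_self, smul_zero]
    rw [hra, hh] at this
    exact hρa this
  set Eplus := LinearMap.range h with hEplus
  have hEplusEss : Ess ρ Eplus := by
    constructor
    · rintro y ⟨a, rfl⟩
      exact ⟨ebar (ρE a), hh (ρE a)⟩
    · rintro y ⟨q, rfl⟩ hy0
      have hq0 : q ≠ 0 := by
        intro h0
        rw [h0, map_zero] at hy0
        exact hy0 rfl
      obtain ⟨r, a, hra, hρa⟩ := claim1 q hq0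
      refine ⟨r, a, ?_, ?_⟩
      · rw [← map_smul, hra, hh]
        rfl
      · rw [← map_smul, hra, hh]
        exact hρa
  have hEsub : E ≤ Eplus := by
    intro e he
    exact ⟨ebar ⟨e, he⟩, hh ⟨e, he⟩⟩
  have hEeq : Eplus = E := le_antisymm (hE.le_of_ge hEplusEss hEsub) hEsub
  refine ⟨h (mkq ⟨w, hwN⟩), ?_, ?_⟩
  · rw [← hEeq]
    exact ⟨mkq ⟨w, hwN⟩, rfl⟩
  · intro c e he hcw
    have h1 : c • mkq ⟨w, hwN⟩ = mkq ⟨c • w, Submodule.smul_mem _ _ hwN⟩ := by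
      rw [← map_smul]
      congr 1
    have h2 : (⟨c • w, Submodule.smul_mem _ _ hwN⟩ : ↥N) = ⟨e, hEN he⟩ :=
      Subtype.ext hcw
    have h3 : mkq ⟨e, hEN he⟩ = ebar ⟨e, he⟩ := by
      rw [hebar]
      simp only [LinearMap.comp_apply]
      congr 1
    rw [← map_smul, h1, h2, h3, hh]
    rfl

end Adjoin


section Main

open CategoryTheory

variable {R : Type u} [CommRing R] [IsLocalRing R]

set_option maxHeartbeats 1000000 in
theorem inj_of_zp_fp (hval : ∀ I J : Ideal R, I ≤ J ∨ J ≤ I)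
    (hZ : {r : R | ∃ s : R, s ≠ 0 ∧ r * s = 0} = (IsLocalRing.maximalIdeal R : Set R))
    (hFP : ∀ (M : Type u) [AddCommGroup M] [Module R M],
      SinglyProjective R M → FinitelyProjective R M) :
    Module.Injective R R := by
  classical
  apply Module.Baer.injective
  intro I f
  -- an injective module containing R
  set RMod : ModuleCat.{u} R := ModuleCat.of R R with hRMod
  set J : ModuleCat.{u} R := Injective.under RMod with hJ
  set E₀ : Type u := (J : Type u) with hE₀
  haveI hJinj : CategoryTheory.Injective (ModuleCat.of R E₀) :=
    Injective.injective_under RMod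
  haveI inj0 : Module.Injective R E₀ := Module.injective_module_of_injective_object R E₀
  set ρ : R →ₗ[R] E₀ := (Injective.ι RMod).hom with hρdef
  have hρ : Function.Injective ρ := by
    have hm : Mono (Injective.ι RMod) := Injective.ι_mono RMod
    exact (ModuleCat.mono_iff_injective (Injective.ι RMod)).mp hm
  obtain ⟨E, hE⟩ := exists_maximal_ess ρ
  -- the divided element θ
  obtain ⟨h₂, hh₂⟩ := inj0.out I.subtype (Submodule.injective_subtype I) (ρ ∘ₗ f)
  have hθ₀rel : ∀ (i : R) (hi : i ∈ I), i • h₂ 1 = ρ (f ⟨i, hi⟩) := by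
    intro i hi
    rw [← map_smul, smul_eq_mul, mul_one]
    have := hh₂ ⟨i, hi⟩
    simpa using this
  obtain ⟨θ, hθE, hθprop⟩ := adjoin hρ inj0 hE (h₂ 1)
  have hθrel : ∀ (i : R) (hi : i ∈ I), i • θ = ρ (f ⟨i, hi⟩) := by
    intro i hi
    exact hθprop i _ (hE.prop.1 ⟨f ⟨i, hi⟩, rfl⟩) (hθ₀rel i hi)
  -- ↥E is singly projective
  have hannE : ∀ x : ↥E, ann R x = ann R (x : E₀) := by
    intro x
    ext t
    rw [mem_ann, mem_ann]
    constructor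
    · intro ht
      have := congrArg (Submodule.subtype E) ht
      simpa only [map_smul, map_zero, Submodule.subtype_apply] using this
    · intro ht
      apply Subtype.ext
      simpa only [Submodule.coe_smul, Submodule.coe_zero] using ht
  have hSP : SinglyProjective R ↥E := by
    apply sp_of_witness
    intro x
    obtain ⟨s, hanns⟩ := ann_realized hρ hval hE.prop (x : E₀) x.2
    -- solve s • y₀ = x in E₀
    obtain ⟨g₁, hg₁⟩ := exists_map_span (M := R) s ((x : E₀)) (le_of_eq hanns.symm)
    obtain ⟨h₁, hh₁⟩ := inj0.out (Submodule.span R ({s} : Set R)).subtype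
      (Submodule.injective_subtype _) g₁
    have hy₀ : s • h₁ 1 = (x : E₀) := by
      rw [← map_smul, smul_eq_mul, mul_one]
      have := hh₁ ⟨s, Submodule.mem_span_singleton_self s⟩
      simp only [Submodule.coe_subtype] at this
      rw [this, hg₁]
    obtain ⟨ζ, hζE, hζprop⟩ := adjoin hρ inj0 hE (h₁ 1)
    have hsζ : s • ζ = (x : E₀) := hζprop s _ x.2 hy₀
    refine ⟨s, ⟨ζ, hζE⟩, ?_, ?_⟩
    · apply Subtype.ext
      rw [← hsζ]
      rfl
    · rw [hannE x, hanns]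
  -- apply finite projectivity to span {ρ 1, θ}
  set n₁ : ↥E := ⟨ρ 1, hE.prop.1 ⟨1, rfl⟩⟩ with hn₁
  set nθ : ↥E := ⟨θ, hθE⟩ with hnθ
  set N : Submodule R ↥E := Submodule.span R {n₁, nθ} with hNdef
  have hNfg : N.FG := Submodule.fg_span (Set.toFinite _)
  obtain ⟨ι, ψ, πm, hψ⟩ := hFP (↥E) hSP N hNfg
  have hmem₁ : n₁ ∈ N := Submodule.subset_span (by simp)
  have hmemθ : nθ ∈ N := Submodule.subset_span (by simp)
  set uu := ψ ⟨n₁, hmem₁⟩ with huu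
  set vv := ψ ⟨nθ, hmemθ⟩ with hvv
  have hrel : ∀ (i : R) (hi : i ∈ I), i • vv = f ⟨i, hi⟩ • uu := by
    intro i hi
    rw [huu, hvv, ← map_smul, ← map_smul]
    congr 1
    apply Subtype.ext
    apply Subtype.ext
    show i • θ = f ⟨i, hi⟩ • ρ 1
    rw [hθrel i hi, ← map_smul, smul_eq_mul, mul_one]
  have hπ₁ : πm uu = n₁ := hψ ⟨n₁, hmem₁⟩
  have hu0 : uu ≠ 0 := by
    intro h0
    have : (n₁ : E₀) = 0 := by
      rw [← hπ₁, h0, map_zero]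
      rfl
    rw [hn₁] at this
    exact one_ne_zero (hρ (by simpa using this))
  obtain ⟨l₀, hl₀, hdvd⟩ := exists_dvd_all hval uu.support
    (Finsupp.support_nonempty_iff.mpr hu0) (fun l => uu l)
  have hbot : ann R (uu l₀) = ⊥ := by
    apply eq_bot_iff.mpr
    intro t ht
    rw [mem_ann, smul_eq_mul] at ht
    have htu : t • uu = 0 := by
      ext l
      rw [Finsupp.smul_apply, smul_eq_mul, Finsupp.zero_apply]
      by_cases hl : l ∈ uu.support
      · obtain ⟨e, he⟩ := hdvd l hl
        rw [he, ← mul_assoc, ht, zero_mul]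
      · rw [Finsupp.notMem_support_iff.mp hl, mul_zero]
    have : t • (n₁ : ↥E) = 0 := by
      rw [← hπ₁, ← map_smul, htu, map_zero]
    have : t • (ρ 1) = 0 := by
      have := congrArg (Submodule.subtype E) this
      simpa only [map_smul, map_zero, Submodule.subtype_apply, hn₁] using this
    rw [← map_smul, smul_eq_mul, mul_one] at this
    rw [Ideal.mem_bot]
    exact hρ (by simpa using this)
  have hunit : IsUnit (uu l₀) := by
    by_contra hnu
    have : uu l₀ ∈ IsLocalRing.maximalIdeal R := by
      rw [IsLocalRing.mem_maximalIdeal, mem_nonunits_iff]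
      exact hnu
    have : uu l₀ ∈ {r : R | ∃ s : R, s ≠ 0 ∧ r * s = 0} := by
      rw [hZ]
      exact this
    obtain ⟨sz, hsz0, hsz⟩ := this
    have : sz ∈ ann R (uu l₀) := by
      rw [mem_ann, smul_eq_mul, mul_comm]
      exact hsz
    rw [hbot, Ideal.mem_bot] at this
    exact hsz0 this
  set ω := hunit.unit with hω
  have hωval : (ω : R) = uu l₀ := hunit.unit_spec
  refine ⟨LinearMap.toSpanSingleton R R (vv l₀ * ((ω⁻¹ : Rˣ) : R)), ?_⟩
  intro x hx
  rw [LinearMap.toSpanSingleton_apply, smul_eq_mul]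
  have hcoord : x * vv l₀ = f ⟨x, hx⟩ * uu l₀ := by
    have := congrArg (fun (g : ι →₀ R) => g l₀) (hrel x hx)
    simpa [Finsupp.smul_apply, smul_eq_mul] using this
  calc x * (vv l₀ * ((ω⁻¹ : Rˣ) : R)) = (x * vv l₀) * ((ω⁻¹ : Rˣ) : R) := by ring
  _ = (f ⟨x, hx⟩ * uu l₀) * ((ω⁻¹ : Rˣ) : R) := by rw [hcoord]
  _ = f ⟨x, hx⟩ * ((ω : R) * ((ω⁻¹ : Rˣ) : R)) := by rw [hωval]; ring
  _ = f ⟨x, hx⟩ := by rw [Units.mul_inv, mul_one]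

end Main

end VRAux

/-- for a valuation ring `R` with maximal ideal `P` and set of zero-divisors `Z`
the following are equivalent: (1) `R` is self injective; (2) every singly projective
`R`-module is locally projective; (3) `Z = P` and every singly projective `R`-module is
finitely projective. -/
theorem selfInjective_iff_singlyProjective_locallyProjective (R : Type u) [CommRing R]
    [IsLocalRing R] (hval : ∀ I J : Ideal R, I ≤ J ∨ J ≤ I) :
    (Module.Injective R R ↔
      ∀ (M : Type u) [AddCommGroup M] [Module R M],
        SinglyProjective R M → LocallyProjective R M) ∧
    ((∀ (M : Type u) [AddCommGroup M] [Module R M],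
        SinglyProjective R M → LocallyProjective R M) ↔
      ({r : R | ∃ s : R, s ≠ 0 ∧ r * s = 0} = (IsLocalRing.maximalIdeal R : Set R) ∧
        ∀ (M : Type u) [AddCommGroup M] [Module R M],
          SinglyProjective R M → FinitelyProjective R M)) := by
  constructor
  · constructor
    · intro hinj M _ _ hsp
      exact VRAux.lp_of_inj hval hinj M hsp
    · intro hB
      exact VRAux.inj_of_zp_fp hval (VRAux.zp_of_lp hval hB)
        (fun M _ _ hsp => VRAux.fp_of_lp M (hB M hsp))
  · constructor
    · intro hB
      exact ⟨VRAux.zp_of_lp hval hB, fun M _ _ hsp => VRAux.fp_of_lp M (hB M hsp)⟩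
    · rintro ⟨hZ, hFP⟩
      intro M _ _ hsp
      exact VRAux.lp_of_inj hval (VRAux.inj_of_zp_fp hval hZ hFP) M hsp
end
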